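/- arXiv:0709.4431 — 6 statements merged into one kernel-verified Lean document; each statement's English description precedes it below -/
import Mathlib

section
/- Let x₀ be a nondegenerate T-periodic limit cycle of ẋ = f(x) (meaning the algebraic multiplicity of the characteristic multiplier +1 of the variational system ẏ = f'(x₀(t))y equals 1). Let A_{n-1} be an n×(n-1) matrix such that the n×n matrix (ẋ₀(0), A_{n-1}) is nonsingular, let Ω(t, t₀, ξ) denote the solution of ẋ = f(x) with Ω(t₀, t₀, ξ) = ξ, and define the surface S(v) = Ω(T, 0, x₀(0) + A_{n-1} v) for v ∈ ℝ^{n-1}. Then ẋ₀(0) does not belong to the image of the derivative S'(0) : ℝ^{n-1} → ℝⁿ, i.e. the surface S intersects the cycle transversally at x₀(0). -/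
open Set

section Gron
variable {E : Type*} [NormedAddCommGroup E] [NormedSpace ℝ E]

lemma myGron {g g' : ℝ → E} {δ K ε b : ℝ}
    (hder : ∀ t ∈ Set.Icc 0 b, HasDerivAt g (g' t) t)
    (h0 : ‖g 0‖ ≤ δ)
    (hbd : ∀ t ∈ Set.Ico 0 b, ‖g' t‖ ≤ K * ‖g t‖ + ε) :
    ∀ t ∈ Set.Icc 0 b, ‖g t‖ ≤ gronwallBound δ K ε t := by
  intro t ht
  have := norm_le_gronwallBound_of_norm_deriv_right_le
    (f := g) (f' := g') (a := 0) (b := b) (δ := δ) (K := K) (ε := ε)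
    (fun τ hτ => (hder τ hτ).continuousAt.continuousWithinAt)
    (fun τ hτ => ((hder τ ⟨hτ.1, hτ.2.le⟩).hasDerivWithinAt)) h0 hbd t ht
  simpa using this

lemma myGron0 {g g' : ℝ → E} {K b : ℝ}
    (hder : ∀ t ∈ Set.Icc 0 b, HasDerivAt g (g' t) t)
    (h0 : g 0 = 0)
    (hbd : ∀ t ∈ Set.Ico 0 b, ‖g' t‖ ≤ K * ‖g t‖) :
    ∀ t ∈ Set.Icc 0 b, g t = 0 := by
  intro t ht
  have := myGron (δ := 0) (ε := 0) hder (by simp [h0]) (fun τ hτ => by simpa using hbd τ hτ) t ht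
  rw [gronwallBound_ε0_δ0] at this
  exact norm_eq_zero.mp (le_antisymm this (norm_nonneg _))

end Gron

set_option maxHeartbeats 1000000



/-- Lemma 2.1, transversality: if `x₀` is a nondegenerate `T`-periodic limit
cycle of `ẋ = f(x)` (the characteristic multiplier `+1` of the variational system has
algebraic multiplicity one), `A` an `n×(n-1)` matrix with `(ẋ₀(0), A)` nonsingular and
`S(v) = Ω(T,0,x₀(0) + A v)`, then `ẋ₀(0) ∉ S'(0)(ℝ^{n-1})`. -/
theorem cycle_transversal_to_surface
    (n : ℕ) (f : EuclideanSpace ℝ (Fin n) → EuclideanSpace ℝ (Fin n))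
    (hf : ContDiff ℝ 1 f)
    (T : ℝ) (hT : 0 < T)
    (x₀ : ℝ → EuclideanSpace ℝ (Fin n))
    (hx₀ : ∀ t, HasDerivAt x₀ (f (x₀ t)) t)
    (hper : Function.Periodic x₀ T)
    -- the flow Ω(t, t₀, ξ)
    (Ω : ℝ → ℝ → EuclideanSpace ℝ (Fin n) → EuclideanSpace ℝ (Fin n))
    (hΩ_init : ∀ t₀ ξ, Ω t₀ t₀ ξ = ξ)
    (hΩ_sol : ∀ t t₀ ξ, HasDerivAt (fun s => Ω s t₀ ξ) (f (Ω t t₀ ξ)) t)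
    -- the normalized fundamental matrix of the variational system and nondegeneracy
    (Y : ℝ → (EuclideanSpace ℝ (Fin n) →L[ℝ] EuclideanSpace ℝ (Fin n)))
    (hY0 : Y 0 = ContinuousLinearMap.id ℝ (EuclideanSpace ℝ (Fin n)))
    (hY : ∀ t, HasDerivAt Y ((fderiv ℝ f (x₀ t)).comp (Y t)) t)
    (hnondeg : Module.finrank ℝ
      ↥(⨆ k : ℕ, LinearMap.ker (((Y T : Module.End ℝ (EuclideanSpace ℝ (Fin n))) - 1) ^ k)) = 1)
    -- the matrix A_{n-1} with (ẋ₀(0), A_{n-1}) nonsingular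
    (A : EuclideanSpace ℝ (Fin (n - 1)) →L[ℝ] EuclideanSpace ℝ (Fin n))
    (hA : ∀ (c : ℝ) (v : EuclideanSpace ℝ (Fin (n - 1))),
      c • f (x₀ 0) + A v = 0 → c = 0 ∧ v = 0)
    -- the surface S and its derivative at 0
    (S : EuclideanSpace ℝ (Fin (n - 1)) → EuclideanSpace ℝ (Fin n))
    (hS : ∀ v, S v = Ω T 0 (x₀ 0 + A v))
    (S' : EuclideanSpace ℝ (Fin (n - 1)) →L[ℝ] EuclideanSpace ℝ (Fin n))
    (hS' : HasFDerivAt S S' 0) :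
    f (x₀ 0) ∉ Set.range S' := by
  rintro ⟨w, hw⟩
  -- basic setup
  have hfd : Differentiable ℝ f := hf.differentiable one_ne_zero
  have hcontf' : Continuous (fderiv ℝ f) := hf.continuous_fderiv one_ne_zero
  have hx₀c : Continuous x₀ :=
    continuous_iff_continuousAt.mpr fun t => (hx₀ t).continuousAt
  have hx₀T : x₀ T = x₀ 0 := by simpa using hper 0
  have hK₀ : IsCompact (x₀ '' Icc 0 T) := isCompact_Icc.image hx₀c
  set Kc := Metric.cthickening 1 (x₀ '' Set.Icc 0 T) with hKcdef
  have hKc : IsCompact Kc := hK₀.cthickening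
  have hxt : ∀ t ∈ Icc 0 T, x₀ t ∈ Kc :=
    fun t ht => Metric.self_subset_cthickening _ (mem_image_of_mem x₀ ht)
  obtain ⟨L, hL0, hL⟩ : ∃ L, 0 ≤ L ∧ ∀ x ∈ Kc, ‖fderiv ℝ f x‖ ≤ L := by
    obtain ⟨C, hC⟩ := hKc.exists_bound_of_continuousOn hcontf'.continuousOn
    exact ⟨max C 0, le_max_right _ _, fun x hx => (hC x hx).trans (le_max_left _ _)⟩
  -- Step A : Y T fixes f (x₀ 0)
  have hYapp : ∀ (u : EuclideanSpace ℝ (Fin n)) (t : ℝ),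
      HasDerivAt (fun t => Y t u) (fderiv ℝ f (x₀ t) (Y t u)) t := by
    intro u t
    simpa using (hY t).clm_apply (hasDerivAt_const t u)
  have hfx : ∀ t : ℝ, HasDerivAt (fun t => f (x₀ t)) (fderiv ℝ f (x₀ t) (f (x₀ t))) t :=
    fun t => (hfd (x₀ t)).hasFDerivAt.comp_hasDerivAt t (hx₀ t)
  have hfix : Y T (f (x₀ 0)) = f (x₀ 0) := by
    set p := f (x₀ 0) with hp
    set g : ℝ → EuclideanSpace ℝ (Fin n) := fun t => Y t p - f (x₀ t) with hg
    have hgder : ∀ t ∈ Icc (0:ℝ) T, HasDerivAt g (fderiv ℝ f (x₀ t) (g t)) t := by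
      intro t _
      have := (hYapp p t).sub (hfx t)
      exact this.congr_deriv (by simp [hg, map_sub])
    have hg0 : g 0 = 0 := by simp [hg, hY0, hp]
    have hbd : ∀ t ∈ Ico (0:ℝ) T, ‖fderiv ℝ f (x₀ t) (g t)‖ ≤ L * ‖g t‖ := by
      intro t ht
      exact ((fderiv ℝ f (x₀ t)).le_opNorm (g t)).trans
        (by gcongr; exact hL _ (hxt t ⟨ht.1, ht.2.le⟩))
    have := myGron0 hgder hg0 hbd T ⟨hT.le, le_rfl⟩
    have : Y T p - f (x₀ T) = 0 := this
    rw [hx₀T] at this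
    exact sub_eq_zero.mp this
  -- Step B : Y T is injective
  have hinj : ∀ u, Y T u = 0 → u = 0 := by
    intro u hu
    set e : ℝ → EuclideanSpace ℝ (Fin n) := fun τ => Y (T - τ) u with he
    have heder : ∀ τ ∈ Icc (0:ℝ) T,
        HasDerivAt e (-(fderiv ℝ f (x₀ (T - τ)) (e τ))) τ := by
      intro τ _
      have houter := hYapp u (T - τ)
      have hinner : HasDerivAt (fun τ : ℝ => T - τ) (-1) τ := by
        exact (hasDerivAt_id' τ).const_sub T
      have := houter.scomp τ hinner
      exact this.congr_deriv (by simp [he])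
    have he0 : e 0 = 0 := by simp [he, hu]
    have hbd : ∀ τ ∈ Ico (0:ℝ) T, ‖-(fderiv ℝ f (x₀ (T - τ)) (e τ))‖ ≤ L * ‖e τ‖ := by
      intro τ hτ
      rw [norm_neg]
      exact ((fderiv ℝ f (x₀ (T - τ))).le_opNorm (e τ)).trans
        (by gcongr; exact hL _ (hxt (T - τ) ⟨by linarith [hτ.2], by linarith [hτ.1]⟩))
    have := myGron0 heder he0 hbd T ⟨hT.le, le_rfl⟩
    have : Y 0 u = 0 := by simpa [he] using this
    simpa [hY0] using this
  -- Step C : S' w = Y T (A w)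
  -- uniform quadratic estimate near the orbit
  have hquad : ∀ ε > (0:ℝ), ∃ δ > (0:ℝ), δ ≤ 1 ∧ ∀ t ∈ Icc (0:ℝ) T,
      ∀ x : EuclideanSpace ℝ (Fin n), ‖x - x₀ t‖ ≤ δ →
      ‖f x - f (x₀ t) - fderiv ℝ f (x₀ t) (x - x₀ t)‖ ≤ ε * ‖x - x₀ t‖ := by
    intro ε hε
    have hUC := hKc.uniformContinuousOn_of_continuous hcontf'.continuousOn
    rw [Metric.uniformContinuousOn_iff_le] at hUC
    obtain ⟨δ₀, hδ₀, hδ⟩ := hUC ε hε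
    refine ⟨min δ₀ 1, lt_min hδ₀ one_pos, min_le_right _ _, ?_⟩
    intro t ht x hx
    set sb : Set (EuclideanSpace ℝ (Fin n)) := Metric.closedBall (x₀ t) (min δ₀ 1) with hsb
    have hsub : sb ⊆ Kc := by
      intro y hy
      exact Metric.mem_cthickening_of_dist_le y (x₀ t) 1 _ (mem_image_of_mem x₀ ht)
        ((Metric.mem_closedBall.mp hy).trans (min_le_right _ _))
    have hmem : ∀ y ∈ sb, ‖fderiv ℝ f y - fderiv ℝ f (x₀ t)‖ ≤ ε := by
      intro y hy
      have := hδ y (hsub hy) (x₀ t) (hxt t ht)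
        ((Metric.mem_closedBall.mp hy).trans (min_le_left _ _))
      rwa [dist_eq_norm] at this
    have hder : ∀ y ∈ sb, HasFDerivWithinAt (fun y => f y - fderiv ℝ f (x₀ t) y)
        (fderiv ℝ f y - fderiv ℝ f (x₀ t)) sb y := fun y _ =>
      ((hfd y).hasFDerivAt.sub (fderiv ℝ f (x₀ t)).hasFDerivAt).hasFDerivWithinAt
    have hxs : x ∈ sb := by rw [hsb, Metric.mem_closedBall, dist_eq_norm]; exact hx
    have hcs : x₀ t ∈ sb := Metric.mem_closedBall_self (lt_min hδ₀ one_pos).le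
    have hmv := (convex_closedBall _ _).norm_image_sub_le_of_norm_hasFDerivWithin_le
      hder hmem hcs hxs
    have heq : f x - fderiv ℝ f (x₀ t) x - (f (x₀ t) - fderiv ℝ f (x₀ t) (x₀ t)) =
        f x - f (x₀ t) - fderiv ℝ f (x₀ t) (x - x₀ t) := by
      rw [map_sub]; abel
    rwa [heq] at hmv
  -- bound on Y t (A w)
  have hYAwc : Continuous fun t => Y t (A w) :=
    continuous_iff_continuousAt.mpr fun t => (hYapp (A w) t).continuousAt
  obtain ⟨MY, hMY0, hMY⟩ : ∃ MY, 0 ≤ MY ∧ ∀ t ∈ Icc (0:ℝ) T, ‖Y t (A w)‖ ≤ MY := by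
    obtain ⟨C, hC⟩ := isCompact_Icc.exists_bound_of_continuousOn hYAwc.continuousOn
    exact ⟨max C 0, le_max_right _ _, fun t ht => (hC t ht).trans (le_max_left _ _)⟩
  set C₁ : ℝ := MY / (L + 1) * (Real.exp ((L + 1) * T) - 1) with hC₁
  have hL1 : (0:ℝ) < L + 1 := by linarith
  have hexp1 : (1:ℝ) ≤ Real.exp ((L + 1) * T) := Real.one_le_exp (by positivity)
  have hC₁0 : 0 ≤ C₁ := mul_nonneg (div_nonneg hMY0 hL1.le) (by linarith)
  have hgb : ∀ ε η t : ℝ, 0 ≤ ε → 0 ≤ η → 0 ≤ t → t ≤ T →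
      gronwallBound 0 (L + 1) (ε * MY * η) t ≤ ε * C₁ * η := by
    intro ε η t hε hη ht htT
    rw [gronwallBound_of_K_ne_0 hL1.ne']
    simp only [zero_mul, zero_add]
    have h1 : Real.exp ((L + 1) * t) ≤ Real.exp ((L + 1) * T) :=
      Real.exp_le_exp.mpr (mul_le_mul_of_nonneg_left htT hL1.le)
    have h2 : (1:ℝ) ≤ Real.exp ((L + 1) * t) := Real.one_le_exp (by positivity)
    calc ε * MY * η / (L + 1) * (Real.exp ((L + 1) * t) - 1)
        ≤ ε * MY * η / (L + 1) * (Real.exp ((L + 1) * T) - 1) := by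
          gcongr
      _ = ε * C₁ * η := by rw [hC₁]; ring
  -- the main estimate
  have hEst : ∀ ε : ℝ, 0 < ε → ε ≤ 1 → ∃ s₀ > (0:ℝ), ∀ s : ℝ, |s| ≤ s₀ →
      ‖Ω T 0 (x₀ 0 + s • A w) - x₀ T - s • Y T (A w)‖ ≤ ε * C₁ * |s| := by
    intro ε hε hε1
    obtain ⟨δ, hδpos, hδ1, hq⟩ := hquad ε hε
    refine ⟨δ / (2 * (C₁ + MY + 1)), by positivity, ?_⟩
    intro s hs
    set ξ := x₀ 0 + s • A w with hξ
    set γ : ℝ → EuclideanSpace ℝ (Fin n) := fun t => Ω t 0 ξ with hγ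
    set z : ℝ → EuclideanSpace ℝ (Fin n) := fun t => γ t - x₀ t - s • Y t (A w) with hz
    have hγc : Continuous γ :=
      continuous_iff_continuousAt.mpr fun t => (hΩ_sol t 0 ξ).continuousAt
    have hz0 : z 0 = 0 := by simp [hz, hγ, hΩ_init, hY0, hξ]
    have hzder : ∀ t : ℝ, HasDerivAt z
        (f (γ t) - f (x₀ t) - s • fderiv ℝ f (x₀ t) (Y t (A w))) t := fun t =>
      ((hΩ_sol t 0 ξ).sub (hx₀ t)).sub ((hYapp (A w) t).const_smul s)
    have hγx : ∀ t, γ t - x₀ t = z t + s • Y t (A w) := by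
      intro t; simp only [hz]; abel
    have hbound : ∀ b ∈ Icc (0:ℝ) T, (∀ τ ∈ Ico (0:ℝ) b, ‖γ τ - x₀ τ‖ ≤ δ) →
        ∀ τ ∈ Icc (0:ℝ) b, ‖z τ‖ ≤ gronwallBound 0 (L + 1) (ε * MY * |s|) τ := by
      intro b hb htube
      apply myGron (fun τ _ => hzder τ) (by simp [hz0])
      intro τ hτ
      have hτT : τ ∈ Icc (0:ℝ) T := ⟨hτ.1, hτ.2.le.trans hb.2⟩
      have hγδ : ‖γ τ - x₀ τ‖ ≤ δ := htube τ hτ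
      have heq : f (γ τ) - f (x₀ τ) - s • fderiv ℝ f (x₀ τ) (Y τ (A w)) =
          (f (γ τ) - f (x₀ τ) - fderiv ℝ f (x₀ τ) (γ τ - x₀ τ)) +
            fderiv ℝ f (x₀ τ) (z τ) := by
        rw [hγx τ, map_add, map_smul]; abel
      rw [heq]
      have h1 := hq τ hτT (γ τ) hγδ
      have h2 : ‖fderiv ℝ f (x₀ τ) (z τ)‖ ≤ L * ‖z τ‖ :=
        ((fderiv ℝ f (x₀ τ)).le_opNorm _).trans (by gcongr; exact hL _ (hxt τ hτT))
      have h3 : ‖γ τ - x₀ τ‖ ≤ ‖z τ‖ + |s| * MY := by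
        rw [hγx τ]
        refine (norm_add_le _ _).trans ?_
        rw [norm_smul, Real.norm_eq_abs]
        gcongr
        exact hMY τ hτT
      refine (norm_add_le _ _).trans ?_
      have h4 : ε * ‖γ τ - x₀ τ‖ ≤ ε * (‖z τ‖ + |s| * MY) :=
        mul_le_mul_of_nonneg_left h3 hε.le
      nlinarith [mul_nonneg (sub_nonneg.mpr hε1) (norm_nonneg (z τ)), abs_nonneg s,
        mul_nonneg (mul_nonneg (sub_nonneg.mpr hε1) (abs_nonneg s)) hMY0]
    have hsmall : δ / (2 * (C₁ + MY + 1)) * (ε * C₁ + MY) < δ := by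
      rw [div_mul_eq_mul_div, div_lt_iff₀ (by positivity)]
      nlinarith [mul_nonneg (sub_nonneg.mpr hε1) hC₁0]
    have htube : ∀ t ∈ Icc (0:ℝ) T, ‖γ t - x₀ t‖ ≤ δ := by
      by_contra hcon
      push_neg at hcon
      obtain ⟨t', ht', hgt⟩ := hcon
      set B : Set ℝ := {t | t ∈ Icc (0:ℝ) T ∧ δ < ‖γ t - x₀ t‖} with hB
      have hne : B.Nonempty := ⟨t', ht', hgt⟩
      have hbdd : BddBelow B := ⟨0, fun t ht => ht.1.1⟩
      set t₂ := sInf B with ht₂def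
      have hlb : ∀ t ∈ B, t₂ ≤ t := fun t ht => csInf_le hbdd ht
      have ht₂0 : 0 ≤ t₂ := le_csInf hne fun t ht => ht.1.1
      have ht₂T : t₂ ≤ T := (hlb t' ⟨ht', hgt⟩).trans ht'.2
      have hφc : Continuous fun t => ‖γ t - x₀ t‖ := (hγc.sub hx₀c).norm
      have hδt₂ : δ ≤ ‖γ t₂ - x₀ t₂‖ := by
        by_contra h
        push_neg at h
        have hev : ∀ᶠ u in nhds t₂, ‖γ u - x₀ u‖ < δ :=
          Filter.Tendsto.eventually_lt_const h hφc.continuousAt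
        obtain ⟨η, hη, hball⟩ := Metric.eventually_nhds_iff.mp hev
        have : t₂ + η / 2 ≤ t₂ := by
          rw [ht₂def]
          refine le_csInf hne fun t ht => ?_
          by_contra hlt
          push_neg at hlt
          have hd : dist t t₂ < η := by
            rw [Real.dist_eq, abs_lt]
            constructor <;> [linarith [hlb t ht]; linarith]
          exact absurd (hball hd) (not_lt.mpr ht.2.le)
        linarith
      have hpre : ∀ τ ∈ Ico (0:ℝ) t₂, ‖γ τ - x₀ τ‖ ≤ δ := by
        intro τ hτ
        by_contra h
        push_neg at h
        have : τ ∈ B := ⟨⟨hτ.1, hτ.2.le.trans ht₂T⟩, h⟩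
        linarith [hlb τ this, hτ.2]
      have hzb : ‖z t₂‖ ≤ ε * C₁ * |s| :=
        (hbound t₂ ⟨ht₂0, ht₂T⟩ hpre t₂ ⟨ht₂0, le_rfl⟩).trans
          (hgb ε |s| t₂ hε.le (abs_nonneg s) ht₂0 ht₂T)
      have hγb : ‖γ t₂ - x₀ t₂‖ ≤ |s| * (ε * C₁ + MY) := by
        rw [hγx t₂]
        refine (norm_add_le _ _).trans ?_
        rw [norm_smul, Real.norm_eq_abs]
        have := hMY t₂ ⟨ht₂0, ht₂T⟩
        nlinarith [abs_nonneg s, hzb]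
      have hss : |s| * (ε * C₁ + MY) ≤ δ / (2 * (C₁ + MY + 1)) * (ε * C₁ + MY) := by
        gcongr
      linarith
    have hfin := hbound T ⟨hT.le, le_rfl⟩ (fun τ hτ => htube τ ⟨hτ.1, hτ.2.le⟩) T ⟨hT.le, le_rfl⟩
    have := hfin.trans (hgb ε |s| T hε.le (abs_nonneg s) hT.le le_rfl)
    simpa only [hz, hγ, hξ] using this
  obtain ⟨s₁, hs₁, hE1⟩ := hEst 1 one_pos le_rfl
  have hΩ0 : Ω T 0 (x₀ 0) = x₀ T := by
    have h := hE1 0 (by simp [hs₁.le])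
    simp only [zero_smul, add_zero, sub_zero, abs_zero, mul_zero] at h
    exact sub_eq_zero.mp (norm_le_zero_iff.mp h)
  have hkey : HasDerivAt (fun s : ℝ => S (s • w)) (Y T (A w)) 0 := by
    rw [hasDerivAt_iff_isLittleO, Asymptotics.isLittleO_iff]
    intro c hc
    have hεpos : (0:ℝ) < min 1 (c / (C₁ + 1)) := lt_min one_pos (by positivity)
    obtain ⟨s₀, hs₀, hE⟩ := hEst _ hεpos (min_le_left _ _)
    filter_upwards [Metric.ball_mem_nhds (0:ℝ) hs₀] with s hsb
    have hsabs : |s| ≤ s₀ := by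
      rw [Metric.mem_ball, Real.dist_eq, sub_zero] at hsb; exact hsb.le
    have hb := hE s hsabs
    have hrw : S (s • w) - S ((0:ℝ) • w) - (s - 0) • Y T (A w) =
        Ω T 0 (x₀ 0 + s • A w) - x₀ T - s • Y T (A w) := by
      rw [zero_smul, hS, hS, map_smul, map_zero, add_zero, hΩ0, sub_zero]
    calc ‖S (s • w) - S ((0:ℝ) • w) - (s - 0) • Y T (A w)‖
        = ‖Ω T 0 (x₀ 0 + s • A w) - x₀ T - s • Y T (A w)‖ := by rw [hrw]
      _ ≤ min 1 (c / (C₁ + 1)) * C₁ * |s| := hb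
      _ ≤ c / (C₁ + 1) * C₁ * |s| := by
          exact mul_le_mul_of_nonneg_right
            (mul_le_mul_of_nonneg_right (min_le_right _ _) hC₁0) (abs_nonneg s)
      _ ≤ c * |s| := by
          have h1 : c / (C₁ + 1) * C₁ ≤ c := by
            rw [div_mul_eq_mul_div, div_le_iff₀ (by positivity)]
            nlinarith
          exact mul_le_mul_of_nonneg_right h1 (abs_nonneg s)
      _ = c * ‖s - 0‖ := by rw [sub_zero, Real.norm_eq_abs]
  have hSw : HasDerivAt (fun s : ℝ => S (s • w)) (S' w) 0 := by
    have h1 : HasDerivAt (fun s : ℝ => s • w) w 0 := by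
      simpa using (hasDerivAt_id (0 : ℝ)).smul_const w
    have h2 : HasFDerivAt S S' ((0 : ℝ) • w) := by rwa [zero_smul]
    exact h2.comp_hasDerivAt 0 h1
  have hYTAw : Y T (A w) = f (x₀ 0) := hkey.unique hSw ▸ hw
  -- conclusion
  have h0 : Y T (f (x₀ 0) - A w) = 0 := by
    rw [map_sub, hfix, hYTAw, sub_self]
  have heq : f (x₀ 0) - A w = 0 := hinj _ h0
  have := hA 1 (-w) (by rw [one_smul, map_neg]; rw [sub_eq_add_neg] at heq; exact heq)
  exact one_ne_zero this.1
end

section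
/- (Theorem on the first-order asymptotics, Theorem 3.1.) Let x₀ be a nondegenerate T-periodic limit cycle of ẋ = f(x), let x_ε be T-periodic solutions of ẋ = f(x) + ε g(t,x,ε) with Δ_ε → 0 and ‖x_ε(t+Δ_ε) − x₀(t)‖ ≤ M ε for all t ∈ [0,T] and ε ∈ (0, ε₀]. Let z be a not-T-periodic Floquet eigenfunction of the adjoint system ż = −(f'(x₀(t)))* z with multiplier ρ ≠ 1. Then (1/ε) ⟨z(t), x_ε(t+Δ_ε) − x₀(t)⟩ → M⊥_z(t) := (ρ/(ρ−1)) ∫_{t−T}^{t} ⟨z(s), g(s, x₀(s), 0)⟩ ds as ε → 0, uniformly in t ∈ [0,T]. -/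
open intervalIntegral

set_option maxHeartbeats 2000000 in
/-- Theorem 3.1, first-order asymptotics: under the stated hypotheses,
`(1/ε) ⟨z(t), x_ε(t+Δ_ε) − x₀(t)⟩ → M⊥_z(t) = (ρ/(ρ−1)) ∫_{t−T}^t ⟨z(s), g(s,x₀(s),0)⟩ ds`
as `ε → 0⁺`, uniformly in `t ∈ [0,T]`. -/
theorem first_order_asymptotics
    (n : ℕ) (f : EuclideanSpace ℝ (Fin n) → EuclideanSpace ℝ (Fin n))
    (g : ℝ → EuclideanSpace ℝ (Fin n) → ℝ → EuclideanSpace ℝ (Fin n))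
    (hf : ContDiff ℝ 1 f)
    (hg : Continuous fun p : ℝ × EuclideanSpace ℝ (Fin n) × ℝ => g p.1 p.2.1 p.2.2)
    (T : ℝ) (hT : 0 < T)
    (hgper : ∀ t x ε, g (t + T) x ε = g t x ε)
    -- x₀ is a nondegenerate T-periodic limit cycle of ẋ = f(x)
    (x₀ : ℝ → EuclideanSpace ℝ (Fin n))
    (hx₀ : ∀ t, HasDerivAt x₀ (f (x₀ t)) t)
    (hx₀per : Function.Periodic x₀ T)
    (Y : ℝ → (EuclideanSpace ℝ (Fin n) →L[ℝ] EuclideanSpace ℝ (Fin n)))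
    (hY0 : Y 0 = ContinuousLinearMap.id ℝ _)
    (hY : ∀ t, HasDerivAt Y ((fderiv ℝ f (x₀ t)).comp (Y t)) t)
    (hnondeg : Module.finrank ℝ
      ↥(⨆ k : ℕ, LinearMap.ker
        (((Y T : Module.End ℝ (EuclideanSpace ℝ (Fin n))) - 1) ^ k)) = 1)
    -- x_ε are T-periodic solutions of the perturbed system with ‖x_ε(·+Δ_ε) − x₀‖ ≤ Mε
    (x : ℝ → ℝ → EuclideanSpace ℝ (Fin n)) (Δ : ℝ → ℝ)
    (M ε₀ : ℝ) (hM : 0 < M) (hε₀ : 0 < ε₀)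
    (hx : ∀ ε ∈ Set.Ioc 0 ε₀, ∀ t,
      HasDerivAt (x ε) (f (x ε t) + ε • g t (x ε t) ε) t)
    (hxper : ∀ ε ∈ Set.Ioc 0 ε₀, Function.Periodic (x ε) T)
    (hΔ : Filter.Tendsto Δ (nhdsWithin 0 (Set.Ioi 0)) (nhds 0))
    (hbound : ∀ ε ∈ Set.Ioc 0 ε₀, ∀ t ∈ Set.Icc (0:ℝ) T,
      ‖x ε (t + Δ ε) - x₀ t‖ ≤ M * ε)
    -- z is a not T-periodic Floquet eigenfunction of the adjoint system, multiplier ρ ≠ 1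
    (z : ℝ → EuclideanSpace ℝ (Fin n)) (ρ : ℝ)
    (hz : ∀ t, HasDerivAt z (-(ContinuousLinearMap.adjoint (fderiv ℝ f (x₀ t))) (z t)) t)
    (hzF : ∀ t, z (t + T) = ρ • z t)
    (hρ : ρ ≠ 1) (hz0 : z ≠ 0) :
    TendstoUniformlyOn
      (fun ε t => (1 / ε) * (inner ℝ (z t) (x ε (t + Δ ε) - x₀ t) : ℝ))
      (fun t => (ρ / (ρ - 1)) * ∫ s in (t - T)..t, (inner ℝ (z s) (g s (x₀ s) 0) : ℝ))
      (nhdsWithin 0 (Set.Ioi 0)) (Set.Icc 0 T) := by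
  have hρ1 : ρ - 1 ≠ 0 := sub_ne_zero.mpr hρ
  -- basic continuity
  have hx₀c : Continuous x₀ := by
    rw [continuous_iff_continuousAt]; exact fun t => (hx₀ t).continuousAt
  have hzc : Continuous z := by
    rw [continuous_iff_continuousAt]; exact fun t => (hz t).continuousAt
  have hAc : Continuous (fun t => fderiv ℝ f (x₀ t)) :=
    (hf.continuous_fderiv one_ne_zero).comp hx₀c
  have hxc : ∀ ε ∈ Set.Ioc (0:ℝ) ε₀, Continuous (x ε) := by
    intro ε hε
    rw [continuous_iff_continuousAt]; exact fun t => (hx ε hε t).differentiableAt.continuousAt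
  -- u and its properties
  set u : ℝ → ℝ → EuclideanSpace ℝ (Fin n) := fun ε t => x ε (t + Δ ε) - x₀ t with hu_def
  have huc : ∀ ε ∈ Set.Ioc (0:ℝ) ε₀, Continuous (u ε) := by
    intro ε hε
    exact ((hxc ε hε).comp (continuous_id.add continuous_const)).sub hx₀c
  have huper : ∀ ε ∈ Set.Ioc (0:ℝ) ε₀, Function.Periodic (u ε) T := by
    intro ε hε t
    simp only [hu_def]
    rw [show t + T + Δ ε = t + Δ ε + T by ring, hxper ε hε (t + Δ ε), hx₀per t]
  have hubound : ∀ ε ∈ Set.Ioc (0:ℝ) ε₀, ∀ t, ‖u ε t‖ ≤ M * ε := by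
    intro ε hε t
    obtain ⟨y, hy, hval⟩ := (huper ε hε).exists_mem_Ico₀ hT t
    rw [hval]
    exact hbound ε hε y ⟨hy.1, hy.2.le⟩
  -- the derivative of φ ε t = ⟪z t, u ε t⟫
  set ψ : ℝ → ℝ → ℝ := fun ε t =>
    (inner ℝ (z t) (f (x ε (t + Δ ε)) - f (x₀ t) - (fderiv ℝ f (x₀ t)) (u ε t)) : ℝ)
      + ε * (inner ℝ (z t) (g (t + Δ ε) (x ε (t + Δ ε)) ε) : ℝ) with hψ_def
  have hψc : ∀ ε ∈ Set.Ioc (0:ℝ) ε₀, Continuous (ψ ε) := by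
    intro ε hε
    have hwc : Continuous (fun t => x ε (t + Δ ε)) :=
      (hxc ε hε).comp (continuous_id.add continuous_const)
    have h1 : Continuous (fun t =>
        f (x ε (t + Δ ε)) - f (x₀ t) - (fderiv ℝ f (x₀ t)) (u ε t)) :=
      ((hf.continuous.comp hwc).sub (hf.continuous.comp hx₀c)).sub
        (hAc.clm_apply (huc ε hε))
    have h2 : Continuous (fun t => g (t + Δ ε) (x ε (t + Δ ε)) ε) :=
      hg.comp (((continuous_id.add continuous_const)).prodMk
        (hwc.prodMk continuous_const))
    exact (hzc.inner h1).add (continuous_const.mul (hzc.inner h2))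
  have hderiv : ∀ ε ∈ Set.Ioc (0:ℝ) ε₀, ∀ t,
      HasDerivAt (fun t => (inner ℝ (z t) (u ε t) : ℝ)) (ψ ε t) t := by
    intro ε hε t
    have hw : HasDerivAt (fun t => x ε (t + Δ ε))
        (f (x ε (t + Δ ε)) + ε • g (t + Δ ε) (x ε (t + Δ ε)) ε) t := by
      have h1 := hx ε hε (t + Δ ε)
      have h2 : HasDerivAt (fun t : ℝ => t + Δ ε) 1 t := (hasDerivAt_id t).add_const _
      have h3 := h1.scomp t h2
      rw [one_smul] at h3
      exact h3
    have hu' : HasDerivAt (u ε)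
        (f (x ε (t + Δ ε)) + ε • g (t + Δ ε) (x ε (t + Δ ε)) ε - f (x₀ t)) t :=
      hw.sub (hx₀ t)
    have := HasDerivAt.inner ℝ (hz t) hu'
    refine this.congr_deriv ?_
    simp only [hψ_def, inner_sub_right, inner_add_right, real_inner_smul_right,
      inner_neg_left, ContinuousLinearMap.adjoint_inner_left]
    ring
  have hFTC : ∀ ε ∈ Set.Ioc (0:ℝ) ε₀, ∀ t,
      (∫ s in t..(t + T), ψ ε s) = (ρ - 1) * (inner ℝ (z t) (u ε t) : ℝ) := by
    intro ε hε t
    have := intervalIntegral.integral_eq_sub_of_hasDerivAt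
      (f := fun t => (inner ℝ (z t) (u ε t) : ℝ)) (f' := ψ ε)
      (a := t) (b := t + T) (fun s _ => hderiv ε hε s)
      ((hψc ε hε).intervalIntegrable t (t + T))
    rw [this]
    show (inner ℝ (z (t + T)) (u ε (t + T)) : ℝ) - inner ℝ (z t) (u ε t) = _
    rw [huper ε hε t, hzF t, real_inner_smul_left]
    ring
  -- the limit function
  set q : ℝ → ℝ := fun s => (inner ℝ (z s) (g s (x₀ s) 0) : ℝ) with hq_def
  have hqc : Continuous q := by
    exact hzc.inner (hg.comp (continuous_id.prodMk (hx₀c.prodMk continuous_const)))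
  have hqid : ∀ t, (ρ / (ρ - 1)) * (∫ s in (t - T)..t, q s)
      = (ρ - 1)⁻¹ * ∫ s in t..(t + T), q s := by
    intro t
    have h1 : (∫ s in (t - T)..t, q (s + T)) = ∫ s in t..(t + T), q s := by
      rw [intervalIntegral.integral_comp_add_right q T]
      norm_num
    have h2 : ∀ s, q (s + T) = ρ * q s := by
      intro s
      simp only [hq_def, hzF s, hx₀per s, hgper, real_inner_smul_left]
    rw [← h1]
    simp_rw [h2]
    rw [intervalIntegral.integral_const_mul]
    field_simp
  -- core uniform estimate
  have key : ∀ δ > (0:ℝ), ∀ᶠ ε in nhdsWithin 0 (Set.Ioi 0), ε ∈ Set.Ioc (0:ℝ) ε₀ ∧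
      ∀ s ∈ Set.Icc (0:ℝ) (2 * T), |(1 / ε) * ψ ε s - q s| ≤ δ := by
    intro δ hδ
    -- compact sets
    set C := x₀ '' Set.Icc 0 T with hC
    have hCcomp : IsCompact C := isCompact_Icc.image hx₀c
    set K := Metric.cthickening (M * ε₀) C with hK
    have hKcomp : IsCompact K := hCcomp.cthickening
    have hx₀C : ∀ s : ℝ, x₀ s ∈ C := by
      intro s
      obtain ⟨y, hy, hval⟩ := hx₀per.exists_mem_Ico₀ hT s
      exact hval ▸ Set.mem_image_of_mem x₀ ⟨hy.1, hy.2.le⟩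
    have hx₀K : ∀ s, x₀ s ∈ K := fun s =>
      Metric.self_subset_cthickening _ (hx₀C s)
    have hball : ∀ (s : ℝ) (v : EuclideanSpace ℝ (Fin n)),
        ‖v‖ ≤ M * ε₀ → x₀ s + v ∈ K := by
      intro s v hv
      exact Metric.mem_cthickening_of_dist_le _ _ _ _ (hx₀C s)
        (by simpa [dist_eq_norm] using hv)
    -- bound on z
    obtain ⟨Z₀, hZ₀⟩ := (isCompact_Icc (a := (0:ℝ)) (b := 2 * T)).exists_bound_of_continuousOn
      hzc.continuousOn
    set Z := max Z₀ 1 with hZdef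
    have hZpos : (0:ℝ) < Z := lt_of_lt_of_le one_pos (le_max_right _ _)
    have hZ : ∀ s ∈ Set.Icc (0:ℝ) (2 * T), ‖z s‖ ≤ Z :=
      fun s hs => (hZ₀ s hs).trans (le_max_left _ _)
    -- uniform continuity of fderiv f on K
    have hDfu : UniformContinuousOn (fderiv ℝ f) K :=
      hKcomp.uniformContinuousOn_of_continuous (hf.continuous_fderiv one_ne_zero).continuousOn
    set δ₁ := δ / (2 * Z * M) with hδ₁def
    have hδ₁ : (0:ℝ) < δ₁ := by positivity
    obtain ⟨η₁, hη₁, hDf⟩ := (Metric.uniformContinuousOn_iff.mp hDfu) δ₁ hδ₁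
    -- uniform continuity of g on a compact product
    set K' := Set.Icc (-1:ℝ) (2 * T + 1) ×ˢ (K ×ˢ Set.Icc (0:ℝ) ε₀) with hK'
    have hK'comp : IsCompact K' := isCompact_Icc.prod (hKcomp.prod isCompact_Icc)
    have hgu := hK'comp.uniformContinuousOn_of_continuous hg.continuousOn
    set δ₂ := δ / (2 * Z) with hδ₂def
    have hδ₂ : (0:ℝ) < δ₂ := by positivity
    obtain ⟨η₂, hη₂, hgc⟩ := Metric.uniformContinuousOn_iff.mp hgu δ₂ hδ₂
    -- the eventual smallness conditions
    have hev : ∀ᶠ ε in nhdsWithin 0 (Set.Ioi 0), ε ∈ Set.Ioc (0:ℝ) ε₀ ∧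
        M * ε < min η₁ η₂ ∧ ε < η₂ ∧ |Δ ε| < min η₂ 1 := by
      have h1 : Set.Ioc (0:ℝ) ε₀ ∈ nhdsWithin 0 (Set.Ioi 0) :=
        Ioc_mem_nhdsGT_of_mem ⟨le_rfl, hε₀⟩
      have h2 : Set.Ioc (0:ℝ) (min η₁ η₂ / (2 * M)) ∈ nhdsWithin 0 (Set.Ioi 0) :=
        Ioc_mem_nhdsGT_of_mem ⟨le_rfl, by positivity⟩
      have h3 : Set.Ioc (0:ℝ) (η₂ / 2) ∈ nhdsWithin 0 (Set.Ioi 0) :=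
        Ioc_mem_nhdsGT_of_mem ⟨le_rfl, by positivity⟩
      have h4 : ∀ᶠ ε in nhdsWithin 0 (Set.Ioi 0), |Δ ε| < min η₂ 1 := by
        have := hΔ (Metric.ball_mem_nhds (0:ℝ) (by positivity : (0:ℝ) < min η₂ 1))
        filter_upwards [this] with ε hε
        simpa [Real.dist_eq] using hε
      filter_upwards [h1, h2, h3, h4] with ε hε1 hε2 hε3 hε4
      refine ⟨hε1, ?_, ?_, hε4⟩
      · have : M * ε ≤ M * (min η₁ η₂ / (2 * M)) :=
          mul_le_mul_of_nonneg_left hε2.2 hM.le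
        have h5 : M * (min η₁ η₂ / (2 * M)) = min η₁ η₂ / 2 := by
          field_simp
        have h6 : min η₁ η₂ / 2 < min η₁ η₂ := by
          have : (0:ℝ) < min η₁ η₂ := lt_min hη₁ hη₂
          linarith
        linarith
      · have : (0:ℝ) < η₂ := hη₂
        linarith [hε3.2]
    filter_upwards [hev] with ε ⟨hε, hMε, hεη, hΔε⟩
    refine ⟨hε, fun s hs => ?_⟩
    have hεpos : (0:ℝ) < ε := hε.1
    have hunorm : ‖u ε s‖ ≤ M * ε := hubound ε hε s
    have huε₀ : ‖u ε s‖ ≤ M * ε₀ :=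
      hunorm.trans (mul_le_mul_of_nonneg_left hε.2 hM.le)
    have hxeq : x ε (s + Δ ε) = x₀ s + u ε s := by
      simp [hu_def]
    -- bound on the Taylor remainder r
    have hrb : ‖f (x₀ s + u ε s) - f (x₀ s) - (fderiv ℝ f (x₀ s)) (u ε s)‖
        ≤ δ₁ * ‖u ε s‖ := by
      have hMε1 : M * ε < η₁ := lt_of_lt_of_le hMε (min_le_left _ _)
      have hconv : Convex ℝ (Metric.closedBall (x₀ s) (M * ε)) := convex_closedBall _ _
      have hdiff : ∀ y ∈ Metric.closedBall (x₀ s) (M * ε),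
          DifferentiableAt ℝ (fun y => f y - (fderiv ℝ f (x₀ s)) y) y :=
        fun y _ => ((hf.differentiable one_ne_zero) y).sub
          (fderiv ℝ f (x₀ s)).differentiableAt
      have hbd : ∀ b ∈ Metric.closedBall (x₀ s) (M * ε),
          ‖fderiv ℝ (fun y => f y - (fderiv ℝ f (x₀ s)) y) b‖ ≤ δ₁ := by
        intro b hb
        have hbK : b ∈ K := by
          have : b = x₀ s + (b - x₀ s) := by abel
          rw [this]
          exact hball s _ (by
            have := Metric.mem_closedBall.mp hb
            rw [dist_eq_norm] at this
            calc ‖b - x₀ s‖ ≤ M * ε := this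
              _ ≤ M * ε₀ := mul_le_mul_of_nonneg_left hε.2 hM.le)
        have hdist : dist b (x₀ s) < η₁ := by
          have := Metric.mem_closedBall.mp hb
          linarith
        have := hDf b hbK (x₀ s) (hx₀K s) hdist
        rw [dist_eq_norm] at this
        have heq : fderiv ℝ (fun y => f y - (fderiv ℝ f (x₀ s)) y) b
            = fderiv ℝ f b - fderiv ℝ f (x₀ s) := by
          rw [fderiv_fun_sub ((hf.differentiable one_ne_zero) b)
            (fderiv ℝ f (x₀ s)).differentiableAt, ContinuousLinearMap.fderiv]
        rw [heq]
        exact this.le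
      have hmem1 : x₀ s ∈ Metric.closedBall (x₀ s) (M * ε) :=
        Metric.mem_closedBall_self (by positivity)
      have hmem2 : x₀ s + u ε s ∈ Metric.closedBall (x₀ s) (M * ε) := by
        rw [Metric.mem_closedBall, dist_eq_norm]
        simpa using hunorm
      have := Convex.norm_image_sub_le_of_norm_fderiv_le hdiff hbd hconv hmem1 hmem2
      calc ‖f (x₀ s + u ε s) - f (x₀ s) - (fderiv ℝ f (x₀ s)) (u ε s)‖
          = ‖(f (x₀ s + u ε s) - (fderiv ℝ f (x₀ s)) (x₀ s + u ε s))
              - (f (x₀ s) - (fderiv ℝ f (x₀ s)) (x₀ s))‖ := by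
            rw [map_add]; congr 1; abel
        _ ≤ δ₁ * ‖x₀ s + u ε s - x₀ s‖ := this
        _ = δ₁ * ‖u ε s‖ := by rw [add_sub_cancel_left]
    -- bound on the g-difference
    have hgd : dist (g (s + Δ ε) (x ε (s + Δ ε)) ε) (g s (x₀ s) 0) < δ₂ := by
      have hΔ2 : |Δ ε| < η₂ := lt_of_lt_of_le hΔε (min_le_left _ _)
      have hΔ1 : |Δ ε| < 1 := lt_of_lt_of_le hΔε (min_le_right _ _)
      have hp : ((s + Δ ε, (x ε (s + Δ ε), ε)) : ℝ × EuclideanSpace ℝ (Fin n) × ℝ) ∈ K' := by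
        refine ⟨?_, ?_, ⟨hεpos.le, hε.2⟩⟩
        · rw [abs_lt] at hΔ1
          simp only [Set.mem_Icc]
          constructor <;> [linarith [hs.1]; linarith [hs.2]]
        · show x ε (s + Δ ε) ∈ K
          rw [hxeq]; exact hball s _ huε₀
      have hp₀ : ((s, (x₀ s, 0)) : ℝ × EuclideanSpace ℝ (Fin n) × ℝ) ∈ K' := by
        refine ⟨?_, hx₀K s, ⟨le_rfl, hε₀.le⟩⟩
        simp only [Set.mem_Icc]
        constructor <;> [linarith [hs.1]; linarith [hs.2]]
      have hdist : dist ((s + Δ ε, (x ε (s + Δ ε), ε)) : ℝ × EuclideanSpace ℝ (Fin n) × ℝ)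
          (s, (x₀ s, 0)) < η₂ := by
        rw [Prod.dist_eq, Prod.dist_eq]
        dsimp only
        have d1 : dist (s + Δ ε) s < η₂ := by
          rw [Real.dist_eq]; simpa using hΔ2
        have d2 : dist (x ε (s + Δ ε)) (x₀ s) < η₂ := by
          rw [dist_eq_norm]
          exact lt_of_le_of_lt hunorm (lt_of_lt_of_le hMε (min_le_right _ _))
        have d3 : dist ε (0:ℝ) < η₂ := by
          rw [Real.dist_eq, sub_zero, abs_of_pos hεpos]
          exact hεη
        exact max_lt d1 (max_lt d2 d3)
      have h := hgc _ hp _ hp₀ hdist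
      simp only at h
      exact h
    -- put the two bounds together
    have hsplit : (1 / ε) * ψ ε s - q s
        = (1 / ε) * (inner ℝ (z s) (f (x ε (s + Δ ε)) - f (x₀ s)
            - (fderiv ℝ f (x₀ s)) (u ε s)) : ℝ)
          + ((inner ℝ (z s) (g (s + Δ ε) (x ε (s + Δ ε)) ε) : ℝ)
            - (inner ℝ (z s) (g s (x₀ s) 0) : ℝ)) := by
      have hεne : ε ≠ 0 := ne_of_gt hεpos
      simp only [hψ_def, hq_def]
      field_simp
      ring
    have e1 : (1 / ε) * |(inner ℝ (z s) (f (x ε (s + Δ ε)) - f (x₀ s)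
        - (fderiv ℝ f (x₀ s)) (u ε s)) : ℝ)| ≤ δ / 2 := by
      have hCS := abs_real_inner_le_norm (z s)
        (f (x ε (s + Δ ε)) - f (x₀ s) - (fderiv ℝ f (x₀ s)) (u ε s))
      have hrb' : ‖f (x ε (s + Δ ε)) - f (x₀ s) - (fderiv ℝ f (x₀ s)) (u ε s)‖
          ≤ δ₁ * (M * ε) := by
        rw [hxeq]
        exact hrb.trans (mul_le_mul_of_nonneg_left hunorm hδ₁.le)
      have h7 : |(inner ℝ (z s) (f (x ε (s + Δ ε)) - f (x₀ s)
          - (fderiv ℝ f (x₀ s)) (u ε s)) : ℝ)| ≤ Z * (δ₁ * (M * ε)) :=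
        hCS.trans (mul_le_mul (hZ s hs) hrb' (norm_nonneg _) hZpos.le)
      have h8 : Z * (δ₁ * (M * ε)) = (δ / 2) * ε := by
        rw [hδ₁def]
        field_simp
      calc (1 / ε) * |(inner ℝ (z s) (f (x ε (s + Δ ε)) - f (x₀ s)
            - (fderiv ℝ f (x₀ s)) (u ε s)) : ℝ)|
          ≤ (1 / ε) * ((δ / 2) * ε) := by
            rw [← h8]
            exact mul_le_mul_of_nonneg_left h7 (by positivity)
        _ = δ / 2 := by field_simp
    have e2 : |(inner ℝ (z s) (g (s + Δ ε) (x ε (s + Δ ε)) ε) : ℝ)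
        - (inner ℝ (z s) (g s (x₀ s) 0) : ℝ)| ≤ δ / 2 := by
      rw [← inner_sub_right]
      have hCS := abs_real_inner_le_norm (z s)
        (g (s + Δ ε) (x ε (s + Δ ε)) ε - g s (x₀ s) 0)
      have h9 : ‖g (s + Δ ε) (x ε (s + Δ ε)) ε - g s (x₀ s) 0‖ ≤ δ₂ := by
        rw [← dist_eq_norm]
        exact hgd.le
      calc |(inner ℝ (z s) (g (s + Δ ε) (x ε (s + Δ ε)) ε - g s (x₀ s) 0) : ℝ)|
          ≤ Z * δ₂ := hCS.trans (mul_le_mul (hZ s hs) h9 (norm_nonneg _) hZpos.le)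
        _ = δ / 2 := by rw [hδ₂def]; field_simp
    calc |(1 / ε) * ψ ε s - q s|
        ≤ (1 / ε) * |(inner ℝ (z s) (f (x ε (s + Δ ε)) - f (x₀ s)
            - (fderiv ℝ f (x₀ s)) (u ε s)) : ℝ)|
          + |(inner ℝ (z s) (g (s + Δ ε) (x ε (s + Δ ε)) ε) : ℝ)
            - (inner ℝ (z s) (g s (x₀ s) 0) : ℝ)| := by
          rw [hsplit]
          refine (abs_add_le _ _).trans ?_
          rw [abs_mul, abs_of_pos (by positivity : (0:ℝ) < 1 / ε)]
      _ ≤ δ / 2 + δ / 2 := add_le_add e1 e2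
      _ = δ := by ring
  -- wrap up
  rw [Metric.tendstoUniformlyOn_iff]
  intro δ hδ
  have hδ' : (0:ℝ) < δ * |ρ - 1| / (T + 1) := by positivity
  filter_upwards [key _ hδ'] with ε ⟨hε, hest⟩
  intro t ht
  have hεpos : (0:ℝ) < ε := hε.1
  -- rewrite both sides
  have hL : (ρ / (ρ - 1)) * (∫ s in (t - T)..t, q s)
      = (ρ - 1)⁻¹ * ∫ s in t..(t + T), q s := hqid t
  have hF : (1 / ε) * (inner ℝ (z t) (u ε t) : ℝ)
      = (ρ - 1)⁻¹ * ∫ s in t..(t + T), (1 / ε) * ψ ε s := by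
    rw [intervalIntegral.integral_const_mul, hFTC ε hε t]
    field_simp
  have hsub : Set.uIoc t (t + T) ⊆ Set.Icc (0:ℝ) (2 * T) := by
    rw [Set.uIoc_of_le (by linarith)]
    intro s hs
    constructor <;> [linarith [ht.1, hs.1]; linarith [ht.2, hs.2]]
  have hint1 : IntervalIntegrable (fun s => (1 / ε) * ψ ε s) MeasureTheory.volume t (t + T) :=
    (continuous_const.mul (hψc ε hε)).intervalIntegrable _ _
  have hint2 : IntervalIntegrable q MeasureTheory.volume t (t + T) :=
    hqc.intervalIntegrable _ _
  rw [Real.dist_eq, hL, hF, ← mul_sub, ← intervalIntegral.integral_sub hint2 hint1, abs_mul]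
  have hbd : |∫ s in t..(t + T), (q s - (1 / ε) * ψ ε s)|
      ≤ (δ * |ρ - 1| / (T + 1)) * T := by
    have := intervalIntegral.norm_integral_le_of_norm_le_const
      (C := δ * |ρ - 1| / (T + 1)) (f := fun s => q s - (1 / ε) * ψ ε s)
      (a := t) (b := t + T) (fun s hs => by
        simpa [abs_sub_comm] using hest s (hsub hs))
    simpa [abs_of_pos hT] using this
  calc |(ρ - 1)⁻¹| * |∫ s in t..(t + T), (q s - (1 / ε) * ψ ε s)|
      ≤ |(ρ - 1)⁻¹| * ((δ * |ρ - 1| / (T + 1)) * T) := by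
        exact mul_le_mul_of_nonneg_left hbd (abs_nonneg _)
    _ = δ * (T / (T + 1)) := by
        rw [abs_inv]
        field_simp
    _ < δ := by
        have : T / (T + 1) < 1 := by
          rw [div_lt_one (by linarith)]; linarith
        calc δ * (T / (T + 1)) < δ * 1 := by exact (mul_lt_mul_iff_right₀ hδ).mpr this
          _ = δ := mul_one δ
end

section
/- (Corollary 3.3, sign of the angle.) Under the hypotheses of Theorem 3.1, for any not-T-periodic Floquet eigenfunction z of the adjoint system and any t ∈ [0,T]: if M⊥_z(t) > 0 then cos∠(z(t), x_ε(t+Δ_ε) − x₀(t)) > 0 for all sufficiently small ε > 0, and if M⊥_z(t) < 0 then cos∠(z(t), x_ε(t+Δ_ε) − x₀(t)) < 0 for all sufficiently small ε > 0. -/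
open intervalIntegral Filter Set Metric

set_option maxHeartbeats 4000000 in
theorem sign_of_angle_aux
    (n : ℕ) (f : EuclideanSpace ℝ (Fin n) → EuclideanSpace ℝ (Fin n))
    (g : ℝ → EuclideanSpace ℝ (Fin n) → ℝ → EuclideanSpace ℝ (Fin n))
    (hf : ContDiff ℝ 1 f)
    (hg : Continuous fun p : ℝ × EuclideanSpace ℝ (Fin n) × ℝ => g p.1 p.2.1 p.2.2)
    (T : ℝ) (hT : 0 < T)
    (hgper : ∀ t x ε, g (t + T) x ε = g t x ε)
    (x₀ : ℝ → EuclideanSpace ℝ (Fin n))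
    (hx₀ : ∀ t, HasDerivAt x₀ (f (x₀ t)) t)
    (hx₀per : Function.Periodic x₀ T)
    (x : ℝ → ℝ → EuclideanSpace ℝ (Fin n)) (Δ : ℝ → ℝ)
    (M ε₀ : ℝ) (hM : 0 < M) (hε₀ : 0 < ε₀)
    (hx : ∀ ε ∈ Set.Ioc 0 ε₀, ∀ t,
      HasDerivAt (x ε) (f (x ε t) + ε • g t (x ε t) ε) t)
    (hxper : ∀ ε ∈ Set.Ioc 0 ε₀, Function.Periodic (x ε) T)
    (hΔ : Filter.Tendsto Δ (nhdsWithin 0 (Set.Ioi 0)) (nhds 0))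
    (hbound : ∀ ε ∈ Set.Ioc 0 ε₀, ∀ t ∈ Set.Icc (0:ℝ) T,
      ‖x ε (t + Δ ε) - x₀ t‖ ≤ M * ε)
    (z : ℝ → EuclideanSpace ℝ (Fin n)) (ρ : ℝ)
    (hz : ∀ t, HasDerivAt z (-(ContinuousLinearMap.adjoint (fderiv ℝ f (x₀ t))) (z t)) t)
    (hzF : ∀ t, z (t + T) = ρ • z t)
    (hρ : ρ ≠ 1) (hρ0 : ρ ≠ 0)
    (t : ℝ) (ht : t ∈ Set.Icc (0:ℝ) T) :
    Filter.Tendsto (fun ε => (inner ℝ (z t) (x ε (t + Δ ε) - x₀ t) : ℝ) / ε)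
      (nhdsWithin 0 (Set.Ioi 0))
      (nhds ((ρ / (ρ - 1)) * ∫ s in (t - T)..t, (inner ℝ (z s) (g s (x₀ s) 0) : ℝ))) := by
  set l := nhdsWithin (0:ℝ) (Set.Ioi 0) with hl
  -- basic continuity facts
  have hx₀c : Continuous x₀ := continuous_iff_continuousAt.2 fun s => (hx₀ s).continuousAt
  have hzc : Continuous z := continuous_iff_continuousAt.2 fun s => (hz s).continuousAt
  have hfd : Differentiable ℝ f := hf.differentiable one_ne_zero
  set A : ℝ → (EuclideanSpace ℝ (Fin n) →L[ℝ] EuclideanSpace ℝ (Fin n)) :=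
    fun s => fderiv ℝ f (x₀ s) with hA
  have hAc : Continuous A := (hf.continuous_fderiv one_ne_zero).comp hx₀c
  -- bounds on compact sets
  obtain ⟨Cx, hCx⟩ := (isCompact_Icc (a := t - T) (b := t)).exists_bound_of_continuousOn
    hx₀c.continuousOn
  set K : Set (EuclideanSpace ℝ (Fin n)) := Metric.closedBall 0 (Cx + M * ε₀) with hK
  have hKcomp : IsCompact K := isCompact_closedBall _ _
  have hKconv : Convex ℝ K := convex_closedBall _ _
  have hKmem : ∀ s ∈ Set.Icc (t-T) t, ∀ y : EuclideanSpace ℝ (Fin n),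
      ‖y - x₀ s‖ ≤ M * ε₀ → y ∈ K := by
    intro s hs y hy
    rw [hK, mem_closedBall_zero_iff]
    calc ‖y‖ ≤ ‖x₀ s‖ + ‖y - x₀ s‖ := by
          simpa using norm_add_le (x₀ s) (y - x₀ s)
      _ ≤ Cx + M * ε₀ := add_le_add (hCx s hs) hy
  have hx₀K : ∀ s ∈ Set.Icc (t-T) t, x₀ s ∈ K := by
    intro s hs
    exact hKmem s hs _ (by simp [mul_nonneg hM.le hε₀.le])
  obtain ⟨C₀, hC₀⟩ := hKcomp.exists_bound_of_continuousOn
    (hf.continuous_fderiv one_ne_zero).continuousOn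
  have htmem : t ∈ Set.Icc (t-T) t := ⟨by linarith, le_rfl⟩
  have hC₀0 : 0 ≤ C₀ := le_trans (norm_nonneg _) (hC₀ _ (hx₀K t htmem))
  obtain ⟨Cz, hCz⟩ := (isCompact_Icc (a := t - T) (b := t)).exists_bound_of_continuousOn
    hzc.continuousOn
  obtain ⟨Cg, hCg⟩ := ((isCompact_Icc (a := t-T-1) (b := t+1)).prod
    (hKcomp.prod (isCompact_Icc (a := (0:ℝ)) (b := ε₀)))).exists_bound_of_continuousOn
    hg.continuousOn
  have hCg' : ∀ (a : ℝ) (b : EuclideanSpace ℝ (Fin n)) (c : ℝ),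
      a ∈ Set.Icc (t-T-1) (t+1) → b ∈ K → c ∈ Set.Icc (0:ℝ) ε₀ → ‖g a b c‖ ≤ Cg :=
    fun a b c ha hb hc => hCg (a, b, c) ⟨ha, hb, hc⟩
  have hCz0 : 0 ≤ Cz := le_trans (norm_nonneg _) (hCz t htmem)
  -- eventual facts
  have hev1 : ∀ᶠ ε in l, ε ∈ Set.Ioc (0:ℝ) ε₀ :=
    Ioc_mem_nhdsGT_of_mem ⟨le_rfl, hε₀⟩
  have hev2 : ∀ᶠ ε in l, |Δ ε| ≤ 1 := by
    have := hΔ (Metric.closedBall_mem_nhds (0:ℝ) one_pos)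
    filter_upwards [this] with ε hε
    simpa [Real.dist_eq] using hε
  -- extended bound on [t-T, t]
  have hub : ∀ ε ∈ Set.Ioc (0:ℝ) ε₀, ∀ s ∈ Set.Icc (t-T) t,
      ‖x ε (s + Δ ε) - x₀ s‖ ≤ M * ε := by
    intro ε hε s hs
    rcases le_or_gt 0 s with h0 | h0
    · exact hbound ε hε s ⟨h0, hs.2.trans ht.2⟩
    · have h1 : s + T ∈ Set.Icc (0:ℝ) T := ⟨by have := hs.1; have := ht.1; linarith, by linarith⟩
      have e1 : x ε (s + T + Δ ε) = x ε (s + Δ ε) := by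
        have := hxper ε hε (s + Δ ε)
        rw [← this]; ring_nf
      have e2 : x₀ (s + T) = x₀ s := hx₀per s
      have := hbound ε hε (s + T) h1
      rwa [e1, e2] at this
  -- continuity of x ε
  have hxc : ∀ ε ∈ Set.Ioc (0:ℝ) ε₀, Continuous (x ε) := fun ε hε =>
    continuous_iff_continuousAt.2 fun s => (hx ε hε s).continuousAt
  -- membership of x ε (s + Δ ε) in K
  have hyK : ∀ ε ∈ Set.Ioc (0:ℝ) ε₀, ∀ s ∈ Set.Icc (t-T) t, x ε (s + Δ ε) ∈ K := by
    intro ε hε s hs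
    refine hKmem s hs _ ((hub ε hε s hs).trans ?_)
    exact mul_le_mul_of_nonneg_left hε.2 hM.le
  -- the integrand
  set F : ℝ → ℝ → ℝ := fun ε s =>
    (inner ℝ (z s) (g (s + Δ ε) (x ε (s + Δ ε)) ε) : ℝ)
      + (inner ℝ (z s) (f (x ε (s + Δ ε)) - f (x₀ s) - A s (x ε (s + Δ ε) - x₀ s)) : ℝ) / ε
    with hF
  -- continuity of F ε
  have hFc : ∀ ε ∈ Set.Ioc (0:ℝ) ε₀, Continuous (F ε) := by
    intro ε hε
    have c1 : Continuous fun s => x ε (s + Δ ε) :=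
      (hxc ε hε).comp (continuous_id.add continuous_const)
    have cg : Continuous fun s => g (s + Δ ε) (x ε (s + Δ ε)) ε :=
      hg.comp ((continuous_id.add continuous_const).prodMk (c1.prodMk continuous_const))
    have cA : Continuous fun s => A s (x ε (s + Δ ε) - x₀ s) :=
      hAc.clm_apply (c1.sub hx₀c)
    exact (hzc.inner cg).add
      ((hzc.inner (((hfd.continuous.comp c1).sub (hfd.continuous.comp hx₀c)).sub cA)).div_const ε)
  -- derivative identity
  have hderiv : ∀ ε ∈ Set.Ioc (0:ℝ) ε₀, ∀ s : ℝ,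
      HasDerivAt (fun s => (inner ℝ (z s) (x ε (s + Δ ε) - x₀ s) : ℝ)) (ε * F ε s) s := by
    intro ε hε s
    have hy : HasDerivAt (fun s => x ε (s + Δ ε))
        (f (x ε (s + Δ ε)) + ε • g (s + Δ ε) (x ε (s + Δ ε)) ε) s :=
      HasDerivAt.comp_add_const s (Δ ε) (hx ε hε (s + Δ ε))
    have hu := hy.sub (hx₀ s)
    have hinner := HasDerivAt.inner ℝ (hz s) hu
    convert hinner using 1
    · rfl
    · rfl
    · rfl
    have hadj1 : (inner ℝ (ContinuousLinearMap.adjoint (fderiv ℝ f (x₀ s)) (z s))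
        (x ε (s + Δ ε)) : ℝ)
        = (inner ℝ (z s) (fderiv ℝ f (x₀ s) (x ε (s + Δ ε))) : ℝ) :=
      ContinuousLinearMap.adjoint_inner_left _ _ _
    have hadj2 : (inner ℝ (ContinuousLinearMap.adjoint (fderiv ℝ f (x₀ s)) (z s))
        (x₀ s) : ℝ)
        = (inner ℝ (z s) (fderiv ℝ f (x₀ s) (x₀ s)) : ℝ) :=
      ContinuousLinearMap.adjoint_inner_left _ _ _
    simp only [hF, hA, inner_sub_right, inner_add_right, real_inner_smul_right,
      inner_neg_left, ContinuousLinearMap.neg_apply, map_sub, Pi.sub_apply]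
    rw [hadj1, hadj2]
    have hεne : ε ≠ 0 := ne_of_gt hε.1
    have hRe : ∀ R : ℝ, ε * (R / ε) = R := fun R => by field_simp
    rw [mul_add, hRe]
    ring
  -- value at t - T
  have hzshift : z t = ρ • z (t - T) := by
    have := hzF (t - T); rw [sub_add_cancel] at this; exact this
  have hx₀shift : x₀ (t - T) = x₀ t := by
    have := hx₀per (t - T); rw [sub_add_cancel] at this; exact this.symm
  -- FTC identity
  have hkey : ∀ ε ∈ Set.Ioc (0:ℝ) ε₀,
      (inner ℝ (z t) (x ε (t + Δ ε) - x₀ t) : ℝ) / ε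
        = (1 - ρ⁻¹)⁻¹ * ∫ s in (t - T)..t, F ε s := by
    intro ε hε
    have hεne : ε ≠ 0 := ne_of_gt hε.1
    have hInt : IntervalIntegrable (fun s => ε * F ε s) MeasureTheory.volume (t-T) t :=
      (continuous_const.mul (hFc ε hε)).intervalIntegrable _ _
    have hFTC := intervalIntegral.integral_eq_sub_of_hasDerivAt
      (f := fun s => (inner ℝ (z s) (x ε (s + Δ ε) - x₀ s) : ℝ))
      (fun s _ => hderiv ε hε s) hInt
    rw [intervalIntegral.integral_const_mul] at hFTC
    have exε : x ε (t - T + Δ ε) = x ε (t + Δ ε) := by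
      have := hxper ε hε (t - T + Δ ε)
      rw [← this]; ring_nf
    have hφTT : (inner ℝ (z (t-T)) (x ε (t - T + Δ ε) - x₀ (t-T)) : ℝ)
        = ρ⁻¹ * (inner ℝ (z t) (x ε (t + Δ ε) - x₀ t) : ℝ) := by
      rw [exε, hx₀shift, hzshift, real_inner_smul_left]
      field_simp
    have h1ρ : (1:ℝ) - ρ⁻¹ ≠ 0 := by
      intro h
      apply hρ
      field_simp at h
      linarith
    have hFTC2 : ε * ∫ s in (t - T)..t, F ε s
        = (inner ℝ (z t) (x ε (t + Δ ε) - x₀ t) : ℝ)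
          - (inner ℝ (z (t - T)) (x ε (t - T + Δ ε) - x₀ (t - T)) : ℝ) := hFTC
    rw [hφTT] at hFTC2
    have hIF : (∫ s in (t - T)..t, F ε s)
        = ((inner ℝ (z t) (x ε (t + Δ ε) - x₀ t) : ℝ)
            - ρ⁻¹ * (inner ℝ (z t) (x ε (t + Δ ε) - x₀ t) : ℝ)) / ε := by
      rw [eq_div_iff hεne, mul_comm]
      exact hFTC2
    rw [hIF]
    generalize (inner ℝ (z t) (x ε (t + Δ ε) - x₀ t) : ℝ) = Φ
    have hρ1 : ρ - 1 ≠ 0 := sub_ne_zero.2 hρ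
    field_simp
  -- dominated convergence
  have hmain : Filter.Tendsto (fun ε => ∫ s in (t - T)..t, F ε s) l
      (nhds (∫ s in (t - T)..t, (inner ℝ (z s) (g s (x₀ s) 0) : ℝ))) := by
    apply intervalIntegral.tendsto_integral_filter_of_dominated_convergence
      (bound := fun _ => Cz * Cg + Cz * (C₀ + C₀) * M)
    · filter_upwards [hev1] with ε hε
      exact ((hFc ε hε).aestronglyMeasurable).restrict
    · filter_upwards [hev1, hev2] with ε hε hΔ1
      refine MeasureTheory.ae_of_all _ fun s hs => ?_
      have hsIcc : s ∈ Set.Icc (t - T) t := by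
        rw [Set.uIoc_of_le (by linarith : t - T ≤ t)] at hs
        exact Set.Ioc_subset_Icc_self hs
      have hεpos := hε.1
      have hgK : ‖g (s + Δ ε) (x ε (s + Δ ε)) ε‖ ≤ Cg := by
        refine hCg' _ _ _ ⟨?_, ?_⟩ (hyK ε hε s hsIcc) ⟨hεpos.le, hε.2⟩
        · have := hsIcc.1; have := (abs_le.1 hΔ1).1; linarith
        · have := hsIcc.2; have := (abs_le.1 hΔ1).2; linarith
      have hG1 : |(inner ℝ (z s) (g (s + Δ ε) (x ε (s + Δ ε)) ε) : ℝ)| ≤ Cz * Cg :=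
        (abs_real_inner_le_norm _ _).trans
          (mul_le_mul (hCz s hsIcc) hgK (norm_nonneg _) hCz0)
      have hMVT : ‖f (x ε (s + Δ ε)) - f (x₀ s) - A s (x ε (s + Δ ε) - x₀ s)‖
          ≤ (C₀ + C₀) * ‖x ε (s + Δ ε) - x₀ s‖ :=
        Convex.norm_image_sub_le_of_norm_hasFDerivWithin_le'
          (fun v _ => (hfd v).hasFDerivAt.hasFDerivWithinAt)
          (fun v hv => (norm_sub_le _ _).trans (add_le_add (hC₀ v hv) (hC₀ _ (hx₀K s hsIcc))))
          hKconv (hx₀K s hsIcc) (hyK ε hε s hsIcc)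
      have hR : |(inner ℝ (z s) (f (x ε (s + Δ ε)) - f (x₀ s)
            - A s (x ε (s + Δ ε) - x₀ s)) : ℝ) / ε|
          ≤ Cz * (C₀ + C₀) * M := by
        rw [abs_div, abs_of_pos hεpos, div_le_iff₀ hεpos]
        calc |(inner ℝ (z s) (f (x ε (s + Δ ε)) - f (x₀ s)
              - A s (x ε (s + Δ ε) - x₀ s)) : ℝ)|
            ≤ ‖z s‖ * ‖f (x ε (s + Δ ε)) - f (x₀ s) - A s (x ε (s + Δ ε) - x₀ s)‖ :=
              abs_real_inner_le_norm _ _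
          _ ≤ Cz * ((C₀ + C₀) * (M * ε)) := by
              refine mul_le_mul (hCz s hsIcc) (hMVT.trans ?_) (norm_nonneg _) hCz0
              exact mul_le_mul_of_nonneg_left (hub ε hε s hsIcc) (by positivity)
          _ = Cz * (C₀ + C₀) * M * ε := by ring
      calc ‖F ε s‖ = |(inner ℝ (z s) (g (s + Δ ε) (x ε (s + Δ ε)) ε) : ℝ)
            + (inner ℝ (z s) (f (x ε (s + Δ ε)) - f (x₀ s)
              - A s (x ε (s + Δ ε) - x₀ s)) : ℝ) / ε| := by rw [Real.norm_eq_abs]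
        _ ≤ _ + _ := abs_add_le _ _
        _ ≤ Cz * Cg + Cz * (C₀ + C₀) * M := add_le_add hG1 hR
    · exact intervalIntegrable_const
    · refine MeasureTheory.ae_of_all _ fun s hs => ?_
      have hsIcc : s ∈ Set.Icc (t - T) t := by
        rw [Set.uIoc_of_le (by linarith : t - T ≤ t)] at hs
        exact Set.Ioc_subset_Icc_self hs
      have hevpos : ∀ᶠ ε in l, (0:ℝ) < ε :=
        Filter.eventually_of_mem self_mem_nhdsWithin fun ε hε => hε
      have hεtend : Filter.Tendsto (fun ε : ℝ => ε) l (nhds 0) :=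
        tendsto_id.mono_left nhdsWithin_le_nhds
      have hMε : Filter.Tendsto (fun ε : ℝ => M * ε) l (nhds 0) := by
        simpa using hεtend.const_mul M
      have hynorm : ∀ᶠ ε in l, ‖x ε (s + Δ ε) - x₀ s‖ ≤ M * ε := by
        filter_upwards [hev1] with ε hε; exact hub ε hε s hsIcc
      have hytend : Filter.Tendsto (fun ε => x ε (s + Δ ε)) l (nhds (x₀ s)) := by
        rw [tendsto_iff_norm_sub_tendsto_zero]
        exact squeeze_zero' (Filter.Eventually.of_forall fun _ => norm_nonneg _) hynorm hMε
      have hstend : Filter.Tendsto (fun ε => s + Δ ε) l (nhds s) := by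
        simpa using (tendsto_const_nhds (x := s)).add hΔ
      have hgt : Filter.Tendsto (fun ε => g (s + Δ ε) (x ε (s + Δ ε)) ε) l
          (nhds (g s (x₀ s) 0)) :=
        (hg.tendsto (s, x₀ s, 0)).comp (by
          rw [nhds_prod_eq, nhds_prod_eq]
          exact hstend.prodMk (hytend.prodMk hεtend))
      have hpart1 : Filter.Tendsto
          (fun ε => (inner ℝ (z s) (g (s + Δ ε) (x ε (s + Δ ε)) ε) : ℝ)) l
          (nhds (inner ℝ (z s) (g s (x₀ s) 0) : ℝ)) := tendsto_const_nhds.inner hgt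
      have hlo := ((hfd (x₀ s)).hasFDerivAt).isLittleO
      have hcomp := hlo.comp_tendsto hytend
      have hBO : (fun ε => x ε (s + Δ ε) - x₀ s) =O[l] fun ε : ℝ => ε := by
        rw [Asymptotics.isBigO_iff]
        refine ⟨M, ?_⟩
        filter_upwards [hynorm, hevpos] with ε h1 h2
        simpa [Real.norm_eq_abs, abs_of_pos h2] using h1
      have hEo := hcomp.trans_isBigO hBO
      have hsm := hEo.tendsto_inv_smul_nhds_zero
      have hpart2 : Filter.Tendsto (fun ε => (inner ℝ (z s)
          (f (x ε (s + Δ ε)) - f (x₀ s) - A s (x ε (s + Δ ε) - x₀ s)) : ℝ) / ε) l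
          (nhds 0) := by
        have h2 := Filter.Tendsto.inner (𝕜 := ℝ) (tendsto_const_nhds (x := z s)) hsm
        rw [inner_zero_right] at h2
        refine h2.congr fun ε => ?_
        rw [real_inner_smul_right, ← div_eq_inv_mul]
        rfl
      have hsum := hpart1.add hpart2
      rw [add_zero] at hsum
      exact hsum
  -- conclude
  have hcong : ∀ᶠ ε in l, (1 - ρ⁻¹)⁻¹ * (∫ s in (t-T)..t, F ε s)
      = (inner ℝ (z t) (x ε (t + Δ ε) - x₀ t) : ℝ) / ε := by
    filter_upwards [hev1] with ε hε
    exact (hkey ε hε).symm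
  have hfinal := (hmain.const_mul ((1 - ρ⁻¹)⁻¹)).congr' hcong
  have hcoef : (1 - ρ⁻¹)⁻¹ = ρ / (ρ - 1) := by
    have hρ1 : ρ - 1 ≠ 0 := sub_ne_zero.2 hρ
    field_simp
  rw [hcoef] at hfinal
  exact hfinal


/-- Corollary 3.3, sign of the angle: under the hypotheses of Theorem 3.1,
for any not-`T`-periodic Floquet eigenfunction `z` and `t ∈ [0,T]`: if `M⊥_z(t) > 0` then
`cos∠(z(t), x_ε(t+Δ_ε) − x₀(t)) > 0` for all small `ε > 0`, and if `M⊥_z(t) < 0` then the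
cosine is negative for all small `ε > 0`. -/
theorem sign_of_angle
    (n : ℕ) (f : EuclideanSpace ℝ (Fin n) → EuclideanSpace ℝ (Fin n))
    (g : ℝ → EuclideanSpace ℝ (Fin n) → ℝ → EuclideanSpace ℝ (Fin n))
    (hf : ContDiff ℝ 1 f)
    (hg : Continuous fun p : ℝ × EuclideanSpace ℝ (Fin n) × ℝ => g p.1 p.2.1 p.2.2)
    (T : ℝ) (hT : 0 < T)
    (hgper : ∀ t x ε, g (t + T) x ε = g t x ε)
    -- x₀ is a nondegenerate T-periodic limit cycle of ẋ = f(x)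
    (x₀ : ℝ → EuclideanSpace ℝ (Fin n))
    (hx₀ : ∀ t, HasDerivAt x₀ (f (x₀ t)) t)
    (hx₀per : Function.Periodic x₀ T)
    (Y : ℝ → (EuclideanSpace ℝ (Fin n) →L[ℝ] EuclideanSpace ℝ (Fin n)))
    (hY0 : Y 0 = ContinuousLinearMap.id ℝ _)
    (hY : ∀ t, HasDerivAt Y ((fderiv ℝ f (x₀ t)).comp (Y t)) t)
    (hnondeg : Module.finrank ℝ
      ↥(⨆ k : ℕ, LinearMap.ker
        (((Y T : Module.End ℝ (EuclideanSpace ℝ (Fin n))) - 1) ^ k)) = 1)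
    -- x_ε are T-periodic solutions of the perturbed system with ‖x_ε(·+Δ_ε) − x₀‖ ≤ Mε
    (x : ℝ → ℝ → EuclideanSpace ℝ (Fin n)) (Δ : ℝ → ℝ)
    (M ε₀ : ℝ) (hM : 0 < M) (hε₀ : 0 < ε₀)
    (hx : ∀ ε ∈ Set.Ioc 0 ε₀, ∀ t,
      HasDerivAt (x ε) (f (x ε t) + ε • g t (x ε t) ε) t)
    (hxper : ∀ ε ∈ Set.Ioc 0 ε₀, Function.Periodic (x ε) T)
    (hΔ : Filter.Tendsto Δ (nhdsWithin 0 (Set.Ioi 0)) (nhds 0))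
    (hbound : ∀ ε ∈ Set.Ioc 0 ε₀, ∀ t ∈ Set.Icc (0:ℝ) T,
      ‖x ε (t + Δ ε) - x₀ t‖ ≤ M * ε)
    -- z is a not T-periodic Floquet eigenfunction of the adjoint system, multiplier ρ ≠ 1
    (z : ℝ → EuclideanSpace ℝ (Fin n)) (ρ : ℝ)
    (hz : ∀ t, HasDerivAt z (-(ContinuousLinearMap.adjoint (fderiv ℝ f (x₀ t))) (z t)) t)
    (hzF : ∀ t, z (t + T) = ρ • z t)
    (hρ : ρ ≠ 1) (hz0 : z ≠ 0)
    (t : ℝ) (ht : t ∈ Set.Icc (0:ℝ) T) :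
    (((ρ / (ρ - 1)) * ∫ s in (t - T)..t, (inner ℝ (z s) (g s (x₀ s) 0) : ℝ)) > 0 →
      ∃ ε₁ > 0, ∀ ε ∈ Set.Ioc 0 ε₁,
        (inner ℝ (z t) (x ε (t + Δ ε) - x₀ t) : ℝ) /
          (‖z t‖ * ‖x ε (t + Δ ε) - x₀ t‖) > 0) ∧
    (((ρ / (ρ - 1)) * ∫ s in (t - T)..t, (inner ℝ (z s) (g s (x₀ s) 0) : ℝ)) < 0 →
      ∃ ε₁ > 0, ∀ ε ∈ Set.Ioc 0 ε₁,
        (inner ℝ (z t) (x ε (t + Δ ε) - x₀ t) : ℝ) /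
          (‖z t‖ * ‖x ε (t + Δ ε) - x₀ t‖) < 0) := by
  constructor
  · intro hpos
    have hρ0 : ρ ≠ 0 := by
      intro h; rw [h] at hpos; norm_num at hpos
    have hlim := sign_of_angle_aux n f g hf hg T hT hgper x₀ hx₀ hx₀per x Δ M ε₀ hM hε₀
      hx hxper hΔ hbound z ρ hz hzF hρ hρ0 t ht
    have hev : ∀ᶠ ε in nhdsWithin (0:ℝ) (Set.Ioi 0),
        0 < (inner ℝ (z t) (x ε (t + Δ ε) - x₀ t) : ℝ) / ε :=
      hlim.eventually (eventually_gt_nhds hpos)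
    obtain ⟨ε₁, hε₁, hsub⟩ := mem_nhdsGT_iff_exists_Ioc_subset.1 hev
    refine ⟨ε₁, hε₁, fun ε hε => ?_⟩
    have h1 : 0 < (inner ℝ (z t) (x ε (t + Δ ε) - x₀ t) : ℝ) / ε := hsub hε
    have hεpos : 0 < ε := hε.1
    have hinner : 0 < (inner ℝ (z t) (x ε (t + Δ ε) - x₀ t) : ℝ) := by
      have h2 := mul_pos h1 hεpos
      rwa [div_mul_cancel₀ _ (ne_of_gt hεpos)] at h2
    have hzt : z t ≠ 0 := by
      intro h; rw [h, inner_zero_left] at hinner; exact lt_irrefl _ hinner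
    have hd : x ε (t + Δ ε) - x₀ t ≠ 0 := by
      intro h; rw [h, inner_zero_right] at hinner; exact lt_irrefl _ hinner
    exact div_pos hinner (mul_pos (norm_pos_iff.2 hzt) (norm_pos_iff.2 hd))
  · intro hneg
    have hρ0 : ρ ≠ 0 := by
      intro h; rw [h] at hneg; norm_num at hneg
    have hlim := sign_of_angle_aux n f g hf hg T hT hgper x₀ hx₀ hx₀per x Δ M ε₀ hM hε₀
      hx hxper hΔ hbound z ρ hz hzF hρ hρ0 t ht
    have hev : ∀ᶠ ε in nhdsWithin (0:ℝ) (Set.Ioi 0),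
        (inner ℝ (z t) (x ε (t + Δ ε) - x₀ t) : ℝ) / ε < 0 :=
      hlim.eventually (eventually_lt_nhds hneg)
    obtain ⟨ε₁, hε₁, hsub⟩ := mem_nhdsGT_iff_exists_Ioc_subset.1 hev
    refine ⟨ε₁, hε₁, fun ε hε => ?_⟩
    have h1 : (inner ℝ (z t) (x ε (t + Δ ε) - x₀ t) : ℝ) / ε < 0 := hsub hε
    have hεpos : 0 < ε := hε.1
    have hinner : (inner ℝ (z t) (x ε (t + Δ ε) - x₀ t) : ℝ) < 0 := by
      have h2 := mul_neg_of_neg_of_pos h1 hεpos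
      rwa [div_mul_cancel₀ _ (ne_of_gt hεpos)] at h2
    have hzt : z t ≠ 0 := by
      intro h; rw [h, inner_zero_left] at hinner; exact lt_irrefl _ hinner
    have hd : x ε (t + Δ ε) - x₀ t ≠ 0 := by
      intro h; rw [h, inner_zero_right] at hinner; exact lt_irrefl _ hinner
    exact div_neg_of_neg_of_pos hinner
      (mul_pos (norm_pos_iff.2 hzt) (norm_pos_iff.2 hd))
end

section
/- (Corollary 3.4, two-sided estimate.) Under the hypotheses of Theorem 3.1, if there exists a not-T-periodic Floquet eigenfunction z of the adjoint system such that M⊥_z(t) ≠ 0 for every t ∈ [0,T], then there exist constants 0 < c₁ ≤ c₂ such that c₁ ε ≤ ‖x_ε(t+Δ_ε) − x₀(t)‖ ≤ c₂ ε for all t ∈ [0,T] and all sufficiently small ε > 0. -/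
open intervalIntegral

set_option maxHeartbeats 1000000 in
/-- Corollary 3.4, two-sided estimate: if moreover `M⊥_z(t) ≠ 0` for every
`t ∈ [0,T]` for some not-`T`-periodic eigenfunction `z`, then
`c₁ ε ≤ ‖x_ε(t+Δ_ε) − x₀(t)‖ ≤ c₂ ε` on `[0,T]` for all small `ε > 0`. -/
theorem two_sided_estimate
    (n : ℕ) (f : EuclideanSpace ℝ (Fin n) → EuclideanSpace ℝ (Fin n))
    (g : ℝ → EuclideanSpace ℝ (Fin n) → ℝ → EuclideanSpace ℝ (Fin n))
    (hf : ContDiff ℝ 1 f)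
    (hg : Continuous fun p : ℝ × EuclideanSpace ℝ (Fin n) × ℝ => g p.1 p.2.1 p.2.2)
    (T : ℝ) (hT : 0 < T)
    (hgper : ∀ t x ε, g (t + T) x ε = g t x ε)
    -- x₀ is a nondegenerate T-periodic limit cycle of ẋ = f(x)
    (x₀ : ℝ → EuclideanSpace ℝ (Fin n))
    (hx₀ : ∀ t, HasDerivAt x₀ (f (x₀ t)) t)
    (hx₀per : Function.Periodic x₀ T)
    (Y : ℝ → (EuclideanSpace ℝ (Fin n) →L[ℝ] EuclideanSpace ℝ (Fin n)))
    (hY0 : Y 0 = ContinuousLinearMap.id ℝ _)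
    (hY : ∀ t, HasDerivAt Y ((fderiv ℝ f (x₀ t)).comp (Y t)) t)
    (hnondeg : Module.finrank ℝ
      ↥(⨆ k : ℕ, LinearMap.ker
        (((Y T : Module.End ℝ (EuclideanSpace ℝ (Fin n))) - 1) ^ k)) = 1)
    -- x_ε are T-periodic solutions of the perturbed system with ‖x_ε(·+Δ_ε) − x₀‖ ≤ Mε
    (x : ℝ → ℝ → EuclideanSpace ℝ (Fin n)) (Δ : ℝ → ℝ)
    (M ε₀ : ℝ) (hM : 0 < M) (hε₀ : 0 < ε₀)
    (hx : ∀ ε ∈ Set.Ioc 0 ε₀, ∀ t,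
      HasDerivAt (x ε) (f (x ε t) + ε • g t (x ε t) ε) t)
    (hxper : ∀ ε ∈ Set.Ioc 0 ε₀, Function.Periodic (x ε) T)
    (hΔ : Filter.Tendsto Δ (nhdsWithin 0 (Set.Ioi 0)) (nhds 0))
    (hbound : ∀ ε ∈ Set.Ioc 0 ε₀, ∀ t ∈ Set.Icc (0:ℝ) T,
      ‖x ε (t + Δ ε) - x₀ t‖ ≤ M * ε)
    -- z is a not T-periodic Floquet eigenfunction of the adjoint system, multiplier ρ ≠ 1
    (z : ℝ → EuclideanSpace ℝ (Fin n)) (ρ : ℝ)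
    (hz : ∀ t, HasDerivAt z (-(ContinuousLinearMap.adjoint (fderiv ℝ f (x₀ t))) (z t)) t)
    (hzF : ∀ t, z (t + T) = ρ • z t)
    (hρ : ρ ≠ 1) (hz0 : z ≠ 0)
    (hMz : ∀ t ∈ Set.Icc (0:ℝ) T,
      ((ρ / (ρ - 1)) * ∫ s in (t - T)..t, (inner ℝ (z s) (g s (x₀ s) 0) : ℝ)) ≠ 0) :
    ∃ c₁ c₂ : ℝ, 0 < c₁ ∧ c₁ ≤ c₂ ∧ ∃ ε₁ > 0, ∀ ε ∈ Set.Ioc 0 ε₁, ∀ t ∈ Set.Icc (0:ℝ) T,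
      c₁ * ε ≤ ‖x ε (t + Δ ε) - x₀ t‖ ∧ ‖x ε (t + Δ ε) - x₀ t‖ ≤ c₂ * ε := by
  classical
  have hρ1 : ρ - 1 ≠ 0 := sub_ne_zero.mpr hρ
  -- basic continuity facts
  have hzc : Continuous z := by
    rw [continuous_iff_continuousAt]; exact fun t => (hz t).differentiableAt.continuousAt
  have hx₀c : Continuous x₀ := by
    rw [continuous_iff_continuousAt]; exact fun t => (hx₀ t).differentiableAt.continuousAt
  have hfc : Continuous f := hf.continuous
  have hDfc : Continuous (fderiv ℝ f) := hf.continuous_fderiv one_ne_zero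
  have hfd : Differentiable ℝ f := hf.differentiable one_ne_zero
  -- ρ ≠ 0
  have hρ0 : ρ ≠ 0 := by
    obtain ⟨t₀, ht₀⟩ := Function.ne_iff.mp hz0
    intro h
    apply ht₀
    have := hzF (t₀ - T)
    rw [sub_add_cancel, h, zero_smul] at this
    simpa using this
  -- the function h₀ and the Melnikov-type function Mz
  set h₀ : ℝ → ℝ := fun s => (inner ℝ (z s) (g s (x₀ s) 0) : ℝ) with hh₀def
  have h₀c : Continuous h₀ := by
    apply Continuous.inner hzc
    exact hg.comp (continuous_id.prodMk ((hx₀c.prodMk continuous_const)))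
  have h₀i : ∀ a b : ℝ, IntervalIntegrable h₀ MeasureTheory.volume a b := fun a b =>
    h₀c.intervalIntegrable a b
  set Mz : ℝ → ℝ := fun t => (ρ / (ρ - 1)) * ∫ s in (t - T)..t, h₀ s with hMzdef
  have hMzc : Continuous Mz := by
    have hF : Continuous fun t => ∫ s in (0:ℝ)..t, h₀ s :=
      intervalIntegral.continuous_primitive h₀i 0
    have : Mz = fun t => (ρ / (ρ - 1)) *
        ((∫ s in (0:ℝ)..t, h₀ s) - ∫ s in (0:ℝ)..(t - T), h₀ s) := by
      funext t
      have := intervalIntegral.integral_add_adjacent_intervals (h₀i 0 (t - T)) (h₀i (t - T) t)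
      rw [hMzdef]
      dsimp only
      rw [← this]; ring
    rw [this]
    exact continuous_const.mul (hF.sub (hF.comp (continuous_sub_right T)))
  -- minimum m of |Mz| on [0,T]
  obtain ⟨tm, htm, hmin⟩ := isCompact_Icc.exists_isMinOn (Set.nonempty_Icc.mpr hT.le)
    (hMzc.abs.continuousOn (s := Set.Icc 0 T))
  set m : ℝ := |Mz tm| with hmdef
  have hm : 0 < m := abs_pos.mpr (hMz tm htm)
  have hmle : ∀ t ∈ Set.Icc (0:ℝ) T, m ≤ |Mz t| := fun t ht => hmin ht
  -- bound Z on ‖z‖ over [-T, T]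
  obtain ⟨Z₀, hZ₀⟩ := (isCompact_Icc (a := -T) (b := T)).exists_bound_of_continuousOn
    hzc.continuousOn
  set Z : ℝ := max Z₀ 1 with hZdef
  have hZpos : (0:ℝ) < Z := lt_of_lt_of_le one_pos (le_max_right _ _)
  have hZ : ∀ s ∈ Set.Icc (-T) T, ‖z s‖ ≤ Z := fun s hs =>
    (hZ₀ s hs).trans (le_max_left _ _)
  -- compact sets
  set orb : Set (EuclideanSpace ℝ (Fin n)) := x₀ '' Set.Icc 0 T with horbdef
  have horbcomp : IsCompact orb := isCompact_Icc.image hx₀c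
  have horb : ∀ s ∈ Set.Icc (-T) T, x₀ s ∈ orb := by
    intro s hs
    rcases le_or_gt 0 s with h | h
    · exact ⟨s, ⟨h, hs.2⟩, rfl⟩
    · refine ⟨s + T, ⟨by linarith [hs.1], by linarith⟩, ?_⟩
      exact hx₀per s
  set K : Set (EuclideanSpace ℝ (Fin n)) := Metric.cthickening 1 orb with hKdef
  have hKcomp : IsCompact K := horbcomp.cthickening
  have hKmem : ∀ b ∈ orb, ∀ a, dist a b ≤ 1 → a ∈ K := fun b hb a h =>
    Metric.mem_cthickening_of_dist_le a b 1 orb hb h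
  have horbK : orb ⊆ K := Metric.self_subset_cthickening orb
  set C : Set (ℝ × EuclideanSpace ℝ (Fin n) × ℝ) :=
    Set.Icc (-(2*T)) (2*T) ×ˢ K ×ˢ Set.Icc 0 ε₀ with hCdef
  have hCcomp : IsCompact C := isCompact_Icc.prod (hKcomp.prod isCompact_Icc)
  -- the smallness constant δ
  set c : ℝ := |ρ / (ρ - 1)| with hcdef
  have hc0 : 0 ≤ c := abs_nonneg _
  set δ : ℝ := m / (8 * T * Z * (c + 1)) with hδdef
  have hδ : 0 < δ := by
    apply div_pos hm
    positivity
  have hkey : c * (2 * Z * δ * T) ≤ m / 2 := by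
    have h8 : (0:ℝ) < 8 * T * Z * (c + 1) := by positivity
    have hcalc : c * (2 * Z * δ * T) = (2 * c * Z * T * m) / (8 * T * Z * (c + 1)) := by
      rw [hδdef]; field_simp
    rw [hcalc, div_le_div_iff₀ h8 two_pos]
    nlinarith [mul_nonneg (mul_nonneg (mul_nonneg hT.le hZpos.le) hm.le) hc0,
      mul_pos (mul_pos hT hZpos) hm]
  -- uniform continuity of g on C
  obtain ⟨δg, hδg, hgu⟩ := (Metric.uniformContinuousOn_iff.mp
    (hCcomp.uniformContinuousOn_of_continuous hg.continuousOn)) δ hδ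
  -- uniform continuity of fderiv f on K
  obtain ⟨δf, hδf, hfu⟩ := (Metric.uniformContinuousOn_iff.mp
    (hKcomp.uniformContinuousOn_of_continuous hDfc.continuousOn)) (δ / M)
    (div_pos hδ hM)
  -- control of Δ
  have hΔmem : Δ ⁻¹' Metric.ball 0 (min δg T) ∈ nhdsWithin 0 (Set.Ioi 0) :=
    hΔ (Metric.ball_mem_nhds 0 (lt_min hδg hT))
  obtain ⟨εΔ, hεΔ, hΔsub⟩ := mem_nhdsGT_iff_exists_Ioc_subset.mp hΔmem
  -- a small helper
  have hsmall : ∀ r : ℝ, 0 < r → M * (r / (M + 1)) < r := by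
    intro r hr
    have h1 : M / (M + 1) < 1 := by
      rw [div_lt_one (by linarith)]; linarith
    calc M * (r / (M + 1)) = r * (M / (M + 1)) := by ring
      _ < r * 1 := mul_lt_mul_of_pos_left h1 hr
      _ = r := mul_one r
  -- choice of ε₁
  set ε₁ : ℝ := min (min ε₀ εΔ)
    (min (min (δg / (M + 1)) (δg / 2)) (min (δf / (M + 1)) (1 / (M + 1)))) with hε₁def
  have hε₁ : 0 < ε₁ := by
    have h1 : (0:ℝ) < δg / (M+1) := by positivity
    have h2 : (0:ℝ) < δg / 2 := by positivity
    have h3 : (0:ℝ) < δf / (M+1) := by positivity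
    have h4 : (0:ℝ) < 1 / (M+1) := by positivity
    exact lt_min (lt_min hε₀ hεΔ) (lt_min (lt_min h1 h2) (lt_min h3 h4))
  refine ⟨m / (2 * Z), max M (m / (2 * Z)), by positivity, le_max_right _ _, ε₁, hε₁, ?_⟩
  intro ε hε t ht
  -- consequences of ε ∈ Ioc 0 ε₁
  have hε0 : 0 < ε := hε.1
  have hεε₀ : ε ∈ Set.Ioc 0 ε₀ :=
    ⟨hε0, hε.2.trans ((min_le_left _ _).trans (min_le_left _ _))⟩
  have hεΔ' : ε ∈ Set.Ioc 0 εΔ :=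
    ⟨hε0, hε.2.trans ((min_le_left _ _).trans (min_le_right _ _))⟩
  have hΔsmall : |Δ ε| < min δg T := by
    have := hΔsub hεΔ'
    simpa [Real.dist_eq] using this
  have hΔg : |Δ ε| < δg := lt_of_lt_of_le hΔsmall (min_le_left _ _)
  have hΔT : |Δ ε| < T := lt_of_lt_of_le hΔsmall (min_le_right _ _)
  have hMεδg : M * ε < δg := by
    have h1 : ε ≤ δg / (M + 1) := hε.2.trans ((min_le_right _ _).trans
      ((min_le_left _ _).trans (min_le_left _ _)))
    calc M * ε ≤ M * (δg / (M+1)) := mul_le_mul_of_nonneg_left h1 hM.le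
      _ < δg := hsmall δg hδg
  have hεδg : ε < δg := by
    have h1 : ε ≤ δg / 2 := hε.2.trans ((min_le_right _ _).trans
      ((min_le_left _ _).trans (min_le_right _ _)))
    linarith
  have hMεδf : M * ε < δf := by
    have h1 : ε ≤ δf / (M + 1) := hε.2.trans ((min_le_right _ _).trans
      ((min_le_right _ _).trans (min_le_left _ _)))
    calc M * ε ≤ M * (δf / (M+1)) := mul_le_mul_of_nonneg_left h1 hM.le
      _ < δf := hsmall δf hδf
  have hMε1 : M * ε ≤ 1 := by
    have h1 : ε ≤ 1 / (M + 1) := hε.2.trans ((min_le_right _ _).trans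
      ((min_le_right _ _).trans (min_le_right _ _)))
    have := hsmall 1 one_pos
    calc M * ε ≤ M * (1 / (M+1)) := mul_le_mul_of_nonneg_left h1 hM.le
      _ ≤ 1 := this.le
  -- continuity of x ε
  have hxc : Continuous (x ε) := by
    rw [continuous_iff_continuousAt]
    exact fun s => (hx ε hεε₀ s).differentiableAt.continuousAt
  have haxc : Continuous (fun s => x ε (s + Δ ε)) := hxc.comp (continuous_add_right (Δ ε))
  -- periodic extension of the bound
  have hub : ∀ s ∈ Set.Icc (-T) T, ‖x ε (s + Δ ε) - x₀ s‖ ≤ M * ε := by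
    intro s hs
    rcases le_or_gt 0 s with h | h
    · exact hbound ε hεε₀ s ⟨h, hs.2⟩
    · have h1 : s + T ∈ Set.Icc (0:ℝ) T := ⟨by linarith [hs.1], by linarith⟩
      have h2 := hbound ε hεε₀ (s + T) h1
      have e0 : s + T + Δ ε = s + Δ ε + T := by ring
      rw [e0, hxper ε hεε₀ (s + Δ ε), hx₀per s] at h2
      exact h2
  -- the functions φ and ψ
  set φ : ℝ → ℝ := fun r => (inner ℝ (z r) (x ε (r + Δ ε) - x₀ r) : ℝ) with hφdef
  set ψ : ℝ → ℝ := fun s =>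
    (inner ℝ (z s) (f (x ε (s + Δ ε)) - f (x₀ s)
      - (fderiv ℝ f (x₀ s)) (x ε (s + Δ ε) - x₀ s)) : ℝ)
    + ε * (inner ℝ (z s) (g (s + Δ ε) (x ε (s + Δ ε)) ε) : ℝ) with hψdef
  have hφd : ∀ s, HasDerivAt φ (ψ s) s := by
    intro s
    have h1 : HasDerivAt (fun r => x ε (r + Δ ε))
        (f (x ε (s + Δ ε)) + ε • g (s + Δ ε) (x ε (s + Δ ε)) ε) s :=
      HasDerivAt.comp_add_const s (Δ ε) (hx ε hεε₀ (s + Δ ε))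
    have h2 := h1.sub (hx₀ s)
    have h3 := HasDerivAt.inner ℝ (hz s) h2
    refine h3.congr_deriv ?_
    rw [hψdef]
    simp only [inner_sub_right, inner_add_right, real_inner_smul_right, inner_neg_left,
      ContinuousLinearMap.adjoint_inner_left, map_sub, Pi.sub_apply]
    ring
  have hψc : Continuous ψ := by
    have c1 : Continuous fun s => f (x ε (s + Δ ε)) := hfc.comp haxc
    have c2 : Continuous fun s => f (x₀ s) := hfc.comp hx₀c
    have c3 : Continuous fun s => (fderiv ℝ f (x₀ s)) (x ε (s + Δ ε) - x₀ s) :=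
      (hDfc.comp hx₀c).clm_apply (haxc.sub hx₀c)
    have c4 : Continuous fun s => g (s + Δ ε) (x ε (s + Δ ε)) ε :=
      hg.comp ((continuous_add_right (Δ ε)).prodMk (haxc.prodMk continuous_const))
    exact (hzc.inner ((c1.sub c2).sub c3)).add (continuous_const.mul (hzc.inner c4))
  have hTt : t - T ≤ t := by linarith
  -- fundamental theorem of calculus
  have hint : ∫ s in (t - T)..t, ψ s = φ t - φ (t - T) :=
    intervalIntegral.integral_eq_sub_of_hasDerivAt (fun s _ => hφd s)
      (hψc.intervalIntegrable _ _)
  -- Floquet relation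
  have hφF : φ t = ρ * φ (t - T) := by
    have hz' : z t = ρ • z (t - T) := by
      have := hzF (t - T); rwa [sub_add_cancel] at this
    have hx' : x ε (t + Δ ε) = x ε (t - T + Δ ε) := by
      have e0 : t + Δ ε = t - T + Δ ε + T := by ring
      rw [e0, hxper ε hεε₀ (t - T + Δ ε)]
    have hx0' : x₀ t = x₀ (t - T) := by
      have := hx₀per (t - T); rw [sub_add_cancel] at this; exact this
    rw [hφdef]
    dsimp only
    rw [hz', hx', hx0', real_inner_smul_left]
  have hφeq : φ t = (ρ / (ρ - 1)) * ∫ s in (t - T)..t, ψ s := by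
    rw [hint, hφF]
    field_simp
  have hMzt : ε * Mz t = (ρ / (ρ - 1)) * ∫ s in (t - T)..t, ε * h₀ s := by
    rw [intervalIntegral.integral_const_mul, hMzdef]
    ring
  have hdiff : φ t - ε * Mz t = (ρ / (ρ - 1)) * ∫ s in (t - T)..t, (ψ s - ε * h₀ s) := by
    rw [intervalIntegral.integral_sub (hψc.intervalIntegrable _ _)
      ((h₀i _ _).const_mul ε), hφeq, hMzt]
    ring
  -- pointwise bound on the integrand
  have hptw : ∀ s ∈ Set.uIoc (t - T) t, ‖ψ s - ε * h₀ s‖ ≤ 2 * Z * δ * ε := by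
    intro s hs
    rw [Set.uIoc_of_le hTt] at hs
    have hsI : s ∈ Set.Icc (-T) T := ⟨by linarith [hs.1, ht.1], le_trans hs.2 ht.2⟩
    have hubs : ‖x ε (s + Δ ε) - x₀ s‖ ≤ M * ε := hub s hsI
    have hborb : x₀ s ∈ orb := horb s hsI
    have hbK : x₀ s ∈ K := horbK hborb
    have haK : x ε (s + Δ ε) ∈ K := by
      apply hKmem (x₀ s) hborb
      rw [dist_eq_norm]
      linarith
    -- remainder bound via the mean value inequality
    have hRb : ∀ y ∈ segment ℝ (x₀ s) (x ε (s + Δ ε)),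
        ‖fderiv ℝ f y - fderiv ℝ f (x₀ s)‖ ≤ δ / M := by
      intro y hy
      have hyb : dist y (x₀ s) ≤ ‖x ε (s + Δ ε) - x₀ s‖ := by
        have := (convex_closedBall (x₀ s) ‖x ε (s + Δ ε) - x₀ s‖).segment_subset
          (Metric.mem_closedBall_self (norm_nonneg _))
          (by rw [Metric.mem_closedBall, dist_eq_norm]) hy
        rwa [Metric.mem_closedBall] at this
      have hyK : y ∈ K := hKmem (x₀ s) hborb y (hyb.trans (hubs.trans hMε1))
      have := hfu y hyK (x₀ s) hbK (lt_of_le_of_lt (hyb.trans hubs) hMεδf)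
      rw [dist_eq_norm] at this
      exact this.le
    have hR : ‖f (x ε (s + Δ ε)) - f (x₀ s)
        - (fderiv ℝ f (x₀ s)) (x ε (s + Δ ε) - x₀ s)‖ ≤ δ * ε := by
      have hmv := Convex.norm_image_sub_le_of_norm_hasFDerivWithin_le
        (f := fun y => f y - (fderiv ℝ f (x₀ s)) y)
        (f' := fun y => fderiv ℝ f y - fderiv ℝ f (x₀ s))
        (fun y _ => ((hfd y).hasFDerivAt.sub
          ((fderiv ℝ f (x₀ s)).hasFDerivAt)).hasFDerivWithinAt)
        hRb (convex_segment _ _) (left_mem_segment ℝ _ _) (right_mem_segment ℝ _ _)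
      have heq : (f (x ε (s + Δ ε)) - (fderiv ℝ f (x₀ s)) (x ε (s + Δ ε)))
          - (f (x₀ s) - (fderiv ℝ f (x₀ s)) (x₀ s))
          = f (x ε (s + Δ ε)) - f (x₀ s)
            - (fderiv ℝ f (x₀ s)) (x ε (s + Δ ε) - x₀ s) := by
        rw [map_sub]; abel
      rw [heq] at hmv
      calc ‖f (x ε (s + Δ ε)) - f (x₀ s)
            - (fderiv ℝ f (x₀ s)) (x ε (s + Δ ε) - x₀ s)‖
          ≤ δ / M * ‖x ε (s + Δ ε) - x₀ s‖ := hmv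
        _ ≤ δ / M * (M * ε) :=
            mul_le_mul_of_nonneg_left hubs (div_nonneg hδ.le hM.le)
        _ = δ * ε := by field_simp
    -- g bound via uniform continuity
    have hgd : ‖g (s + Δ ε) (x ε (s + Δ ε)) ε - g s (x₀ s) 0‖ ≤ δ := by
      have hΔlt := abs_lt.mp hΔT
      have hp : ((s + Δ ε, x ε (s + Δ ε), ε) : ℝ × EuclideanSpace ℝ (Fin n) × ℝ) ∈ C := by
        rw [hCdef, Set.mem_prod, Set.mem_prod]
        refine ⟨Set.mem_Icc.mpr ⟨?_, ?_⟩, haK, Set.mem_Icc.mpr ⟨hε0.le, hεε₀.2⟩⟩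
        · show -(2*T) ≤ s + Δ ε
          linarith [hsI.1, hΔlt.1]
        · show s + Δ ε ≤ 2*T
          linarith [hsI.2, hΔlt.2]
      have hq : ((s, x₀ s, 0) : ℝ × EuclideanSpace ℝ (Fin n) × ℝ) ∈ C := by
        rw [hCdef, Set.mem_prod, Set.mem_prod]
        refine ⟨Set.mem_Icc.mpr ⟨?_, ?_⟩, hbK, Set.mem_Icc.mpr ⟨le_refl 0, hε₀.le⟩⟩
        · show -(2*T) ≤ s
          linarith [hsI.1]
        · show s ≤ 2*T
          linarith [hsI.2]
      have hd : dist ((s + Δ ε, x ε (s + Δ ε), ε) : ℝ × EuclideanSpace ℝ (Fin n) × ℝ)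
          (s, x₀ s, 0) < δg := by
        rw [Prod.dist_eq, Prod.dist_eq]
        apply max_lt
        · rw [Real.dist_eq]
          simpa using hΔg
        · apply max_lt
          · rw [dist_eq_norm]
            exact lt_of_le_of_lt hubs hMεδg
          · rw [Real.dist_eq]
            simpa [abs_of_pos hε0] using hεδg
      have := hgu _ hp _ hq hd
      rw [dist_eq_norm] at this
      exact this.le
    have hzs : ‖z s‖ ≤ Z := hZ s hsI
    have hsplit : ψ s - ε * h₀ s
        = (inner ℝ (z s) (f (x ε (s + Δ ε)) - f (x₀ s)
            - (fderiv ℝ f (x₀ s)) (x ε (s + Δ ε) - x₀ s)) : ℝ)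
          + ε * (inner ℝ (z s) (g (s + Δ ε) (x ε (s + Δ ε)) ε - g s (x₀ s) 0) : ℝ) := by
      rw [hψdef, hh₀def]
      simp only [inner_sub_right]
      ring
    rw [hsplit]
    have t1 : |(inner ℝ (z s) (f (x ε (s + Δ ε)) - f (x₀ s)
        - (fderiv ℝ f (x₀ s)) (x ε (s + Δ ε) - x₀ s)) : ℝ)| ≤ Z * (δ * ε) := by
      calc |(inner ℝ (z s) _ : ℝ)| ≤ ‖z s‖ * ‖f (x ε (s + Δ ε)) - f (x₀ s)
            - (fderiv ℝ f (x₀ s)) (x ε (s + Δ ε) - x₀ s)‖ := abs_real_inner_le_norm _ _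
        _ ≤ Z * (δ * ε) := mul_le_mul hzs hR (norm_nonneg _) hZpos.le
    have t2 : |(inner ℝ (z s) (g (s + Δ ε) (x ε (s + Δ ε)) ε - g s (x₀ s) 0) : ℝ)| ≤ Z * δ := by
      calc |(inner ℝ (z s) _ : ℝ)|
          ≤ ‖z s‖ * ‖g (s + Δ ε) (x ε (s + Δ ε)) ε - g s (x₀ s) 0‖ :=
            abs_real_inner_le_norm _ _
        _ ≤ Z * δ := mul_le_mul hzs hgd (norm_nonneg _) hZpos.le
    calc ‖(inner ℝ (z s) (f (x ε (s + Δ ε)) - f (x₀ s)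
            - (fderiv ℝ f (x₀ s)) (x ε (s + Δ ε) - x₀ s)) : ℝ)
          + ε * (inner ℝ (z s) (g (s + Δ ε) (x ε (s + Δ ε)) ε - g s (x₀ s) 0) : ℝ)‖
        ≤ |(inner ℝ (z s) (f (x ε (s + Δ ε)) - f (x₀ s)
            - (fderiv ℝ f (x₀ s)) (x ε (s + Δ ε) - x₀ s)) : ℝ)|
          + |ε * (inner ℝ (z s) (g (s + Δ ε) (x ε (s + Δ ε)) ε - g s (x₀ s) 0) : ℝ)| :=
          abs_add_le _ _
      _ ≤ Z * (δ * ε) + ε * (Z * δ) := by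
          refine add_le_add t1 ?_
          rw [abs_mul, abs_of_pos hε0]
          exact mul_le_mul_of_nonneg_left t2 hε0.le
      _ = 2 * Z * δ * ε := by ring
  -- integral bound
  have hIb : ‖∫ s in (t - T)..t, (ψ s - ε * h₀ s)‖ ≤ 2 * Z * δ * ε * T := by
    have := intervalIntegral.norm_integral_le_of_norm_le_const hptw
    have e0 : |t - (t - T)| = T := by rw [abs_of_nonneg (by linarith)]; ring_nf
    rw [e0] at this
    exact this
  have habs : |φ t - ε * Mz t| ≤ ε * (m / 2) := by
    rw [hdiff, abs_mul]
    calc |ρ / (ρ - 1)| * |∫ s in (t - T)..t, (ψ s - ε * h₀ s)|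
        ≤ c * (2 * Z * δ * ε * T) := mul_le_mul_of_nonneg_left hIb hc0
      _ = ε * (c * (2 * Z * δ * T)) := by ring
      _ ≤ ε * (m / 2) := mul_le_mul_of_nonneg_left hkey hε0.le
  -- conclude
  have hφlow : ε * (m / 2) ≤ |φ t| := by
    have h1 : m * ε ≤ |ε * Mz t| := by
      rw [abs_mul, abs_of_pos hε0]
      calc m * ε = ε * m := by ring
        _ ≤ ε * |Mz t| := mul_le_mul_of_nonneg_left (hmle t ht) hε0.le
    have h2 : |ε * Mz t| ≤ |φ t| + |φ t - ε * Mz t| := by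
      have := abs_sub_abs_le_abs_sub (ε * Mz t) (φ t)
      have h3 := abs_sub_comm (ε * Mz t) (φ t)
      linarith [abs_nonneg (φ t), this]
    linarith
  have hφup : |φ t| ≤ Z * ‖x ε (t + Δ ε) - x₀ t‖ := by
    have htI : t ∈ Set.Icc (-T) T := ⟨by linarith [ht.1], ht.2⟩
    calc |φ t| ≤ ‖z t‖ * ‖x ε (t + Δ ε) - x₀ t‖ := abs_real_inner_le_norm _ _
      _ ≤ Z * ‖x ε (t + Δ ε) - x₀ t‖ :=
        mul_le_mul_of_nonneg_right (hZ t htI) (norm_nonneg _)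
  constructor
  · rw [div_mul_eq_mul_div, div_le_iff₀ (by positivity)]
    nlinarith
  · calc ‖x ε (t + Δ ε) - x₀ t‖ ≤ M * ε := hbound ε hεε₀ t ht
      _ ≤ max M (m / (2 * Z)) * ε :=
        mul_le_mul_of_nonneg_right (le_max_left _ _) hε0.le
end

section
/- (Lemma 3.6, uniform angle bound.) Assume the hypotheses of Theorem 3.1 and that the adjoint system ż = −(f'(x₀(t)))* z has n linearly independent Floquet eigenfunctions, and let Δ_ε be defined via the transversal surface S as in Corollary 2.2. Then there exists α* > 0 such that for all sufficiently small ε > 0 with x_ε(Δ_ε) ≠ x₀(0), there is a not-T-periodic Floquet eigenfunction z of the adjoint system with |cos∠(z(0), x_ε(Δ_ε) − x₀(0))| ≥ α*. -/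
open Set Metric Real Filter
set_option maxHeartbeats 1000000


lemma const_of_hasDerivAt_zero {φ : ℝ → ℝ} (h : ∀ t, HasDerivAt φ 0 t) (a b : ℝ) :
    φ a = φ b :=
  is_const_of_deriv_eq_zero (fun t => (h t).differentiableAt)
    (fun t => (h t).deriv) a b

lemma gronwall_tube {E : Type*} [NormedAddCommGroup E] [NormedSpace ℝ E]
    (F : E → E) (p u : ℝ → E) (K : NNReal) (T δ : ℝ) (hT : 0 ≤ T)
    (hlip : ∀ t : ℝ, LipschitzOnWith K F (Metric.closedBall (p t) 1))
    (hp : ∀ t, HasDerivAt p (F (p t)) t)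
    (hu : ∀ t, HasDerivAt u (F (u t)) t)
    (h0 : dist (u 0) (p 0) ≤ δ)
    (hsmall : δ * Real.exp (K * T) < 1) :
    ∀ t ∈ Set.Icc 0 T, dist (u t) (p t) ≤ δ * Real.exp (K * t) := by
  have hδ0 : 0 ≤ δ := le_trans dist_nonneg h0
  have hcu : Continuous u := by
    refine continuous_iff_continuousAt.mpr fun t => (hu t).continuousAt
  have hcp : Continuous p := by
    refine continuous_iff_continuousAt.mpr fun t => (hp t).continuousAt
  have hKn : (0:ℝ) ≤ K := K.coe_nonneg
  have hmono : ∀ s t : ℝ, s ≤ t → δ * Real.exp (K * s) ≤ δ * Real.exp (K * t) := by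
    intro s t hst
    have := Real.exp_le_exp.mpr (mul_le_mul_of_nonneg_left hst hKn)
    nlinarith [Real.exp_pos ((K:ℝ) * s)]
  have key : ∀ b ∈ Icc (0:ℝ) T, (∀ s ∈ Ico (0:ℝ) b, dist (u s) (p s) ≤ 1) →
      ∀ t ∈ Icc (0:ℝ) b, dist (u t) (p t) ≤ δ * Real.exp (K * t) := by
    intro b hb hin t ht
    have := dist_le_of_trajectories_ODE_of_mem (v := fun _ x => F x)
      (s := fun t => Metric.closedBall (p t) 1) (K := K) (a := 0) (b := b)
      (fun t _ => hlip t) hcu.continuousOn (fun t _ => (hu t).hasDerivWithinAt)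
      (fun t htt => by simpa [Metric.mem_closedBall] using hin t htt)
      hcp.continuousOn (fun t _ => (hp t).hasDerivWithinAt)
      (fun t _ => Metric.mem_closedBall_self zero_le_one) h0 t ht
    simpa using this
  set Q : Set ℝ := {b | b ∈ Icc (0:ℝ) T ∧
    ∀ s ∈ Icc (0:ℝ) b, dist (u s) (p s) ≤ δ * Real.exp (K * s)} with hQ
  have h0Q : (0:ℝ) ∈ Q := by
    refine ⟨⟨le_refl 0, hT⟩, fun s hs => ?_⟩
    have hs0 : s = 0 := le_antisymm hs.2 hs.1
    subst hs0
    simpa using h0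
  have hbdd : BddAbove Q := ⟨T, fun b hb => hb.1.2⟩
  have hne : Q.Nonempty := ⟨0, h0Q⟩
  set τ := sSup Q with hτ
  have hτmem : τ ∈ Icc (0:ℝ) T := ⟨le_csSup hbdd h0Q, csSup_le hne fun b hb => hb.1.2⟩
  have hband : ∀ s ∈ Ico (0:ℝ) τ, dist (u s) (p s) ≤ δ * Real.exp (K * s) := by
    intro s hs
    obtain ⟨b, hbQ, hsb⟩ := exists_lt_of_lt_csSup hne hs.2
    exact hbQ.2 s ⟨hs.1, hsb.le⟩
  have hlt1 : ∀ s ∈ Ico (0:ℝ) τ, dist (u s) (p s) ≤ 1 := by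
    intro s hs
    refine (hband s hs).trans (le_of_lt (lt_of_le_of_lt ?_ hsmall))
    exact hmono _ _ (le_trans hs.2.le hτmem.2)
  have hτQ : τ ∈ Q := ⟨hτmem, key τ hτmem hlt1⟩
  rcases eq_or_lt_of_le hτmem.2 with hτT | hτltT
  · exact fun t ht => hτQ.2 t (by rw [hτT]; exact ht)
  · exfalso
    have hτ1 : dist (u τ) (p τ) < 1 := by
      refine lt_of_le_of_lt (hτQ.2 τ ⟨hτmem.1, le_refl τ⟩) (lt_of_le_of_lt ?_ hsmall)
      exact hmono _ _ hτmem.2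
    have hcont : ContinuousAt (fun s => dist (u s) (p s)) τ :=
      ((hcu.dist hcp).continuousAt)
    obtain ⟨δ', hδ'pos, hδ'⟩ := Metric.continuousAt_iff.mp hcont
      (1 - dist (u τ) (p τ)) (by linarith)
    set b := min T (τ + δ'/2) with hb
    have hτb : τ < b := lt_min hτltT (by linarith)
    have hbI : b ∈ Icc (0:ℝ) T := ⟨le_trans hτmem.1 hτb.le, min_le_left _ _⟩
    have hin : ∀ s ∈ Ico (0:ℝ) b, dist (u s) (p s) ≤ 1 := by
      intro s hs
      rcases lt_or_ge s τ with hsτ | hτs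
      · exact hlt1 s ⟨hs.1, hsτ⟩
      · have hdist : dist s τ < δ' := by
          have hsb : s < τ + δ'/2 := lt_of_lt_of_le hs.2 (min_le_right _ _)
          rw [Real.dist_eq, abs_of_nonneg (by linarith)]
          linarith
        have := hδ' hdist
        rw [Real.dist_eq] at this
        have := abs_lt.mp this
        linarith [this.1, this.2]
    have hbQ : b ∈ Q := ⟨hbI, key b hbI hin⟩
    exact absurd (le_csSup hbdd hbQ) (not_le.mpr hτb)


lemma tube_lipschitz {E : Type*} [NormedAddCommGroup E] [NormedSpace ℝ E] [ProperSpace E]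
    (f : E → E) (hf : ContDiff ℝ 1 f) (x₀ : ℝ → E) (hc : Continuous x₀)
    (T : ℝ) (hT : 0 < T) (hper : Function.Periodic x₀ T) :
    ∃ K : NNReal, (∀ t : ℝ, LipschitzOnWith K f (Metric.closedBall (x₀ t) 1)) ∧
      (∀ t : ℝ, Metric.closedBall (x₀ t) 1 ⊆
        Metric.cthickening 1 (x₀ '' Set.Icc 0 T)) := by
  set K2 := Metric.cthickening 1 (x₀ '' Set.Icc 0 T) with hK2
  have hcomp : IsCompact K2 := (isCompact_Icc.image hc).cthickening
  have hsub : ∀ t : ℝ, Metric.closedBall (x₀ t) 1 ⊆ K2 := by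
    intro t y hy
    obtain ⟨t', ht', hEq⟩ := hper.exists_mem_Ico₀ hT t
    refine Metric.mem_cthickening_of_dist_le y (x₀ t') 1 _
      ⟨t', ⟨ht'.1, ht'.2.le⟩, rfl⟩ ?_
    rw [← hEq]
    exact Metric.mem_closedBall.mp hy
  have hcd : Continuous (fun c => ‖fderiv ℝ f c‖) :=
    (hf.continuous_fderiv one_ne_zero).norm
  have hne : K2.Nonempty := ⟨x₀ 0, hsub 0 (Metric.mem_closedBall_self zero_le_one)⟩
  obtain ⟨xm, _, hxm⟩ := hcomp.exists_isMaxOn hne hcd.continuousOn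
  refine ⟨‖fderiv ℝ f xm‖₊, fun t => ?_, hsub⟩
  refine Convex.lipschitzOnWith_of_nnnorm_hasFDerivWithin_le
    (f' := fun c => fderiv ℝ f c)
    (fun c hc' => ((hf.differentiable one_ne_zero) c).hasFDerivAt.hasFDerivWithinAt)
    (fun c hc' => ?_) (convex_closedBall _ _)
  exact hxm (hsub t hc')

lemma remainder_bound {E : Type*} [NormedAddCommGroup E] [NormedSpace ℝ E]
    (f : E → E) (hf : ContDiff ℝ 1 f) (Kset : Set E) (hK : IsCompact Kset)
    (ε' : ℝ) (hε' : 0 < ε') :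
    ∃ δ' : ℝ, 0 < δ' ∧ δ' ≤ 1 ∧ ∀ a b : E, Metric.closedBall b 1 ⊆ Kset → ‖a - b‖ ≤ δ' →
      ‖f a - f b - fderiv ℝ f b (a - b)‖ ≤ ε' * ‖a - b‖ := by
  have huc := hK.uniformContinuousOn_of_continuous
    ((hf.continuous_fderiv one_ne_zero).continuousOn)
  obtain ⟨δ, hδpos, hδ⟩ := Metric.uniformContinuousOn_iff.mp huc ε' hε'
  refine ⟨min 1 (δ/2), by positivity, min_le_left _ _, fun a b hball hab => ?_⟩
  set s := Metric.closedBall b (min 1 (δ/2)) with hs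
  have hses : s ⊆ Kset := fun c hc =>
    hball (Metric.closedBall_subset_closedBall (min_le_left _ _) hc)
  have hbmem : b ∈ s := Metric.mem_closedBall_self (by positivity)
  have hamem : a ∈ s := by
    rw [hs, Metric.mem_closedBall, dist_eq_norm]; exact hab
  have hbnd : ∀ c ∈ s, ‖fderiv ℝ f c - fderiv ℝ f b‖ ≤ ε' := by
    intro c hc
    have h1 : dist c b ≤ min 1 (δ/2) := Metric.mem_closedBall.mp hc
    have hcb : dist c b < δ := by
      have := h1.trans (min_le_right _ _); linarith
    have := hδ c (hses hc) b (hses hbmem) hcb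
    rw [dist_eq_norm] at this
    exact this.le
  have key := Convex.norm_image_sub_le_of_norm_hasFDerivWithin_le
    (f := fun x => f x - fderiv ℝ f b x)
    (f' := fun c => fderiv ℝ f c - fderiv ℝ f b) (C := ε')
    (fun c hc => (((hf.differentiable one_ne_zero) c).hasFDerivAt.sub
      (fderiv ℝ f b).hasFDerivAt).hasFDerivWithinAt)
    hbnd (convex_closedBall _ _) hbmem hamem
  calc ‖f a - f b - fderiv ℝ f b (a - b)‖
      = ‖(f a - fderiv ℝ f b a) - (f b - fderiv ℝ f b b)‖ := by
        rw [map_sub]; congr 1; abel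
    _ ≤ ε' * ‖a - b‖ := key

lemma pairing_hasDerivAt {E : Type*} [NormedAddCommGroup E] [InnerProductSpace ℝ E]
    [CompleteSpace E] {z w : ℝ → E} {B : E →L[ℝ] E} {wd : E} {t : ℝ}
    (hz : HasDerivAt z (-(ContinuousLinearMap.adjoint B) (z t)) t)
    (hw : HasDerivAt w wd t) :
    HasDerivAt (fun s => (inner ℝ (z s) (w s) : ℝ))
      ((inner ℝ (z t) (wd - B (w t)) : ℝ)) t := by
  have h := hz.inner ℝ hw
  refine h.congr_deriv ?_
  rw [inner_sub_right, inner_neg_left, ContinuousLinearMap.adjoint_inner_left]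
  ring
/-- Lemma 3.6, uniform angle bound: assume the hypotheses of Theorem 3.1,
that the adjoint system has `n` linearly independent Floquet eigenfunctions, and that the
shifts `Δ_ε` come from the transversal surface `S` as in Corollary 2.2. Then there is
`α* > 0` such that for all small `ε > 0` with `x_ε(Δ_ε) ≠ x₀(0)` there is a
not-`T`-periodic eigenfunction `z` with `|cos∠(z(0), x_ε(Δ_ε) − x₀(0))| ≥ α*`. -/
theorem uniform_angle_bound
    (n : ℕ) (f : EuclideanSpace ℝ (Fin n) → EuclideanSpace ℝ (Fin n))
    (g : ℝ → EuclideanSpace ℝ (Fin n) → ℝ → EuclideanSpace ℝ (Fin n))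
    (hf : ContDiff ℝ 1 f)
    (hg : Continuous fun p : ℝ × EuclideanSpace ℝ (Fin n) × ℝ => g p.1 p.2.1 p.2.2)
    (T : ℝ) (hT : 0 < T)
    (hgper : ∀ t x ε, g (t + T) x ε = g t x ε)
    -- x₀ is a nondegenerate T-periodic limit cycle of ẋ = f(x)
    (x₀ : ℝ → EuclideanSpace ℝ (Fin n))
    (hx₀ : ∀ t, HasDerivAt x₀ (f (x₀ t)) t)
    (hx₀per : Function.Periodic x₀ T)
    (Y : ℝ → (EuclideanSpace ℝ (Fin n) →L[ℝ] EuclideanSpace ℝ (Fin n)))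
    (hY0 : Y 0 = ContinuousLinearMap.id ℝ _)
    (hY : ∀ t, HasDerivAt Y ((fderiv ℝ f (x₀ t)).comp (Y t)) t)
    (hnondeg : Module.finrank ℝ
      ↥(⨆ k : ℕ, LinearMap.ker
        (((Y T : Module.End ℝ (EuclideanSpace ℝ (Fin n))) - 1) ^ k)) = 1)
    -- x_ε are T-periodic solutions of the perturbed system with ‖x_ε(·+Δ_ε) − x₀‖ ≤ Mε
    (x : ℝ → ℝ → EuclideanSpace ℝ (Fin n)) (Δ : ℝ → ℝ)
    (M ε₀ : ℝ) (hM : 0 < M) (hε₀ : 0 < ε₀)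
    (hx : ∀ ε ∈ Set.Ioc 0 ε₀, ∀ t,
      HasDerivAt (x ε) (f (x ε t) + ε • g t (x ε t) ε) t)
    (hxper : ∀ ε ∈ Set.Ioc 0 ε₀, Function.Periodic (x ε) T)
    (hΔ : Filter.Tendsto Δ (nhdsWithin 0 (Set.Ioi 0)) (nhds 0))
    (hbound : ∀ ε ∈ Set.Ioc 0 ε₀, ∀ t ∈ Set.Icc (0:ℝ) T,
      ‖x ε (t + Δ ε) - x₀ t‖ ≤ M * ε)
    -- the adjoint system has n linearly independent Floquet eigenfunctions
    (zs : Fin n → ℝ → EuclideanSpace ℝ (Fin n)) (ρs : Fin n → ℝ)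
    (hzs : ∀ i t, HasDerivAt (zs i)
      (-(ContinuousLinearMap.adjoint (fderiv ℝ f (x₀ t))) (zs i t)) t)
    (hzsF : ∀ i t, zs i (t + T) = ρs i • zs i t)
    (hind : LinearIndependent ℝ (fun i => zs i 0))
    -- the flow and the transversal surface S of Corollary 2.2
    (Ω : ℝ → ℝ → EuclideanSpace ℝ (Fin n) → EuclideanSpace ℝ (Fin n))
    (hΩ_init : ∀ t₀ ξ, Ω t₀ t₀ ξ = ξ)
    (hΩ_sol : ∀ t t₀ ξ, HasDerivAt (fun s => Ω s t₀ ξ) (f (Ω t t₀ ξ)) t)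
    (A : EuclideanSpace ℝ (Fin (n - 1)) →L[ℝ] EuclideanSpace ℝ (Fin n))
    (hA : ∀ (c : ℝ) (w : EuclideanSpace ℝ (Fin (n - 1))),
      c • f (x₀ 0) + A w = 0 → c = 0 ∧ w = 0)
    (S : EuclideanSpace ℝ (Fin (n - 1)) → EuclideanSpace ℝ (Fin n))
    (hS : ∀ w, S w = Ω T 0 (x₀ 0 + A w))
    -- the shifts Δ_ε are defined by intersecting x_ε with S: x_ε(Δ_ε) = S(v_ε), v_ε → 0
    (v : ℝ → EuclideanSpace ℝ (Fin (n - 1)))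
    (hv : ∀ ε ∈ Set.Ioc 0 ε₀, x ε (Δ ε) = S (v ε))
    (hv0 : Filter.Tendsto v (nhdsWithin 0 (Set.Ioi 0)) (nhds 0))
 :
    ∃ α : ℝ, 0 < α ∧ ∃ ε₁ > 0, ∀ ε ∈ Set.Ioc 0 (min ε₁ ε₀),
      x ε (Δ ε) ≠ x₀ 0 →
      ∃ (z : ℝ → EuclideanSpace ℝ (Fin n)) (ρ : ℝ),
        (∀ t, HasDerivAt z
          (-(ContinuousLinearMap.adjoint (fderiv ℝ f (x₀ t))) (z t)) t) ∧
        (∀ t, z (t + T) = ρ • z t) ∧ ρ ≠ 1 ∧ z ≠ 0 ∧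
        |(inner ℝ (z 0) (x ε (Δ ε) - x₀ 0) : ℝ)| /
          (‖z 0‖ * ‖x ε (Δ ε) - x₀ 0‖) ≥ α := by
  classical
  by_contra hcon
  push_neg at hcon
  -- basic facts
  have he : f (x₀ 0) ≠ 0 := by
    intro h
    have h10 : (1:ℝ) • f (x₀ 0) + A 0 = 0 := by simp [h]
    exact one_ne_zero (hA 1 0 h10).1
  have hx₀T : x₀ T = x₀ 0 := by simpa using hx₀per 0
  have hfx₀ : ∀ t, HasDerivAt (fun s => f (x₀ s)) (fderiv ℝ f (x₀ t) (f (x₀ t))) t := by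
    intro t
    exact (((hf.differentiable one_ne_zero) (x₀ t)).hasFDerivAt).comp_hasDerivAt t (hx₀ t)
  -- L1 : eigenfunctions with ρ ≠ 1 are orthogonal to f (x₀ 0)
  have hL1 : ∀ i : Fin n, ρs i ≠ 1 → (inner ℝ (zs i 0) (f (x₀ 0)) : ℝ) = 0 := by
    intro i hi
    have hder : ∀ t, HasDerivAt (fun s => (inner ℝ (zs i s) (f (x₀ s)) : ℝ)) 0 t := by
      intro t
      have h := pairing_hasDerivAt (hzs i t) (hfx₀ t)
      simpa using h
    have hc := const_of_hasDerivAt_zero hder T 0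
    have hzT : zs i T = ρs i • zs i 0 := by simpa using hzsF i 0
    rw [hzT, hx₀T, real_inner_smul_left] at hc
    have hfac : (ρs i - 1) * (inner ℝ (zs i 0) (f (x₀ 0)) : ℝ) = 0 := by
      rw [sub_mul, one_mul, hc, sub_self]
    rcases mul_eq_zero.mp hfac with h | h
    · exact absurd (by linarith : ρs i = 1) hi
    · exact h
  -- L2 : at most one index with ρ = 1
  have hYu : ∀ (u : EuclideanSpace ℝ (Fin n)) t, HasDerivAt (fun s => Y s u)
      (fderiv ℝ f (x₀ t) (Y t u)) t := by
    intro u t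
    have h := (hY t).clm_apply (hasDerivAt_const t u)
    simpa using h
  have hone : ∀ i j : Fin n, ρs i = 1 → ρs j = 1 → i = j := by
    intro i j hi hj
    by_contra hij
    have hperp : ∀ m : Fin n, ρs m = 1 →
        zs m 0 ∈ (LinearMap.range
          ((Y T : Module.End ℝ (EuclideanSpace ℝ (Fin n))) - 1))ᗮ := by
      intro m hm
      rw [Submodule.mem_orthogonal]
      rintro u' hu'
      obtain ⟨u, rfl⟩ := hu'
      have hder : ∀ t, HasDerivAt (fun s => (inner ℝ (zs m s) (Y s u) : ℝ)) 0 t := by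
        intro t
        have h := pairing_hasDerivAt (hzs m t) (hYu u t)
        simpa using h
      have hc := const_of_hasDerivAt_zero hder T 0
      have hzT : zs m T = zs m 0 := by
        have h := hzsF m 0
        simpa [hm] using h
      rw [hzT, hY0] at hc
      simp only [ContinuousLinearMap.id_apply] at hc
      have happ : (((Y T : Module.End ℝ (EuclideanSpace ℝ (Fin n))) - 1)) u
          = Y T u - u := by
        simp [LinearMap.sub_apply]
      rw [happ, inner_sub_left]
      linarith [real_inner_comm ((Y T) u) (zs m 0), real_inner_comm u (zs m 0), hc]
    set B := (Y T : Module.End ℝ (EuclideanSpace ℝ (Fin n))) - 1 with hBdef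
    have hker_le : LinearMap.ker B ≤ ⨆ k : ℕ, LinearMap.ker (B ^ k) := by
      have h := le_iSup (fun k : ℕ => LinearMap.ker (B ^ k)) 1
      simpa [pow_one] using h
    have hker1 : Module.finrank ℝ (LinearMap.ker B) ≤ 1 := by
      rw [← hnondeg]
      exact Submodule.finrank_mono hker_le
    have hrank : Module.finrank ℝ (LinearMap.range B) + Module.finrank ℝ (LinearMap.ker B)
        = n := by
      have h := LinearMap.finrank_range_add_finrank_ker B
      rwa [finrank_euclideanSpace_fin] at h
    have horth : Module.finrank ℝ (LinearMap.range B)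
        + Module.finrank ℝ ((LinearMap.range B)ᗮ) = n := by
      have h := Submodule.finrank_add_finrank_orthogonal (LinearMap.range B)
      rwa [finrank_euclideanSpace_fin] at h
    have hperp_rank : Module.finrank ℝ ((LinearMap.range B)ᗮ) ≤ 1 := by omega
    have hinj : Function.Injective ![i, j] := by
      intro a b hab
      fin_cases a <;> fin_cases b <;>
        simp only [Matrix.cons_val_zero, Matrix.cons_val_one, Matrix.head_cons] at hab <;>
        first
          | rfl
          | exact absurd hab hij
          | exact absurd hab.symm hij
    have hpairind : LinearIndependent ℝ (fun b : Fin 2 => zs (![i, j] b) 0) :=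
      hind.comp ![i, j] hinj
    have hspan_le2 : Submodule.span ℝ (Set.range fun b : Fin 2 => zs (![i, j] b) 0)
        ≤ (LinearMap.range B)ᗮ := by
      rw [Submodule.span_le]
      rintro _ ⟨b, rfl⟩
      fin_cases b
      · exact hperp i hi
      · exact hperp j hj
    have h2le : (2:ℕ) ≤ 1 := by
      have hc2 := finrank_span_eq_card hpairind
      rw [Fintype.card_fin] at hc2
      calc (2:ℕ) = Module.finrank ℝ
            (Submodule.span ℝ (Set.range fun b : Fin 2 => zs (![i, j] b) 0)) := hc2.symm
        _ ≤ Module.finrank ℝ ((LinearMap.range B)ᗮ) := Submodule.finrank_mono hspan_le2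
        _ ≤ 1 := hperp_rank
    omega
  -- Lipschitz tube setup
  have hcx₀ : Continuous x₀ := continuous_iff_continuousAt.mpr fun t => (hx₀ t).continuousAt
  obtain ⟨K1, hlip, hballK⟩ := tube_lipschitz f hf x₀ hcx₀ T hT hx₀per
  set Kset := Metric.cthickening 1 (x₀ '' Set.Icc 0 T) with hKsetdef
  have hKc : IsCompact Kset := (isCompact_Icc.image hcx₀).cthickening
  set C := Real.exp ((K1:ℝ) * T) with hCdef
  have hC1 : 1 ≤ C := Real.one_le_exp (mul_nonneg K1.coe_nonneg hT.le)
  have hCpos : 0 < C := lt_of_lt_of_le zero_lt_one hC1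
  -- choose the bad sequence
  have H : ∀ k : ℕ, ∃ ε : ℝ, (ε ∈ Set.Ioc 0 (min (1/((k:ℝ)+1)) ε₀)) ∧ x ε (Δ ε) ≠ x₀ 0 ∧
      ∀ i : Fin n, ρs i ≠ 1 →
        |(inner ℝ (zs i 0) (x ε (Δ ε) - x₀ 0) : ℝ)| / (‖zs i 0‖ * ‖x ε (Δ ε) - x₀ 0‖)
          < 1/((k:ℝ)+1) := by
    intro k
    obtain ⟨ε, hε1, hε2, hε3⟩ := hcon (1/((k:ℝ)+1)) (by positivity) (1/((k:ℝ)+1)) (by positivity)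
    refine ⟨ε, hε1, hε2, fun i hi => ?_⟩
    have hzne : zs i ≠ (0 : ℝ → EuclideanSpace ℝ (Fin n)) := by
      intro hzero
      exact hind.ne_zero i (by rw [hzero]; rfl)
    exact hε3 (zs i) (ρs i) (hzs i) (hzsF i) hi hzne
  choose εs hεs1 hεs2 hεs3 using H
  have hεpos : ∀ k, 0 < εs k := fun k => (hεs1 k).1
  have hεk : ∀ k, εs k ≤ 1/((k:ℝ)+1) := fun k => le_trans (hεs1 k).2 (min_le_left _ _)
  have hεmem : ∀ k, εs k ∈ Set.Ioc 0 ε₀ :=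
    fun k => ⟨hεpos k, le_trans (hεs1 k).2 (min_le_right _ _)⟩
  have hεs0 : Filter.Tendsto εs Filter.atTop (nhdsWithin 0 (Set.Ioi 0)) := by
    rw [tendsto_nhdsWithin_iff]
    refine ⟨?_, Filter.Eventually.of_forall fun k => hεpos k⟩
    exact tendsto_of_tendsto_of_tendsto_of_le_of_le tendsto_const_nhds
      tendsto_one_div_add_atTop_nhds_zero_nat (fun k => (hεpos k).le) hεk
  set wk : ℕ → EuclideanSpace ℝ (Fin n) := fun k => A (v (εs k)) with hwkdef
  have hw0 : Filter.Tendsto wk Filter.atTop (nhds 0) := by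
    have h1 := hv0.comp hεs0
    have h2 := (A.continuous.tendsto 0).comp h1
    simpa [hwkdef, Function.comp_def] using h2
  set yk : ℕ → EuclideanSpace ℝ (Fin n) := fun k => x (εs k) (Δ (εs k)) - x₀ 0 with hykdef
  have hykne : ∀ k, yk k ≠ 0 := fun k => sub_ne_zero.mpr (hεs2 k)
  set uk : ℕ → ℝ → EuclideanSpace ℝ (Fin n) := fun k t => Ω t 0 (x₀ 0 + wk k) with hukdef
  have huk0 : ∀ k, uk k 0 = x₀ 0 + wk k := fun k => hΩ_init 0 _
  have hukT : ∀ k, uk k T = x₀ 0 + yk k := by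
    intro k
    have h1 : x (εs k) (Δ (εs k)) = S (v (εs k)) := hv _ (hεmem k)
    have h2 : uk k T = S (v (εs k)) := by rw [hS]
    rw [h2, ← h1, hykdef]
    simp only []
    rw [add_comm, sub_add_cancel]
  -- Gronwall estimates
  have hu' : ∀ k t, HasDerivAt (uk k) (f (uk k t)) t := by
    intro k t
    simpa [hukdef] using hΩ_sol t 0 (x₀ 0 + wk k)
  have hgron : ∀ k, ‖wk k‖ * C < 1 → ∀ t ∈ Set.Icc (0:ℝ) T,
      ‖uk k t - x₀ t‖ ≤ ‖wk k‖ * Real.exp ((K1:ℝ) * t) := by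
    intro k hk t ht
    have h0 : dist (uk k 0) (x₀ 0) ≤ ‖wk k‖ := by
      rw [dist_eq_norm, huk0 k]
      simp
    have hsm : ‖wk k‖ * Real.exp ((K1:ℝ) * T) < 1 := by rw [← hCdef]; exact hk
    have h := gronwall_tube f x₀ (uk k) K1 T (‖wk k‖) hT.le hlip hx₀
      (hu' k) h0 hsm t ht
    rwa [dist_eq_norm] at h
  have hexpC : ∀ t ∈ Set.Icc (0:ℝ) T, Real.exp ((K1:ℝ) * t) ≤ C := by
    intro t ht
    rw [hCdef]
    exact Real.exp_le_exp.mpr (mul_le_mul_of_nonneg_left ht.2 K1.coe_nonneg)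
  have hdk : ∀ k, ‖wk k‖ * C < 1 → ∀ t ∈ Set.Icc (0:ℝ) T,
      ‖uk k t - x₀ t‖ ≤ C * ‖wk k‖ := by
    intro k hk t ht
    refine (hgron k hk t ht).trans ?_
    rw [mul_comm]
    exact mul_le_mul_of_nonneg_right (hexpC t ht) (norm_nonneg _)
  have hyleq : ∀ k, ‖wk k‖ * C < 1 → ‖yk k‖ ≤ C * ‖wk k‖ := by
    intro k hk
    have h := hdk k hk T ⟨hT.le, le_refl T⟩
    rwa [hukT k, hx₀T, add_sub_cancel_left] at h
  have hwne : ∀ k, wk k ≠ 0 := by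
    intro k hk0
    have hsm : ‖wk k‖ * C < 1 := by rw [hk0]; simpa using zero_lt_one
    have h := hyleq k hsm
    rw [hk0] at h
    simp only [norm_zero, mul_zero] at h
    exact hykne k (norm_le_zero_iff.mp h)
  -- angle smallness
  have habs : ∀ k (i : Fin n), ρs i ≠ 1 →
      |(inner ℝ (zs i 0) (yk k) : ℝ)| ≤ ‖zs i 0‖ * ‖yk k‖ / ((k:ℝ)+1) := by
    intro k i hi
    have h3 := hεs3 k i hi
    have hzpos : 0 < ‖zs i 0‖ := norm_pos_iff.mpr (hind.ne_zero i)
    have hypos : 0 < ‖yk k‖ := norm_pos_iff.mpr (hykne k)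
    have hpos : 0 < ‖zs i 0‖ * ‖yk k‖ := mul_pos hzpos hypos
    have hk1 : (0:ℝ) < (k:ℝ)+1 := by positivity
    rw [div_lt_div_iff₀ hpos hk1] at h3
    rw [le_div_iff₀ hk1]
    linarith
  -- bounds on eigenfunctions
  have hzc : ∀ i : Fin n, Continuous (zs i) :=
    fun i => continuous_iff_continuousAt.mpr fun t => (hzs i t).continuousAt
  have hZb : ∀ i : Fin n, ∃ Z : ℝ, 0 ≤ Z ∧ ∀ t ∈ Set.Icc (0:ℝ) T, ‖zs i t‖ ≤ Z := by
    intro i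
    obtain ⟨tm, htm, hmax⟩ := isCompact_Icc.exists_isMaxOn (Set.nonempty_Icc.mpr hT.le)
      ((hzc i).norm.continuousOn : ContinuousOn (fun t => ‖zs i t‖) (Set.Icc 0 T))
    exact ⟨‖zs i tm‖, norm_nonneg _, fun t ht => hmax ht⟩
  -- the ψ estimate
  have hψ : ∀ (i : Fin n) (Zi : ℝ) (k : ℕ) (Bd : ℝ),
      (∀ t ∈ Set.Icc (0:ℝ) T, ‖zs i t‖ ≤ Zi) → 0 ≤ Bd →
      (∀ t ∈ Set.Icc (0:ℝ) T,
        ‖f (uk k t) - f (x₀ t) - fderiv ℝ f (x₀ t) (uk k t - x₀ t)‖ ≤ Bd) →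
      |ρs i * (inner ℝ (zs i 0) (yk k) : ℝ) - (inner ℝ (zs i 0) (wk k) : ℝ)| ≤ Zi * Bd * T := by
    intro i Zi k Bd hZi hBd hrem
    have hZi0 : 0 ≤ Zi := le_trans (norm_nonneg _) (hZi 0 ⟨le_refl 0, hT.le⟩)
    set φ : ℝ → ℝ := fun t => (inner ℝ (zs i t) (uk k t - x₀ t) : ℝ) with hφdef
    set R : ℝ → EuclideanSpace ℝ (Fin n) :=
      fun t => f (uk k t) - f (x₀ t) - fderiv ℝ f (x₀ t) (uk k t - x₀ t) with hRdef
    have hder : ∀ t, HasDerivAt φ ((inner ℝ (zs i t) (R t) : ℝ)) t := by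
      intro t
      have hd : HasDerivAt (fun s => uk k s - x₀ s) (f (uk k t) - f (x₀ t)) t :=
        (hu' k t).sub (hx₀ t)
      have h := pairing_hasDerivAt (hzs i t) hd
      simpa [hRdef, hφdef] using h
    have hbnd : ∀ t ∈ Set.Icc (0:ℝ) T, ‖(inner ℝ (zs i t) (R t) : ℝ)‖ ≤ Zi * Bd := by
      intro t ht
      rw [Real.norm_eq_abs]
      refine (abs_real_inner_le_norm _ _).trans ?_
      exact mul_le_mul (hZi t ht) (hrem t ht) (norm_nonneg _) hZi0
    have key := Convex.norm_image_sub_le_of_norm_hasDerivWithin_le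
      (f := φ) (f' := fun t => (inner ℝ (zs i t) (R t) : ℝ)) (C := Zi * Bd)
      (fun t ht => (hder t).hasDerivWithinAt) hbnd (convex_Icc 0 T)
      (Set.left_mem_Icc.mpr hT.le) (Set.right_mem_Icc.mpr hT.le)
    have hφT : φ T = ρs i * (inner ℝ (zs i 0) (yk k) : ℝ) := by
      have hzT : zs i T = ρs i • zs i 0 := by simpa using hzsF i 0
      rw [hφdef]
      simp only []
      rw [hukT k, hx₀T, hzT, add_sub_cancel_left, real_inner_smul_left]
    have hφ0 : φ 0 = (inner ℝ (zs i 0) (wk k) : ℝ) := by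
      rw [hφdef]
      simp only []
      rw [huk0 k, add_sub_cancel_left]
    rw [hφT, hφ0, Real.norm_eq_abs, sub_zero, Real.norm_eq_abs, abs_of_pos hT] at key
    exact key
  -- key limit
  have hkey : ∀ i : Fin n, ρs i ≠ 1 →
      Filter.Tendsto (fun k => (inner ℝ (zs i 0) (wk k) : ℝ) / ‖wk k‖)
        Filter.atTop (nhds 0) := by
    intro i hi
    obtain ⟨Zi, hZi0, hZi⟩ := hZb i
    rw [NormedAddCommGroup.tendsto_nhds_zero]
    intro ε'' hε''
    have hden : (0:ℝ) < 2 * (Zi * C * T + 1) := by positivity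
    set ε' := ε'' / (2 * (Zi * C * T + 1)) with hε'def
    have hε'pos : 0 < ε' := by positivity
    obtain ⟨δ', hδ'0, hδ'1, hδ'⟩ := remainder_bound f hf Kset hKc ε' hε'pos
    have hnorm0 : Filter.Tendsto (fun k => ‖wk k‖) Filter.atTop (nhds 0) := by
      have h := hw0.norm
      simpa using h
    have hev1 : ∀ᶠ k in Filter.atTop, ‖wk k‖ * C < 1 := by
      have h := hnorm0.eventually_lt_const (show (0:ℝ) < 1/C by positivity)
      filter_upwards [h] with k hk
      rw [← lt_div_iff₀ hCpos]
      exact hk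
    have hev2 : ∀ᶠ k in Filter.atTop, C * ‖wk k‖ ≤ δ' := by
      have h := hnorm0.eventually_lt_const (show (0:ℝ) < δ'/C by positivity)
      filter_upwards [h] with k hk
      rw [mul_comm, ← le_div_iff₀ hCpos]
      exact hk.le
    have hev3 : ∀ᶠ k : ℕ in Filter.atTop,
        |ρs i| * ‖zs i 0‖ * C / ((k:ℝ)+1) < ε''/2 := by
      have htd : Filter.Tendsto (fun k : ℕ => |ρs i| * ‖zs i 0‖ * C * (1/((k:ℝ)+1)))
          Filter.atTop (nhds 0) := by
        simpa using tendsto_one_div_add_atTop_nhds_zero_nat.const_mul (|ρs i| * ‖zs i 0‖ * C)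
      have h := htd.eventually_lt_const (show (0:ℝ) < ε''/2 by positivity)
      filter_upwards [h] with k hk
      calc |ρs i| * ‖zs i 0‖ * C / ((k:ℝ)+1)
          = |ρs i| * ‖zs i 0‖ * C * (1/((k:ℝ)+1)) := by ring
        _ < ε''/2 := hk
    filter_upwards [hev1, hev2, hev3] with k h1 h2 h3
    have hwpos : 0 < ‖wk k‖ := norm_pos_iff.mpr (hwne k)
    have hrem : ∀ t ∈ Set.Icc (0:ℝ) T,
        ‖f (uk k t) - f (x₀ t) - fderiv ℝ f (x₀ t) (uk k t - x₀ t)‖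
          ≤ ε' * (C * ‖wk k‖) := by
      intro t ht
      have hd := hdk k h1 t ht
      have hb := hδ' (uk k t) (x₀ t) (hballK t) (hd.trans h2)
      refine hb.trans ?_
      exact mul_le_mul_of_nonneg_left hd hε'pos.le
    have hψk := hψ i Zi k (ε' * (C * ‖wk k‖)) hZi (by positivity) hrem
    have habsk := habs k i hi
    have hyk' := hyleq k h1
    have hk1 : (0:ℝ) < (k:ℝ)+1 := by positivity
    have t1 : |(inner ℝ (zs i 0) (wk k) : ℝ)| ≤
        |ρs i * (inner ℝ (zs i 0) (yk k) : ℝ)| +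
        |ρs i * (inner ℝ (zs i 0) (yk k) : ℝ) - (inner ℝ (zs i 0) (wk k) : ℝ)| := by
      have heq : (inner ℝ (zs i 0) (wk k) : ℝ) =
          ρs i * (inner ℝ (zs i 0) (yk k) : ℝ) -
          (ρs i * (inner ℝ (zs i 0) (yk k) : ℝ) - (inner ℝ (zs i 0) (wk k) : ℝ)) := by ring
      conv_lhs => rw [heq]
      exact abs_sub _ _
    have t2 : |ρs i * (inner ℝ (zs i 0) (yk k) : ℝ)|
        ≤ |ρs i| * (‖zs i 0‖ * ‖yk k‖ / ((k:ℝ)+1)) := by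
      rw [abs_mul]
      exact mul_le_mul_of_nonneg_left habsk (abs_nonneg _)
    have t3 : |ρs i| * (‖zs i 0‖ * ‖yk k‖ / ((k:ℝ)+1))
        ≤ |ρs i| * (‖zs i 0‖ * (C * ‖wk k‖) / ((k:ℝ)+1)) := by
      gcongr
    have heq2 : |ρs i| * (‖zs i 0‖ * (C * ‖wk k‖) / ((k:ℝ)+1))
        + Zi * (ε' * (C * ‖wk k‖)) * T
        = (|ρs i| * ‖zs i 0‖ * C / ((k:ℝ)+1) + Zi * ε' * C * T) * ‖wk k‖ := by
      field_simp
    have hcomb : |(inner ℝ (zs i 0) (wk k) : ℝ)| ≤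
        (|ρs i| * ‖zs i 0‖ * C / ((k:ℝ)+1) + Zi * ε' * C * T) * ‖wk k‖ := by
      rw [← heq2]
      linarith
    have hfin : |(inner ℝ (zs i 0) (wk k) : ℝ)| / ‖wk k‖ ≤
        |ρs i| * ‖zs i 0‖ * C / ((k:ℝ)+1) + Zi * ε' * C * T := by
      rw [div_le_iff₀ hwpos]
      exact hcomb
    have hlast : Zi * ε' * C * T ≤ ε''/2 := by
      rw [hε'def]
      rw [show Zi * (ε'' / (2 * (Zi * C * T + 1))) * C * T
        = ε'' * (Zi * C * T) / (2 * (Zi * C * T + 1)) by ring]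
      rw [div_le_div_iff₀ hden two_pos]
      nlinarith [mul_nonneg (mul_nonneg hZi0 hCpos.le) hT.le, hε''.le]
    rw [Real.norm_eq_abs, abs_div, abs_norm]
    linarith
  -- extract convergent subsequence of directions
  set what : ℕ → EuclideanSpace ℝ (Fin n) := fun k => (‖wk k‖)⁻¹ • wk k with hwhatdef
  have hwhatmem : ∀ k, what k ∈ Metric.sphere (0 : EuclideanSpace ℝ (Fin n)) 1 := by
    intro k
    rw [mem_sphere_iff_norm, sub_zero, hwhatdef]
    simp only []
    rw [norm_smul, norm_inv, norm_norm, inv_mul_cancel₀ (norm_ne_zero_iff.mpr (hwne k))]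
  obtain ⟨wl, hwlmem, φm, hφm, hconv⟩ :=
    (isCompact_sphere (0 : EuclideanSpace ℝ (Fin n)) 1).tendsto_subseq hwhatmem
  have hwl1 : ‖wl‖ = 1 := by simpa [mem_sphere_iff_norm] using hwlmem
  have hperc : ∀ i : Fin n, ρs i ≠ 1 → (inner ℝ (zs i 0) wl : ℝ) = 0 := by
    intro i hi
    have hcontinner : Continuous fun u : EuclideanSpace ℝ (Fin n) => (inner ℝ (zs i 0) u : ℝ) :=
      continuous_const.inner continuous_id
    have h1 : Filter.Tendsto (fun k => (inner ℝ (zs i 0) (what (φm k)) : ℝ))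
        Filter.atTop (nhds ((inner ℝ (zs i 0) wl : ℝ))) :=
      (hcontinner.tendsto wl).comp hconv
    have h2 : Filter.Tendsto (fun k => (inner ℝ (zs i 0) (what (φm k)) : ℝ))
        Filter.atTop (nhds 0) := by
      have h3 := (hkey i hi).comp hφm.tendsto_atTop
      refine h3.congr fun k => ?_
      rw [hwhatdef]
      simp only [Function.comp]
      rw [real_inner_smul_right, div_eq_inv_mul]
    exact tendsto_nhds_unique h1 h2
  -- wl is in the range of A
  have hwlA : ∃ m, A m = wl := by
    have hcl : IsClosed ((LinearMap.range (A.toLinearMap) :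
        Submodule ℝ (EuclideanSpace ℝ (Fin n))) : Set (EuclideanSpace ℝ (Fin n))) :=
      Submodule.closed_of_finiteDimensional _
    have hmem : wl ∈ (LinearMap.range A.toLinearMap : Submodule ℝ _) := by
      refine hcl.mem_of_tendsto hconv (Filter.Eventually.of_forall fun k => ?_)
      refine ⟨(‖wk (φm k)‖)⁻¹ • v (εs (φm k)), ?_⟩
      simp only [Function.comp, hwhatdef, hwkdef, LinearMap.map_smul,
        ContinuousLinearMap.coe_coe]
    obtain ⟨m, hm⟩ := hmem
    exact ⟨m, hm⟩
  -- dimension count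
  have hcard1 : Fintype.card {i : Fin n // ρs i = 1} ≤ 1 := by
    rw [Fintype.card_le_one_iff]
    intro a b
    exact Subtype.ext (hone a.1 b.1 a.2 b.2)
  have hcardJ : Fintype.card {i : Fin n // ρs i ≠ 1} + 1 ≥ n := by
    have h1 := Fintype.card_subtype_compl (fun i : Fin n => ρs i = 1)
    rw [Fintype.card_fin] at h1
    have h2 : Fintype.card {i : Fin n // ρs i ≠ 1}
        = Fintype.card {i : Fin n // ¬ ρs i = 1} := rfl
    omega
  set W := Submodule.span ℝ (Set.range fun i : {i : Fin n // ρs i ≠ 1} => zs i.1 0) with hWdef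
  have hWrank : Module.finrank ℝ W = Fintype.card {i : Fin n // ρs i ≠ 1} := by
    apply finrank_span_eq_card
    exact hind.comp Subtype.val Subtype.val_injective
  have htot := Submodule.finrank_add_finrank_orthogonal W
  rw [finrank_euclideanSpace_fin, hWrank] at htot
  have hcard_le : Fintype.card {i : Fin n // ρs i ≠ 1} ≤ n := by
    have h := Fintype.card_subtype_le (fun i : Fin n => ρs i ≠ 1)
    rwa [Fintype.card_fin] at h
  have hWperp : Module.finrank ℝ (Wᗮ) ≤ 1 := by omega
  have hmemperp : ∀ u : EuclideanSpace ℝ (Fin n),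
      (∀ i : Fin n, ρs i ≠ 1 → (inner ℝ (zs i 0) u : ℝ) = 0) → u ∈ Wᗮ := by
    intro u hu
    rw [Submodule.mem_orthogonal]
    intro w hw
    induction hw using Submodule.span_induction with
    | mem x hx =>
      obtain ⟨i, rfl⟩ := hx
      exact hu i.1 i.2
    | zero => exact inner_zero_left u
    | add x y hx hy ihx ihy => rw [inner_add_left, ihx, ihy, add_zero]
    | smul a x hx ih => rw [real_inner_smul_left, ih, mul_zero]
  have heW : f (x₀ 0) ∈ Wᗮ := hmemperp _ hL1
  have hwlW : wl ∈ Wᗮ := hmemperp _ hperc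
  have hspan_le : Submodule.span ℝ {f (x₀ 0)} ≤ Wᗮ := by
    rw [Submodule.span_le, Set.singleton_subset_iff]
    exact heW
  have hVeq : Submodule.span ℝ {f (x₀ 0)} = Wᗮ := by
    apply Submodule.eq_of_le_of_finrank_le hspan_le
    rw [finrank_span_singleton he]
    exact hWperp
  have hwlspan : wl ∈ Submodule.span ℝ {f (x₀ 0)} := by rw [hVeq]; exact hwlW
  obtain ⟨m, hm⟩ := hwlA
  obtain ⟨c, hc⟩ := Submodule.mem_span_singleton.mp hwlspan
  have h0 : c • f (x₀ 0) + A (-m) = 0 := by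
    rw [map_neg, hm, hc, add_neg_cancel]
  have hc0 := (hA c (-m) h0).1
  rw [hc0, zero_smul] at hc
  rw [← hc] at hwl1
  simp at hwl1
end

section
/- (Corollary 3.5, avoidance of the base point.) Assume the hypotheses of Theorem 2.3 (x₀ a nondegenerate limit cycle with least period T, x_ε T-periodic solutions converging uniformly to x₀, Δ_ε the shifts from Corollary 2.2). If there exists a not-T-periodic Floquet eigenfunction z of the adjoint system with M⊥_z(0) ≠ 0, then x_ε(t) ≠ x₀(0) for all t ∈ [0,T] and all sufficiently small ε > 0. -/
open intervalIntegral

lemma periodic_apply_toIocMod {β : Type*} {F : ℝ → β} {T : ℝ} (hT : 0 < T)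
    (hF : Function.Periodic F T) (a s : ℝ) : F (toIocMod hT a s) = F s := by
  conv_rhs => rw [← toIocMod_add_toIocDiv_zsmul hT a s]
  exact ((hF.zsmul (toIocDiv hT a s)) (toIocMod hT a s)).symm

lemma taylor_unif {E F : Type*} [NormedAddCommGroup E] [NormedSpace ℝ E] [ProperSpace E]
    [NormedAddCommGroup F] [NormedSpace ℝ F]
    (f : E → F) (hf : ContDiff ℝ 1 f) (R : ℝ) {η : ℝ} (hη : 0 < η) :
    ∃ δ > 0, ∀ q p : E, ‖q‖ ≤ R → ‖p - q‖ ≤ δ →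
      ‖f p - f q - fderiv ℝ f q (p - q)‖ ≤ η * ‖p - q‖ := by
  have hcont : Continuous fun y : E => fderiv ℝ f y := hf.continuous_fderiv one_ne_zero
  have hUC := (isCompact_closedBall (0:E) (R+1)).uniformContinuousOn_of_continuous
      hcont.continuousOn
  rw [Metric.uniformContinuousOn_iff_le] at hUC
  obtain ⟨δ', hδ'pos, hδ'⟩ := hUC η hη
  refine ⟨min δ' 1, by positivity, fun q p hq hpq => ?_⟩
  have hqball : q ∈ Metric.closedBall (0:E) (R+1) := by
    rw [Metric.mem_closedBall, dist_zero_right]; linarith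
  have hsub : ∀ y ∈ Metric.closedBall q (min δ' 1), y ∈ Metric.closedBall (0:E) (R+1) := by
    intro y hy
    rw [Metric.mem_closedBall] at hy ⊢
    have h1 : dist y 0 ≤ dist y q + dist q 0 := dist_triangle _ _ _
    have h2 : dist q 0 ≤ R := by rwa [dist_zero_right]
    have h3 : min δ' 1 ≤ 1 := min_le_right _ _
    linarith
  have hder : ∀ y ∈ Metric.closedBall q (min δ' 1),
      HasFDerivWithinAt (fun y => f y - fderiv ℝ f q y)
      (fderiv ℝ f y - fderiv ℝ f q) (Metric.closedBall q (min δ' 1)) y := fun y _ =>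
    (((hf.differentiable one_ne_zero) y).hasFDerivAt.sub
      (fderiv ℝ f q).hasFDerivAt).hasFDerivWithinAt
  have hbound : ∀ y ∈ Metric.closedBall q (min δ' 1), ‖fderiv ℝ f y - fderiv ℝ f q‖ ≤ η := by
    intro y hy
    have h1 := hδ' y (hsub y hy) q hqball (by
      rw [Metric.mem_closedBall] at hy
      exact le_trans hy (min_le_left _ _))
    rwa [dist_eq_norm] at h1
  have hp : p ∈ Metric.closedBall q (min δ' 1) := by
    rw [Metric.mem_closedBall, dist_eq_norm]; exact hpq
  have hqs : q ∈ Metric.closedBall q (min δ' 1) := Metric.mem_closedBall_self (by positivity)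
  have key := (convex_closedBall q (min δ' 1)).norm_image_sub_le_of_norm_hasFDerivWithin_le
      hder hbound hqs hp
  have heq : f p - fderiv ℝ f q p - (f q - fderiv ℝ f q q)
      = f p - f q - fderiv ℝ f q (p - q) := by
    rw [map_sub]; abel
  rwa [heq] at key

set_option maxHeartbeats 2000000 in
/-- Corollary 3.5, avoidance of the base point: with `T` the least period of
the nondegenerate cycle `x₀`, `x_ε → x₀` uniformly, and `Δ_ε` from the transversal-surface
construction, if some not-`T`-periodic eigenfunction `z` has `M⊥_z(0) ≠ 0` then
`x_ε(t) ≠ x₀(0)` for all `t ∈ [0,T]` and all sufficiently small `ε > 0`. -/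
theorem avoidance_of_base_point
    (n : ℕ) (f : EuclideanSpace ℝ (Fin n) → EuclideanSpace ℝ (Fin n))
    (g : ℝ → EuclideanSpace ℝ (Fin n) → ℝ → EuclideanSpace ℝ (Fin n))
    (hf : ContDiff ℝ 1 f)
    (hg : Continuous fun p : ℝ × EuclideanSpace ℝ (Fin n) × ℝ => g p.1 p.2.1 p.2.2)
    (T : ℝ) (hT : 0 < T)
    (hgper : ∀ t x ε, g (t + T) x ε = g t x ε)
    -- x₀ is a nondegenerate T-periodic limit cycle of ẋ = f(x)
    (x₀ : ℝ → EuclideanSpace ℝ (Fin n))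
    (hx₀ : ∀ t, HasDerivAt x₀ (f (x₀ t)) t)
    (hx₀per : Function.Periodic x₀ T)
    (Y : ℝ → (EuclideanSpace ℝ (Fin n) →L[ℝ] EuclideanSpace ℝ (Fin n)))
    (hY0 : Y 0 = ContinuousLinearMap.id ℝ _)
    (hY : ∀ t, HasDerivAt Y ((fderiv ℝ f (x₀ t)).comp (Y t)) t)
    (hnondeg : Module.finrank ℝ
      ↥(⨆ k : ℕ, LinearMap.ker
        (((Y T : Module.End ℝ (EuclideanSpace ℝ (Fin n))) - 1) ^ k)) = 1)
    -- x_ε are T-periodic solutions of the perturbed system with ‖x_ε(·+Δ_ε) − x₀‖ ≤ Mε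
    (x : ℝ → ℝ → EuclideanSpace ℝ (Fin n)) (Δ : ℝ → ℝ)
    (M ε₀ : ℝ) (hM : 0 < M) (hε₀ : 0 < ε₀)
    (hx : ∀ ε ∈ Set.Ioc 0 ε₀, ∀ t,
      HasDerivAt (x ε) (f (x ε t) + ε • g t (x ε t) ε) t)
    (hxper : ∀ ε ∈ Set.Ioc 0 ε₀, Function.Periodic (x ε) T)
    (hΔ : Filter.Tendsto Δ (nhdsWithin 0 (Set.Ioi 0)) (nhds 0))
    (hbound : ∀ ε ∈ Set.Ioc 0 ε₀, ∀ t ∈ Set.Icc (0:ℝ) T,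
      ‖x ε (t + Δ ε) - x₀ t‖ ≤ M * ε)
    -- T is the least period of x₀
    (hleast : ∀ s ∈ Set.Ioo (0:ℝ) T, ¬ Function.Periodic x₀ s)
    -- x_ε → x₀ uniformly as ε → 0⁺
    (hconv : TendstoUniformly (fun ε => x ε) x₀ (nhdsWithin 0 (Set.Ioi 0)))
    -- the flow and the transversal surface S of Corollary 2.2
    (Ω : ℝ → ℝ → EuclideanSpace ℝ (Fin n) → EuclideanSpace ℝ (Fin n))
    (hΩ_init : ∀ t₀ ξ, Ω t₀ t₀ ξ = ξ)
    (hΩ_sol : ∀ t t₀ ξ, HasDerivAt (fun s => Ω s t₀ ξ) (f (Ω t t₀ ξ)) t)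
    (A : EuclideanSpace ℝ (Fin (n - 1)) →L[ℝ] EuclideanSpace ℝ (Fin n))
    (hA : ∀ (c : ℝ) (w : EuclideanSpace ℝ (Fin (n - 1))),
      c • f (x₀ 0) + A w = 0 → c = 0 ∧ w = 0)
    (S : EuclideanSpace ℝ (Fin (n - 1)) → EuclideanSpace ℝ (Fin n))
    (hS : ∀ w, S w = Ω T 0 (x₀ 0 + A w))
    -- the shifts Δ_ε are defined by intersecting x_ε with S: x_ε(Δ_ε) = S(v_ε), v_ε → 0
    (v : ℝ → EuclideanSpace ℝ (Fin (n - 1)))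
    (hv : ∀ ε ∈ Set.Ioc 0 ε₀, x ε (Δ ε) = S (v ε))
    (hv0 : Filter.Tendsto v (nhdsWithin 0 (Set.Ioi 0)) (nhds 0))
    -- z is a not T-periodic Floquet eigenfunction of the adjoint system, multiplier ρ ≠ 1
    (z : ℝ → EuclideanSpace ℝ (Fin n)) (ρ : ℝ)
    (hz : ∀ t, HasDerivAt z (-(ContinuousLinearMap.adjoint (fderiv ℝ f (x₀ t))) (z t)) t)
    (hzF : ∀ t, z (t + T) = ρ • z t)
    (hρ : ρ ≠ 1) (hz0 : z ≠ 0)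
    (hMz0 : ((ρ / (ρ - 1)) * ∫ s in (-T)..(0:ℝ), (inner ℝ (z s) (g s (x₀ s) 0) : ℝ)) ≠ 0) :
    ∃ ε₁ > 0, ∀ ε ∈ Set.Ioc 0 (min ε₁ ε₀), ∀ t ∈ Set.Icc (0:ℝ) T, x ε t ≠ x₀ 0 := by
  classical
  -- basic continuity facts
  have cx₀ : Continuous x₀ := by
    rw [continuous_iff_continuousAt]; exact fun t => (hx₀ t).continuousAt
  have cz : Continuous z := by
    rw [continuous_iff_continuousAt]; exact fun t => (hz t).continuousAt
  have cf : Continuous f := hf.continuous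
  have cA : Continuous fun t => fderiv ℝ f (x₀ t) :=
    (hf.continuous_fderiv one_ne_zero).comp cx₀
  have cxε : ∀ ε ∈ Set.Ioc 0 ε₀, Continuous (x ε) := fun ε hε => by
    rw [continuous_iff_continuousAt]; exact fun t => (hx ε hε t).continuousAt
  have cg0 : Continuous fun t => g t (x₀ t) 0 :=
    hg.comp (continuous_id.prodMk (cx₀.prodMk continuous_const))
  have cF : Continuous fun s => (inner ℝ (z s) (g s (x₀ s) 0) : ℝ) := cz.inner cg0
  -- ρ ≠ 0 and the Melnikov integral over [0,T] is nonzero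
  have hρ0 : ρ ≠ 0 := by
    rintro rfl; simp at hMz0
  have hFshift : ∀ s : ℝ,
      (inner ℝ (z (s - T)) (g (s - T) (x₀ (s - T)) 0) : ℝ)
        = ρ⁻¹ * (inner ℝ (z s) (g s (x₀ s) 0) : ℝ) := by
    intro s
    have hz' : z s = ρ • z (s - T) := by
      have := hzF (s - T); rwa [sub_add_cancel] at this
    have hx' : x₀ (s - T) = x₀ s := by
      have := hx₀per (s - T); rw [sub_add_cancel] at this; exact this.symm
    have hg' : g (s - T) (x₀ (s - T)) 0 = g s (x₀ s) 0 := by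
      rw [hx']
      have := hgper (s - T) (x₀ s) 0; rw [sub_add_cancel] at this; exact this.symm
    rw [hg']
    have : (inner ℝ (z s) (g s (x₀ s) 0) : ℝ)
        = ρ * (inner ℝ (z (s - T)) (g s (x₀ s) 0) : ℝ) := by
      rw [hz', real_inner_smul_left]
    rw [this]
    field_simp
  have hJrel : (∫ s in (-T)..(0:ℝ), (inner ℝ (z s) (g s (x₀ s) 0) : ℝ))
      = ρ⁻¹ * ∫ s in (0:ℝ)..T, (inner ℝ (z s) (g s (x₀ s) 0) : ℝ) := by
    have h1 := intervalIntegral.integral_comp_sub_right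
      (a := (0:ℝ)) (b := T) (fun s => (inner ℝ (z s) (g s (x₀ s) 0) : ℝ)) T
    rw [zero_sub, sub_self] at h1
    rw [← h1]
    simp only [hFshift]
    rw [intervalIntegral.integral_const_mul]
  have hJ : (∫ s in (0:ℝ)..T, (inner ℝ (z s) (g s (x₀ s) 0) : ℝ)) ≠ 0 := by
    intro h
    apply right_ne_zero_of_mul hMz0
    rw [hJrel, h, mul_zero]
  set J : ℝ := ∫ s in (0:ℝ)..T, (inner ℝ (z s) (g s (x₀ s) 0) : ℝ) with hJdef
  -- global bounds
  obtain ⟨R, hR⟩ : ∃ R, ∀ s, ‖x₀ s‖ ≤ R := by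
    obtain ⟨R, hR⟩ := (isCompact_Icc : IsCompact (Set.Icc (0:ℝ) T)).exists_bound_of_continuousOn
      cx₀.continuousOn
    refine ⟨R, fun s => ?_⟩
    rw [← periodic_apply_toIocMod hT hx₀per 0 s]
    refine hR _ ?_
    have h1 := toIocMod_mem_Ioc hT 0 s
    exact ⟨le_of_lt h1.1, by simpa using h1.2⟩
  have hR0 : 0 ≤ R := le_trans (norm_nonneg _) (hR 0)
  obtain ⟨L, hL⟩ : ∃ L, ∀ s, ‖f (x₀ s)‖ ≤ L := by
    obtain ⟨L, hL⟩ := (isCompact_Icc : IsCompact (Set.Icc (0:ℝ) T)).exists_bound_of_continuousOn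
      (cf.comp cx₀).continuousOn
    refine ⟨L, fun s => ?_⟩
    rw [show f (x₀ s) = (f ∘ x₀) s from rfl, ← periodic_apply_toIocMod hT (hx₀per.comp f) 0 s]
    refine hL _ ?_
    have h1 := toIocMod_mem_Ioc hT 0 s
    exact ⟨le_of_lt h1.1, by simpa using h1.2⟩
  have hL0 : 0 ≤ L := le_trans (norm_nonneg _) (hL 0)
  have hx₀lip : ∀ a b : ℝ, ‖x₀ a - x₀ b‖ ≤ L * |a - b| := by
    intro a b
    have := (convex_univ : Convex ℝ (Set.univ : Set ℝ)).norm_image_sub_le_of_norm_hasDerivWithin_le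
      (f := x₀) (f' := fun t => f (x₀ t))
      (fun t _ => (hx₀ t).hasDerivWithinAt) (fun t _ => hL t)
      (Set.mem_univ b) (Set.mem_univ a)
    simpa [Real.norm_eq_abs] using this
  obtain ⟨Z, hZ⟩ : ∃ Z, ∀ t ∈ Set.Icc (-T) (2*T), ‖z t‖ ≤ Z :=
    (isCompact_Icc).exists_bound_of_continuousOn cz.continuousOn
  have hZ0 : 0 ≤ Z := le_trans (norm_nonneg _) (hZ 0 ⟨by linarith, by linarith⟩)
  obtain ⟨G, hG⟩ : ∃ G, ∀ t ∈ Set.Icc (-T) (2*T), ‖g t (x₀ t) 0‖ ≤ G :=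
    (isCompact_Icc).exists_bound_of_continuousOn cg0.continuousOn
  have hG0 : 0 ≤ G := le_trans (norm_nonneg _) (hG 0 ⟨by linarith, by linarith⟩)
  have hFb : ∀ t ∈ Set.Icc (-T) (2*T), |(inner ℝ (z t) (g t (x₀ t) 0) : ℝ)| ≤ Z * G := by
    intro t ht
    refine le_trans (abs_real_inner_le_norm _ _) ?_
    exact mul_le_mul (hZ t ht) (hG t ht) (norm_nonneg _) hZ0
  -- f (x₀ 0) ≠ 0
  have hfx₀ : f (x₀ 0) ≠ 0 := by
    intro h
    have := hA 1 0 (by rw [h]; simp)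
    exact one_ne_zero this.1
  set ν : ℝ := ‖f (x₀ 0)‖ with hνdef
  have hν : 0 < ν := norm_pos_iff.mpr hfx₀
  -- claim A: quantitative injectivity near 0
  obtain ⟨δ₀, hδ₀pos, hδ₀T, claimA⟩ :
      ∃ δ₀ > 0, δ₀ ≤ T/4 ∧ ∀ s : ℝ, |s| ≤ δ₀ → ν/2 * |s| ≤ ‖x₀ s - x₀ 0‖ := by
    have hcont2 : Continuous fun s => (inner ℝ (f (x₀ 0)) (f (x₀ s)) : ℝ) :=
      continuous_const.inner (cf.comp cx₀)
    have hval : (inner ℝ (f (x₀ 0)) (f (x₀ 0)) : ℝ) = ν * ν := by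
      rw [hνdef]; exact real_inner_self_eq_norm_mul_norm _
    have hca := hcont2.continuousAt (x := 0)
    rw [Metric.continuousAt_iff] at hca
    obtain ⟨δ', hδ'pos, hδ'⟩ := hca (ν*ν/2) (by positivity)
    refine ⟨min (δ'/2) (T/4), by positivity, min_le_right _ _, ?_⟩
    have hlow : ∀ r : ℝ, |r| ≤ min (δ'/2) (T/4) →
        ν*ν/2 ≤ (inner ℝ (f (x₀ 0)) (f (x₀ r)) : ℝ) := by
      intro r hr
      have h1 : dist r 0 < δ' := by
        rw [Real.dist_eq, sub_zero]
        have h2 : min (δ'/2) (T/4) ≤ δ'/2 := min_le_left _ _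
        have h3 := abs_nonneg r
        calc |r| ≤ δ'/2 := le_trans hr h2
          _ < δ' := by linarith
      have h2 := hδ' h1
      rw [Real.dist_eq, hval] at h2
      have h3 := abs_lt.mp h2
      linarith [h3.1]
    have hder : ∀ r : ℝ, HasDerivAt (fun r => (inner ℝ (f (x₀ 0)) (x₀ r - x₀ 0) : ℝ))
        ((inner ℝ (f (x₀ 0)) (f (x₀ r)) : ℝ)) r := by
      intro r
      have h1 : HasDerivAt (fun r => x₀ r - x₀ 0) (f (x₀ r)) r := (hx₀ r).sub_const _
      have h2 := (hasDerivAt_const r (f (x₀ 0))).inner ℝ h1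
      simpa using h2
    intro s hs
    have hFTC : (inner ℝ (f (x₀ 0)) (x₀ s - x₀ 0) : ℝ)
        = ∫ r in (0:ℝ)..s, (inner ℝ (f (x₀ 0)) (f (x₀ r)) : ℝ) := by
      rw [intervalIntegral.integral_eq_sub_of_hasDerivAt (fun r _ => hder r)
        (hcont2.intervalIntegrable _ _)]
      simp
    have hCS : |(inner ℝ (f (x₀ 0)) (x₀ s - x₀ 0) : ℝ)| ≤ ν * ‖x₀ s - x₀ 0‖ := by
      rw [hνdef]; exact abs_real_inner_le_norm _ _
    have hmain : ν*ν/2 * |s| ≤ |(inner ℝ (f (x₀ 0)) (x₀ s - x₀ 0) : ℝ)| := by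
      rcases le_or_gt 0 s with hs0 | hs0
      · have h2 : ∫ r in (0:ℝ)..s, (ν*ν/2 : ℝ)
            ≤ ∫ r in (0:ℝ)..s, (inner ℝ (f (x₀ 0)) (f (x₀ r)) : ℝ) := by
          apply intervalIntegral.integral_mono_on hs0 intervalIntegrable_const
            (hcont2.intervalIntegrable _ _)
          intro r hr
          refine hlow r ?_
          rw [abs_of_nonneg hr.1]
          refine le_trans hr.2 ?_
          rwa [abs_of_nonneg hs0] at hs
        rw [intervalIntegral.integral_const, smul_eq_mul] at h2
        rw [← hFTC] at h2
        calc ν*ν/2 * |s| = (s - 0) * (ν*ν/2) := by rw [abs_of_nonneg hs0]; ring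
          _ ≤ (inner ℝ (f (x₀ 0)) (x₀ s - x₀ 0) : ℝ) := h2
          _ ≤ |(inner ℝ (f (x₀ 0)) (x₀ s - x₀ 0) : ℝ)| := le_abs_self _
      · have hFTC2 : (inner ℝ (f (x₀ 0)) (x₀ s - x₀ 0) : ℝ)
            = - ∫ r in s..(0:ℝ), (inner ℝ (f (x₀ 0)) (f (x₀ r)) : ℝ) := by
          rw [← intervalIntegral.integral_symm]
          exact hFTC
        have h2 : ∫ r in s..(0:ℝ), (ν*ν/2 : ℝ)
            ≤ ∫ r in s..(0:ℝ), (inner ℝ (f (x₀ 0)) (f (x₀ r)) : ℝ) := by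
          apply intervalIntegral.integral_mono_on (le_of_lt hs0) intervalIntegrable_const
            (hcont2.intervalIntegrable _ _)
          intro r hr
          refine hlow r ?_
          rw [abs_le]
          have h3 := abs_le.mp hs
          constructor
          · linarith [hr.1, h3.1]
          · have h5 : 0 < min (δ'/2) (T/4) := by positivity
            linarith [hr.2]
        rw [intervalIntegral.integral_const, smul_eq_mul] at h2
        calc ν*ν/2 * |s| = (0 - s) * (ν*ν/2) := by rw [abs_of_neg hs0]; ring
          _ ≤ -(inner ℝ (f (x₀ 0)) (x₀ s - x₀ 0) : ℝ) := by rw [hFTC2]; linarith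
          _ ≤ |(inner ℝ (f (x₀ 0)) (x₀ s - x₀ 0) : ℝ)| := neg_le_abs _
    have h4 : ν * (ν/2 * |s|) ≤ ν * ‖x₀ s - x₀ 0‖ := by
      calc ν * (ν/2 * |s|) = ν*ν/2 * |s| := by ring
        _ ≤ |(inner ℝ (f (x₀ 0)) (x₀ s - x₀ 0) : ℝ)| := hmain
        _ ≤ ν * ‖x₀ s - x₀ 0‖ := hCS
    exact le_of_mul_le_mul_left h4 hν
  -- injectivity of the cycle on (0,T)
  have hinj : ∀ s : ℝ, 0 < s → s < T → x₀ s ≠ x₀ 0 := by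
    intro s hs0 hsT heq
    refine hleast s ⟨hs0, hsT⟩ ?_
    obtain ⟨Cf, hCf⟩ := (isCompact_closedBall (0 : EuclideanSpace ℝ (Fin n))
      R).exists_bound_of_continuousOn (hf.continuous_fderiv one_ne_zero).continuousOn
    have hlip : LipschitzOnWith (Real.toNNReal Cf) f
        (Metric.closedBall (0 : EuclideanSpace ℝ (Fin n)) R) := by
      apply Convex.lipschitzOnWith_of_nnnorm_fderiv_le
        (fun y _ => (hf.differentiable one_ne_zero) y) ?_ (convex_closedBall _ _)
      intro y hy
      have h1 : ‖fderiv ℝ f y‖ ≤ Cf := hCf y hy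
      have h2 : ‖fderiv ℝ f y‖ ≤ ((Real.toNNReal Cf : NNReal) : ℝ) :=
        le_trans h1 (Real.le_coe_toNNReal Cf)
      rw [← NNReal.coe_le_coe, coe_nnnorm]
      exact h2
    have hmem : ∀ r : ℝ, x₀ r ∈ Metric.closedBall (0 : EuclideanSpace ℝ (Fin n)) R := by
      intro r; rw [Metric.mem_closedBall, dist_zero_right]; exact hR r
    have funiq : ∀ b : ℝ, 0 ≤ b → ∀ r ∈ Set.Icc (0:ℝ) b, x₀ (r + s) = x₀ r := by
      intro b hb
      have huniq := ODE_solution_unique_of_mem_Icc_right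
        (v := fun _ y => f y)
        (s := fun _ => Metric.closedBall (0 : EuclideanSpace ℝ (Fin n)) R)
        (K := Real.toNNReal Cf) (fun _ _ => hlip)
        (f := fun r => x₀ (r + s)) (g := x₀) (a := 0) (b := b)
        ((cx₀.comp (continuous_id.add continuous_const)).continuousOn)
        (fun r _ => by
          have h2 := hx₀ (r + s)
          have h3 : HasDerivAt (fun r : ℝ => r + s) 1 r := (hasDerivAt_id r).add_const s
          have h4 : HasDerivAt (fun r => x₀ (r + s)) (f (x₀ (r + s))) r := by
            have h5 := h2.scomp r h3; rw [one_smul] at h5; exact h5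
          exact h4.hasDerivWithinAt)
        (fun r _ => hmem _)
        cx₀.continuousOn
        (fun r _ => (hx₀ r).hasDerivWithinAt)
        (fun r _ => hmem _)
        (by show x₀ (0 + s) = x₀ 0; rw [zero_add, heq])
      exact fun r hr => huniq hr
    intro r
    obtain ⟨k, hk⟩ := exists_nat_ge ((-r)/T)
    have hrk : 0 ≤ r + (k:ℝ)*T := by
      have h1 := (div_le_iff₀ hT).mp hk
      linarith
    have h1 : x₀ (r + s) = x₀ ((r + (k:ℝ)*T) + s) := by
      have h2 := (hx₀per.nat_mul k) (r + s)
      rw [show r + (k:ℝ)*T + s = (r + s) + (k:ℝ)*T by ring]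
      exact h2.symm
    rw [h1, funiq (r + (k:ℝ)*T) hrk (r + (k:ℝ)*T) ⟨hrk, le_refl _⟩, (hx₀per.nat_mul k) r]
  -- claim B: uniform separation away from 0 mod T
  obtain ⟨m, hm, claimB⟩ : ∃ m > 0, ∀ s : ℝ, δ₀ ≤ |s| → |s| ≤ 7*T/8 → m ≤ ‖x₀ s - x₀ 0‖ := by
    have hcpt : IsCompact (Set.Icc (-(7*T/8)) (-δ₀) ∪ Set.Icc δ₀ (7*T/8)) :=
      isCompact_Icc.union isCompact_Icc
    have hne : (Set.Icc (-(7*T/8)) (-δ₀) ∪ Set.Icc δ₀ (7*T/8)).Nonempty :=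
      ⟨δ₀, Or.inr ⟨le_refl _, by linarith⟩⟩
    have hcont3 : ContinuousOn (fun s => ‖x₀ s - x₀ 0‖)
        (Set.Icc (-(7*T/8)) (-δ₀) ∪ Set.Icc δ₀ (7*T/8)) :=
      ((cx₀.sub continuous_const).norm).continuousOn
    obtain ⟨s₀, hs₀mem, hs₀min⟩ := hcpt.exists_isMinOn hne hcont3
    refine ⟨‖x₀ s₀ - x₀ 0‖, ?_, ?_⟩
    · refine norm_pos_iff.mpr (sub_ne_zero.mpr ?_)
      rcases hs₀mem with h | h
      · have h1 : x₀ s₀ = x₀ (s₀ + T) := (hx₀per s₀).symm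
        rw [h1]
        exact hinj (s₀ + T) (by linarith [h.1]) (by linarith [h.2, hδ₀pos])
      · exact hinj s₀ (by linarith [h.1, hδ₀pos]) (by linarith [h.2, hT])
    · intro s h1 h2
      refine hs₀min ?_
      rcases le_or_gt 0 s with hsg | hsg
      · right
        rw [abs_of_nonneg hsg] at h1 h2
        exact ⟨h1, h2⟩
      · left
        rw [abs_of_neg hsg] at h1 h2
        exact ⟨by linarith, by linarith⟩
  -- extension of hbound to all times
  have hbound' : ∀ ε ∈ Set.Ioc 0 ε₀, ∀ s : ℝ, ‖x ε s - x₀ (s - Δ ε)‖ ≤ M * ε := by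
    intro ε hε s
    have h1 := toIocMod_mem_Ioc hT 0 (s - Δ ε)
    set τ := toIocMod hT 0 (s - Δ ε) with hτ
    have h2 : x₀ τ = x₀ (s - Δ ε) := periodic_apply_toIocMod hT hx₀per 0 (s - Δ ε)
    have h3 : x ε (τ + Δ ε) = x ε s := by
      have hper' : Function.Periodic (fun r => x ε (r + Δ ε)) T := by
        intro r
        simp only
        rw [show r + T + Δ ε = (r + Δ ε) + T by ring]
        exact hxper ε hε (r + Δ ε)
      have h4 := periodic_apply_toIocMod hT hper' 0 (s - Δ ε)
      rw [sub_add_cancel] at h4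
      exact h4
    rw [← h2, ← h3]
    refine hbound ε hε τ ?_
    exact ⟨le_of_lt h1.1, by simpa using h1.2⟩
  -- uniform continuity of s ↦ Df(x₀ s) on [-3T, 3T]
  have hAuc : ∀ η > 0, ∃ δ > 0, ∀ a ∈ Set.Icc (-(3*T)) (3*T), ∀ b ∈ Set.Icc (-(3*T)) (3*T),
      |a - b| ≤ δ → ‖fderiv ℝ f (x₀ a) - fderiv ℝ f (x₀ b)‖ ≤ η := by
    intro η hη
    have hUC := (isCompact_Icc : IsCompact (Set.Icc (-(3*T)) (3*T))).uniformContinuousOn_of_continuous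
      cA.continuousOn
    rw [Metric.uniformContinuousOn_iff_le] at hUC
    obtain ⟨δ, hδpos, hδ⟩ := hUC η hη
    refine ⟨δ, hδpos, fun a ha b hb hab => ?_⟩
    have := hδ a ha b hb (by rwa [Real.dist_eq])
    rwa [dist_eq_norm] at this
  -- uniform continuity of g near the cycle
  have hguc : ∀ η > 0, ∃ δ > 0, δ ≤ 1 ∧ ∀ t ∈ Set.Icc (-T) (2*T), ∀ p : EuclideanSpace ℝ (Fin n),
      ∀ e ∈ Set.Icc (0:ℝ) ε₀, ‖p - x₀ t‖ ≤ δ → e ≤ δ → ‖g t p e - g t (x₀ t) 0‖ ≤ η := by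
    intro η hη
    have hcpt : IsCompact ((Set.Icc (-T) (2*T)) ×ˢ
        ((Metric.closedBall (0 : EuclideanSpace ℝ (Fin n)) (R+1)) ×ˢ (Set.Icc (0:ℝ) ε₀))) :=
      isCompact_Icc.prod ((isCompact_closedBall _ _).prod isCompact_Icc)
    have hUC := hcpt.uniformContinuousOn_of_continuous hg.continuousOn
    rw [Metric.uniformContinuousOn_iff_le] at hUC
    obtain ⟨δ, hδpos, hδ⟩ := hUC η hη
    refine ⟨min δ 1, by positivity, min_le_right _ _, ?_⟩
    intro t ht p e he hpe heδ
    have hp1 : p ∈ Metric.closedBall (0 : EuclideanSpace ℝ (Fin n)) (R+1) := by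
      rw [Metric.mem_closedBall, dist_zero_right]
      have h1 : ‖p‖ ≤ ‖x₀ t‖ + ‖p - x₀ t‖ := by
        calc ‖p‖ = ‖x₀ t + (p - x₀ t)‖ := by congr 1; abel
          _ ≤ ‖x₀ t‖ + ‖p - x₀ t‖ := norm_add_le _ _
      have h2 := hR t
      have h3 : min δ 1 ≤ 1 := min_le_right _ _
      linarith
    have hmem1 : ((t, p, e) : ℝ × EuclideanSpace ℝ (Fin n) × ℝ) ∈ (Set.Icc (-T) (2*T)) ×ˢ
        ((Metric.closedBall (0 : EuclideanSpace ℝ (Fin n)) (R+1)) ×ˢ (Set.Icc (0:ℝ) ε₀)) :=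
      ⟨ht, hp1, he⟩
    have hmem2 : ((t, x₀ t, (0:ℝ)) : ℝ × EuclideanSpace ℝ (Fin n) × ℝ) ∈ (Set.Icc (-T) (2*T)) ×ˢ
        ((Metric.closedBall (0 : EuclideanSpace ℝ (Fin n)) (R+1)) ×ˢ (Set.Icc (0:ℝ) ε₀)) := by
      refine ⟨ht, ?_, ⟨le_refl _, le_of_lt hε₀⟩⟩
      rw [Metric.mem_closedBall, dist_zero_right]
      linarith [hR t]
    have hdist : dist ((t, p, e) : ℝ × EuclideanSpace ℝ (Fin n) × ℝ) (t, x₀ t, (0:ℝ)) ≤ δ := by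
      rw [Prod.dist_eq, Prod.dist_eq]
      simp only [dist_self]
      refine max_le (le_of_lt hδpos) (max_le ?_ ?_)
      · rw [dist_eq_norm]; exact le_trans hpe (min_le_left _ _)
      · rw [Real.dist_eq, sub_zero, abs_of_nonneg he.1]; exact le_trans heδ (min_le_left _ _)
    have h6 := hδ _ hmem1 _ hmem2 hdist
    rwa [dist_eq_norm] at h6
  -- MAIN ARGUMENT
  by_contra hcon
  push_neg at hcon
  set κ : ℝ := ν/2 with hκdef
  have hκ : 0 < κ := by positivity
  set C₁ : ℝ := M * (1 + L / κ) with hC₁def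
  have hC₁pos : 0 < C₁ := by positivity
  set D : ℝ := T*Z + 2*(T*Z*C₁) + 4*(Z*G) + 1 with hDdef
  have hD1 : 1 ≤ D := by nlinarith [mul_nonneg (le_of_lt hT) hZ0, mul_nonneg (mul_nonneg (le_of_lt hT) hZ0) (le_of_lt hC₁pos), mul_nonneg hZ0 hG0]
  have hD : 0 < D := by linarith
  set c₀ : ℝ := |J| / (2*D) with hc₀def
  have hc₀ : 0 < c₀ := by
    apply div_pos (abs_pos.mpr hJ); linarith
  obtain ⟨δ₁, hδ₁pos, hδ₁⟩ := taylor_unif f hf R hc₀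
  obtain ⟨δ₂, hδ₂pos, hδ₂⟩ := hAuc c₀ hc₀
  obtain ⟨δ₃, hδ₃pos, hδ₃le1, hδ₃⟩ := hguc c₀ hc₀
  set δΔ : ℝ := min (T/8) (min (δ₀/2) (min c₀ (min (δ₂/2) (δ₃/(2*(L+1)))))) with hδΔdef
  have hδΔpos : 0 < δΔ := by positivity
  rw [Metric.tendsto_nhdsWithin_nhds] at hΔ
  obtain ⟨d, hd, hΔd⟩ := hΔ δΔ hδΔpos
  set ε₁ : ℝ := min (d/2) (min (m/(2*M)) (min (1/M) (min (κ*c₀/M) (min (κ*δ₂/(2*M))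
    (min (δ₁/C₁) (min (δ₃/(2*M)) δ₃)))))) with hε₁def
  have hε₁pos : 0 < ε₁ := by positivity
  obtain ⟨ε, hεmem, t, htmem, hcross⟩ := hcon ε₁ hε₁pos
  have hεpos : 0 < ε := hεmem.1
  have hε : ε ∈ Set.Ioc 0 ε₀ := ⟨hεpos, le_trans hεmem.2 (min_le_right _ _)⟩
  have hεε₁ : ε ≤ ε₁ := le_trans hεmem.2 (min_le_left _ _)
  -- smallness facts on ε
  have hεd : ε ≤ d/2 := le_trans hεε₁ (min_le_left _ _)
  have hεm : M * ε ≤ m/2 := by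
    have h1 : ε ≤ m/(2*M) := le_trans hεε₁ (le_trans (min_le_right _ _) (min_le_left _ _))
    rw [le_div_iff₀ (by positivity)] at h1; linarith
  have hεMone : M * ε ≤ 1 := by
    have h1 : ε ≤ 1/M := le_trans hεε₁ (le_trans (min_le_right _ _)
      (le_trans (min_le_right _ _) (min_le_left _ _)))
    rw [le_div_iff₀ hM] at h1; linarith
  have hεκc₀ : M * ε / κ ≤ c₀ := by
    have h1 : ε ≤ κ*c₀/M := le_trans hεε₁ (le_trans (min_le_right _ _)
      (le_trans (min_le_right _ _) (le_trans (min_le_right _ _) (min_le_left _ _))))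
    rw [le_div_iff₀ hM] at h1
    rw [div_le_iff₀ hκ]
    linarith
  have hεκδ₂ : M * ε / κ ≤ δ₂/2 := by
    have h1 : ε ≤ κ*δ₂/(2*M) := le_trans hεε₁ (le_trans (min_le_right _ _)
      (le_trans (min_le_right _ _) (le_trans (min_le_right _ _)
      (le_trans (min_le_right _ _) (min_le_left _ _)))))
    rw [le_div_iff₀ (by positivity)] at h1
    rw [div_le_iff₀ hκ]
    linarith
  have hεδ₁ : C₁ * ε ≤ δ₁ := by
    have h1 : ε ≤ δ₁/C₁ := le_trans hεε₁ (le_trans (min_le_right _ _)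
      (le_trans (min_le_right _ _) (le_trans (min_le_right _ _)
      (le_trans (min_le_right _ _) (le_trans (min_le_right _ _) (min_le_left _ _))))))
    rw [le_div_iff₀ hC₁pos] at h1; linarith
  have hεδ₃2 : M * ε ≤ δ₃/2 := by
    have h1 : ε ≤ δ₃/(2*M) := le_trans hεε₁ (le_trans (min_le_right _ _)
      (le_trans (min_le_right _ _) (le_trans (min_le_right _ _)
      (le_trans (min_le_right _ _) (le_trans (min_le_right _ _)
      (le_trans (min_le_right _ _) (min_le_left _ _)))))))
    rw [le_div_iff₀ (by positivity)] at h1; linarith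
  have hεδ₃ : ε ≤ δ₃ := le_trans hεε₁ (le_trans (min_le_right _ _)
      (le_trans (min_le_right _ _) (le_trans (min_le_right _ _)
      (le_trans (min_le_right _ _) (le_trans (min_le_right _ _)
      (le_trans (min_le_right _ _) (min_le_right _ _)))))))
  -- |Δ ε| ≤ δΔ
  have hΔε : |Δ ε| ≤ δΔ := by
    have h1 := hΔd (Set.mem_Ioi.mpr hεpos) (by
      rw [Real.dist_eq, sub_zero, abs_of_pos hεpos]; linarith)
    rw [Real.dist_eq, sub_zero] at h1
    exact le_of_lt h1
  have hΔT8 : |Δ ε| ≤ T/8 := le_trans hΔε (min_le_left _ _)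
  have hΔδ₀ : |Δ ε| ≤ δ₀/2 := le_trans hΔε (le_trans (min_le_right _ _) (min_le_left _ _))
  have hΔc₀ : |Δ ε| ≤ c₀ := le_trans hΔε (le_trans (min_le_right _ _)
    (le_trans (min_le_right _ _) (min_le_left _ _)))
  have hΔδ₂ : |Δ ε| ≤ δ₂/2 := le_trans hΔε (le_trans (min_le_right _ _)
    (le_trans (min_le_right _ _) (le_trans (min_le_right _ _) (min_le_left _ _))))
  have hΔδ₃ : L * |Δ ε| ≤ δ₃/2 := by
    have h1 : |Δ ε| ≤ δ₃/(2*(L+1)) := le_trans hΔε (le_trans (min_le_right _ _)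
      (le_trans (min_le_right _ _) (le_trans (min_le_right _ _) (min_le_right _ _))))
    have h2 : L * |Δ ε| ≤ L * (δ₃/(2*(L+1))) := mul_le_mul_of_nonneg_left h1 hL0
    have h3 : L * (δ₃/(2*(L+1))) ≤ δ₃/2 := by
      rw [show L * (δ₃/(2*(L+1))) = L*δ₃/(2*(L+1)) from (mul_div_assoc _ _ _).symm,
        div_le_div_iff₀ (by positivity) (by norm_num)]
      nlinarith [hδ₃pos.le, hL0]
    linarith
  -- construct τ ∈ (-T/2, T/2] with x ε τ = x₀ 0
  have hτmem := toIocMod_mem_Ioc hT (-(T/2)) t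
  set τ : ℝ := toIocMod hT (-(T/2)) t with hτdef
  have hxτ : x ε τ = x₀ 0 := by
    rw [periodic_apply_toIocMod hT (hxper ε hε) _ t]; exact hcross
  have hτlo : -(T/2) < τ := hτmem.1
  have hτhi : τ ≤ T/2 := by have := hτmem.2; linarith
  -- localization of τ - Δ ε
  have hσb : ‖x₀ (τ - Δ ε) - x₀ 0‖ ≤ M * ε := by
    have h1 := hbound' ε hε τ
    rw [hxτ, norm_sub_rev] at h1
    exact h1
  have hσrange : |τ - Δ ε| ≤ 7*T/8 := by
    rcases abs_le.mp hΔT8 with ⟨hd1, hd2⟩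
    rw [abs_le]
    exact ⟨by linarith, by linarith⟩
  have hσδ₀ : |τ - Δ ε| ≤ δ₀ := by
    by_contra hcontra
    push_neg at hcontra
    have h1 := claimB (τ - Δ ε) (le_of_lt hcontra) hσrange
    linarith [hσb, hεm, hm]
  have hσsmall : |τ - Δ ε| ≤ M * ε / κ := by
    have h1 := claimA (τ - Δ ε) hσδ₀
    rw [le_div_iff₀ hκ]
    calc |τ - Δ ε| * κ = κ * |τ - Δ ε| := mul_comm _ _
      _ ≤ ‖x₀ (τ - Δ ε) - x₀ 0‖ := h1
      _ ≤ M * ε := hσb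
  have hτsmall : |τ| ≤ M * ε / κ + δΔ := by
    calc |τ| = |(τ - Δ ε) + Δ ε| := by rw [sub_add_cancel]
      _ ≤ |τ - Δ ε| + |Δ ε| := abs_add_le _ _
      _ ≤ M * ε / κ + δΔ := add_le_add hσsmall hΔε
  have hτT : |τ| ≤ T := by
    rw [abs_le]; constructor <;> linarith
  -- bound on u t = x ε t - x₀ (t - τ)
  have hu : ∀ s : ℝ, ‖x ε s - x₀ (s - τ)‖ ≤ C₁ * ε := by
    intro s
    have h1 : ‖x ε s - x₀ (s - τ)‖ ≤ ‖x ε s - x₀ (s - Δ ε)‖ + ‖x₀ (s - Δ ε) - x₀ (s - τ)‖ := by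
      have := norm_sub_le (x ε s - x₀ (s - Δ ε)) (x₀ (s - τ) - x₀ (s - Δ ε))
      calc ‖x ε s - x₀ (s - τ)‖
          = ‖(x ε s - x₀ (s - Δ ε)) - (x₀ (s - τ) - x₀ (s - Δ ε))‖ := by
            congr 1; abel
        _ ≤ ‖x ε s - x₀ (s - Δ ε)‖ + ‖x₀ (s - τ) - x₀ (s - Δ ε)‖ := norm_sub_le _ _
        _ = ‖x ε s - x₀ (s - Δ ε)‖ + ‖x₀ (s - Δ ε) - x₀ (s - τ)‖ := by rw [norm_sub_rev (x₀ (s - τ))]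
    have h2 : ‖x₀ (s - Δ ε) - x₀ (s - τ)‖ ≤ L * |τ - Δ ε| := by
      have := hx₀lip (s - Δ ε) (s - τ)
      have heq : |s - Δ ε - (s - τ)| = |τ - Δ ε| := by
        rw [show s - Δ ε - (s - τ) = τ - Δ ε by ring]
      rwa [heq] at this
    have h3 : L * |τ - Δ ε| ≤ L * (M * ε / κ) := mul_le_mul_of_nonneg_left hσsmall hL0
    have h4 : M * ε + L * (M * ε / κ) = C₁ * ε := by
      rw [hC₁def]; field_simp
    calc ‖x ε s - x₀ (s - τ)‖ ≤ M * ε + L * |τ - Δ ε| := by linarith [hbound' ε hε s]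
      _ ≤ M * ε + L * (M * ε / κ) := by linarith
      _ = C₁ * ε := h4
  -- the integrands
  set P : ℝ → ℝ := fun s => (inner ℝ (z s) (f (x ε s) - f (x₀ (s - τ))
      - (fderiv ℝ f (x₀ s)) (x ε s - x₀ (s - τ))) : ℝ) with hPdef
  set Q : ℝ → ℝ := fun s => (inner ℝ (z s) (g s (x ε s) ε) : ℝ) with hQdef
  have cP : Continuous P := by
    rw [hPdef]
    refine Continuous.inner cz (Continuous.sub ?_ ?_)
    · exact (cf.comp (cxε ε hε)).sub (cf.comp (cx₀.comp (continuous_id.sub continuous_const)))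
    · exact cA.clm_apply ((cxε ε hε).sub (cx₀.comp (continuous_id.sub continuous_const)))
  have cQ : Continuous Q := by
    rw [hQdef]
    exact cz.inner (hg.comp (continuous_id.prodMk ((cxε ε hε).prodMk continuous_const)))
  -- derivative of φ(r) = ⟪z r, x ε r - x₀ (r - τ)⟫
  have hφder : ∀ s : ℝ, HasDerivAt (fun r => (inner ℝ (z r) (x ε r - x₀ (r - τ)) : ℝ))
      (P s + ε * Q s) s := by
    intro s
    have h1 : HasDerivAt (fun r => x₀ (r - τ)) (f (x₀ (s - τ))) s := by
      have h2 := hx₀ (s - τ)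
      have h3 : HasDerivAt (fun r : ℝ => r - τ) 1 s := (hasDerivAt_id s).sub_const τ
      have h5 := h2.scomp s h3; rw [one_smul] at h5; exact h5
    have h3 : HasDerivAt (fun r => x ε r - x₀ (r - τ))
        (f (x ε s) + ε • g s (x ε s) ε - f (x₀ (s - τ))) s := (hx ε hε s).sub h1
    have h4 := (hz s).inner ℝ h3
    refine HasDerivAt.congr_deriv h4 ?_
    rw [hPdef, hQdef]
    simp only
    rw [inner_neg_left, ContinuousLinearMap.adjoint_inner_left]
    rw [inner_sub_right, inner_sub_right, inner_sub_right, inner_add_right,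
      real_inner_smul_right]
    ring
  -- the exact integral identity
  have key : (∫ s in τ..(τ+T), P s) + ε * (∫ s in τ..(τ+T), Q s) = 0 := by
    have hFTCkey := intervalIntegral.integral_eq_sub_of_hasDerivAt
      (f := fun r => (inner ℝ (z r) (x ε r - x₀ (r - τ)) : ℝ))
      (f' := fun s => P s + ε * Q s) (a := τ) (b := τ + T)
      (fun s _ => hφder s)
      ((cP.add (continuous_const.mul cQ)).intervalIntegrable _ _)
    have hzero1 : x ε (τ + T) - x₀ (τ + T - τ) = 0 := by
      rw [hxper ε hε τ, hxτ, show τ + T - τ = T by ring,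
        show x₀ T = x₀ 0 from by simpa using hx₀per 0]
      simp
    have hzero2 : x ε τ - x₀ (τ - τ) = 0 := by
      rw [hxτ, sub_self]
      simp
    have hz2 : (∫ s in τ..(τ+T), (P s + ε * Q s)) = 0 := by
      rw [hFTCkey]
      rw [hzero1, hzero2]
      simp
    rw [intervalIntegral.integral_add (g := fun s => ε * Q s) (cP.intervalIntegrable _ _)
      ((continuous_const.mul cQ).intervalIntegrable _ _),
      intervalIntegral.integral_const_mul] at hz2
    exact hz2
  -- more smallness facts for δΔ
  have hδΔc₀ : δΔ ≤ c₀ := le_trans (min_le_right _ _)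
    (le_trans (min_le_right _ _) (min_le_left _ _))
  have hδΔδ₂ : δΔ ≤ δ₂/2 := le_trans (min_le_right _ _)
    (le_trans (min_le_right _ _) (le_trans (min_le_right _ _) (min_le_left _ _)))
  -- uIoc inclusions
  have huIoc_sub : ∀ a b : ℝ, -T ≤ a → a ≤ 2*T → -T ≤ b → b ≤ 2*T →
      Set.uIoc a b ⊆ Set.Icc (-T) (2*T) := by
    intro a b ha1 ha2 hb1 hb2 r hr
    have hr1 : a ⊓ b < r := hr.1
    have hr2 : r ≤ a ⊔ b := hr.2
    constructor
    · exact le_of_lt (lt_of_le_of_lt (le_min ha1 hb1) hr1)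
    · exact le_trans hr2 (max_le ha2 hb2)
  have hτub : τ ≤ 2*T := by linarith [(abs_le.mp hτT).2]
  have hτlb : -T ≤ τ := by linarith [(abs_le.mp hτT).1]
  have hsubI : Set.uIoc τ (τ+T) ⊆ Set.Icc (-T) (2*T) :=
    huIoc_sub τ (τ+T) hτlb (by linarith [(abs_le.mp hτT).2]) (by linarith) (by linarith [hτhi])
  -- bound on P
  have hPb : ∀ r ∈ Set.uIoc τ (τ+T), ‖P r‖ ≤ Z * (2 * c₀ * (C₁ * ε)) := by
    intro r hr
    have hrI : r ∈ Set.Icc (-T) (2*T) := hsubI hr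
    have hur := hu r
    have htay := hδ₁ (x₀ (r - τ)) (x ε r) (hR _) (le_trans hur hεδ₁)
    have hmis : ‖fderiv ℝ f (x₀ (r - τ)) - fderiv ℝ f (x₀ r)‖ ≤ c₀ := by
      refine hδ₂ (r - τ) ⟨?_, ?_⟩ r ⟨?_, ?_⟩ ?_
      · linarith [hrI.1, (abs_le.mp hτT).2]
      · linarith [hrI.2, (abs_le.mp hτT).1]
      · linarith [hrI.1]
      · linarith [hrI.2]
      · rw [show r - τ - r = -τ by ring, abs_neg]
        calc |τ| ≤ M * ε / κ + δΔ := hτsmall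
          _ ≤ δ₂/2 + δ₂/2 := add_le_add hεκδ₂ hδΔδ₂
          _ = δ₂ := by ring
    have hnorm : ‖f (x ε r) - f (x₀ (r - τ)) - (fderiv ℝ f (x₀ r)) (x ε r - x₀ (r - τ))‖
        ≤ 2 * c₀ * (C₁ * ε) := by
      have hsplit2 : f (x ε r) - f (x₀ (r - τ)) - (fderiv ℝ f (x₀ r)) (x ε r - x₀ (r - τ))
          = (f (x ε r) - f (x₀ (r - τ)) - (fderiv ℝ f (x₀ (r - τ))) (x ε r - x₀ (r - τ)))
            + ((fderiv ℝ f (x₀ (r - τ)) - fderiv ℝ f (x₀ r)) (x ε r - x₀ (r - τ))) := by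
        rw [ContinuousLinearMap.sub_apply]; abel
      rw [hsplit2]
      refine le_trans (norm_add_le _ _) ?_
      have h5 : ‖(fderiv ℝ f (x₀ (r - τ)) - fderiv ℝ f (x₀ r)) (x ε r - x₀ (r - τ))‖
          ≤ c₀ * (C₁ * ε) := by
        refine le_trans ((fderiv ℝ f (x₀ (r - τ)) - fderiv ℝ f (x₀ r)).le_opNorm _) ?_
        exact mul_le_mul hmis hur (norm_nonneg _) (le_of_lt hc₀)
      have h6 : ‖f (x ε r) - f (x₀ (r - τ)) - (fderiv ℝ f (x₀ (r - τ))) (x ε r - x₀ (r - τ))‖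
          ≤ c₀ * (C₁ * ε) := le_trans htay (mul_le_mul_of_nonneg_left hur (le_of_lt hc₀))
      linarith
    rw [hPdef]
    simp only
    rw [Real.norm_eq_abs]
    refine le_trans (abs_real_inner_le_norm _ _) ?_
    exact mul_le_mul (hZ r hrI) hnorm (norm_nonneg _) hZ0
  have habsT : |τ + T - τ| = T := by
    rw [show τ + T - τ = T by ring]
    exact abs_of_pos hT
  have hPint : ‖∫ s in τ..(τ+T), P s‖ ≤ Z * (2*c₀*(C₁*ε)) * T := by
    have h1 := intervalIntegral.norm_integral_le_of_norm_le_const hPb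
    rwa [habsT] at h1
  -- bound on the Q integral
  have hQb : |∫ s in τ..(τ+T), Q s| ≤ Z * (2*c₀*C₁) * T := by
    have h1 : ε * |∫ s in τ..(τ+T), Q s| = |∫ s in τ..(τ+T), P s| := by
      rw [← abs_of_pos hεpos, ← abs_mul]
      rw [show ε * ∫ s in τ..(τ+T), Q s = -∫ s in τ..(τ+T), P s from by linear_combination key]
      rw [abs_neg]
    have h2 : ε * |∫ s in τ..(τ+T), Q s| ≤ ε * (Z * (2*c₀*C₁) * T) := by
      rw [h1]
      calc |∫ s in τ..(τ+T), P s| = ‖∫ s in τ..(τ+T), P s‖ := (Real.norm_eq_abs _).symm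
        _ ≤ Z * (2*c₀*(C₁*ε)) * T := hPint
        _ = ε * (Z * (2*c₀*C₁) * T) := by ring
    exact le_of_mul_le_mul_left h2 hεpos
  -- compare Q with F := ⟪z, g(·, x₀ ·, 0)⟫
  have hQF : ∀ r ∈ Set.uIoc τ (τ+T),
      ‖Q r - (inner ℝ (z r) (g r (x₀ r) 0) : ℝ)‖ ≤ Z * c₀ := by
    intro r hr
    have hrI := hsubI hr
    have hclose : ‖x ε r - x₀ r‖ ≤ δ₃ := by
      have h1 : ‖x ε r - x₀ r‖ ≤ ‖x ε r - x₀ (r - Δ ε)‖ + ‖x₀ (r - Δ ε) - x₀ r‖ := by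
        calc ‖x ε r - x₀ r‖ = ‖(x ε r - x₀ (r - Δ ε)) + (x₀ (r - Δ ε) - x₀ r)‖ := by
              congr 1; abel
          _ ≤ ‖x ε r - x₀ (r - Δ ε)‖ + ‖x₀ (r - Δ ε) - x₀ r‖ := norm_add_le _ _
      have h2 : ‖x₀ (r - Δ ε) - x₀ r‖ ≤ L * |Δ ε| := by
        have h3 := hx₀lip (r - Δ ε) r
        rwa [show r - Δ ε - r = -Δ ε by ring, abs_neg] at h3
      linarith [hbound' ε hε r, hεδ₃2, hΔδ₃]
    have hQFr : Q r - (inner ℝ (z r) (g r (x₀ r) 0) : ℝ)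
        = (inner ℝ (z r) (g r (x ε r) ε - g r (x₀ r) 0) : ℝ) := by
      rw [hQdef]; simp only; rw [inner_sub_right]
    rw [Real.norm_eq_abs, hQFr]
    refine le_trans (abs_real_inner_le_norm _ _) ?_
    refine mul_le_mul (hZ r hrI) ?_ (norm_nonneg _) hZ0
    exact hδ₃ r hrI (x ε r) ε ⟨le_of_lt hεpos, hε.2⟩ hclose hεδ₃
  have hQFint : |(∫ s in τ..(τ+T), Q s)
      - ∫ s in τ..(τ+T), (inner ℝ (z s) (g s (x₀ s) 0) : ℝ)| ≤ Z * c₀ * T := by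
    rw [← intervalIntegral.integral_sub (cQ.intervalIntegrable _ _) (cF.intervalIntegrable _ _)]
    have h1 := intervalIntegral.norm_integral_le_of_norm_le_const hQF
    rwa [habsT] at h1
  -- decompose the F integral
  have hFint : (∫ s in τ..(τ+T), (inner ℝ (z s) (g s (x₀ s) 0) : ℝ))
      = (∫ s in τ..(0:ℝ), (inner ℝ (z s) (g s (x₀ s) 0) : ℝ)) + J
        + (∫ s in T..(τ+T), (inner ℝ (z s) (g s (x₀ s) 0) : ℝ)) := by
    have h1 := intervalIntegral.integral_add_adjacent_intervals
      (cF.intervalIntegrable (μ := MeasureTheory.volume) τ 0)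
      (cF.intervalIntegrable (μ := MeasureTheory.volume) 0 T)
    have h2 := intervalIntegral.integral_add_adjacent_intervals
      (cF.intervalIntegrable (μ := MeasureTheory.volume) τ T)
      (cF.intervalIntegrable (μ := MeasureTheory.volume) T (τ+T))
    rw [hJdef]
    linear_combination (-1 : ℝ) * h1 - h2
  -- edge integrals
  have hedge1 : |∫ s in τ..(0:ℝ), (inner ℝ (z s) (g s (x₀ s) 0) : ℝ)| ≤ Z * G * |τ| := by
    have hb2 : ∀ r ∈ Set.uIoc τ (0:ℝ), ‖(inner ℝ (z r) (g r (x₀ r) 0) : ℝ)‖ ≤ Z * G := by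
      intro r hr
      have hrI := huIoc_sub τ 0 hτlb hτub (by linarith) (by linarith) hr
      rw [Real.norm_eq_abs]
      exact hFb r hrI
    have h1 := intervalIntegral.norm_integral_le_of_norm_le_const hb2
    rw [Real.norm_eq_abs] at h1
    rwa [show |(0:ℝ) - τ| = |τ| by rw [zero_sub, abs_neg]] at h1
  have hedge2 : |∫ s in T..(τ+T), (inner ℝ (z s) (g s (x₀ s) 0) : ℝ)| ≤ Z * G * |τ| := by
    have hb2 : ∀ r ∈ Set.uIoc T (τ+T), ‖(inner ℝ (z r) (g r (x₀ r) 0) : ℝ)‖ ≤ Z * G := by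
      intro r hr
      have hrI := huIoc_sub T (τ+T) (by linarith) (by linarith) (by linarith)
        (by linarith [hτhi]) hr
      rw [Real.norm_eq_abs]
      exact hFb r hrI
    have h1 := intervalIntegral.norm_integral_le_of_norm_le_const hb2
    rw [Real.norm_eq_abs] at h1
    rwa [show |τ + T - T| = |τ| by rw [show τ + T - T = τ by ring]] at h1
  -- assemble the contradiction
  have hτc₀ : |τ| ≤ 2 * c₀ := by
    calc |τ| ≤ M * ε / κ + δΔ := hτsmall
      _ ≤ c₀ + c₀ := add_le_add hεκc₀ hδΔc₀
      _ = 2 * c₀ := by ring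
  have hJfinal : |J| ≤ c₀ * (2*(T*Z*C₁) + T*Z + 4*(Z*G)) := by
    have hdecomp : J = (∫ s in τ..(τ+T), Q s)
        - ((∫ s in τ..(τ+T), Q s) - ∫ s in τ..(τ+T), (inner ℝ (z s) (g s (x₀ s) 0) : ℝ))
        - (∫ s in τ..(0:ℝ), (inner ℝ (z s) (g s (x₀ s) 0) : ℝ))
        - (∫ s in T..(τ+T), (inner ℝ (z s) (g s (x₀ s) 0) : ℝ)) := by
      linear_combination (-1 : ℝ) * hFint
    have htri : |J| ≤ |∫ s in τ..(τ+T), Q s|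
        + |(∫ s in τ..(τ+T), Q s) - ∫ s in τ..(τ+T), (inner ℝ (z s) (g s (x₀ s) 0) : ℝ)|
        + |∫ s in τ..(0:ℝ), (inner ℝ (z s) (g s (x₀ s) 0) : ℝ)|
        + |∫ s in T..(τ+T), (inner ℝ (z s) (g s (x₀ s) 0) : ℝ)| := by
      rw [hdecomp]
      refine le_trans (abs_sub _ _) ?_
      refine add_le_add ?_ (le_refl _)
      refine le_trans (abs_sub _ _) ?_
      refine add_le_add ?_ (le_refl _)
      exact abs_sub _ _
    have hZGτ : Z * G * |τ| ≤ Z * G * (2 * c₀) :=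
      mul_le_mul_of_nonneg_left hτc₀ (mul_nonneg hZ0 hG0)
    calc |J| ≤ |∫ s in τ..(τ+T), Q s|
        + |(∫ s in τ..(τ+T), Q s) - ∫ s in τ..(τ+T), (inner ℝ (z s) (g s (x₀ s) 0) : ℝ)|
        + |∫ s in τ..(0:ℝ), (inner ℝ (z s) (g s (x₀ s) 0) : ℝ)|
        + |∫ s in T..(τ+T), (inner ℝ (z s) (g s (x₀ s) 0) : ℝ)| := htri
      _ ≤ Z * (2*c₀*C₁) * T + Z * c₀ * T + Z * G * (2 * c₀) + Z * G * (2 * c₀) := by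
        refine add_le_add (add_le_add (add_le_add hQb hQFint) ?_) ?_
        · exact le_trans hedge1 hZGτ
        · exact le_trans hedge2 hZGτ
      _ = c₀ * (2*(T*Z*C₁) + T*Z + 4*(Z*G)) := by ring
  have hJeq : |J| = c₀ * (2*D) := by
    rw [hc₀def]
    field_simp
  rw [hJeq] at hJfinal
  have hDexp : 2*(T*Z*C₁) + T*Z + 4*(Z*G) = D - 1 := by
    rw [hDdef]; ring
  rw [hDexp] at hJfinal
  have hcontr : c₀ * D + c₀ ≤ 0 := by linarith only [hJfinal]
  have hpos2 : 0 < c₀ * D + c₀ := by positivity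
  linarith only [hcontr, hpos2]
end
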